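/- arXiv:1002.0757 — 5 statements merged into one kernel-verified Lean document; each statement's English description precedes it below -/
import Mathlib

section
/- Let X, X_1, X_2, … be i.i.d. real-valued random variables, let n_0 > 0 and x_0 ∈ ℝ be constants, define μ̂_n := (n_0·x_0 + Σ_{i=1}^n X_i)/(n + n_0) and μ* := E[X]. If the first k moments of X exist (k a positive integer), then E[(μ̂_n − μ*)^k] = O(n^{−⌈k/2⌉}) as n → ∞. -/
open MeasureTheory Filter Real Asymptotics ProbabilityTheory

set_option linter.unusedSectionVars false

section MLEstAux

variable {Ω : Type} [MeasurableSpace Ω] {P : Measure Ω} [IsProbabilityMeasure P]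

lemma mlaux_integral_prod
    (f : ℕ → Ω → ℝ) (hind : iIndepFun f P)
    (hm : ∀ i, Measurable (f i)) (hint : ∀ i, Integrable (f i) P)
    (s : Finset ℕ) :
    Integrable (fun ω => ∏ i ∈ s, f i ω) P ∧
      (∫ ω, ∏ i ∈ s, f i ω ∂P) = ∏ i ∈ s, ∫ ω, f i ω ∂P := by
  classical
  induction s using Finset.induction_on with
  | empty => simp
  | @insert a s ha ih =>
    have hprodeq : (fun ω => ∏ i ∈ s, f i ω) = ∏ i ∈ s, f i := by
      funext ω; simp [Finset.prod_apply]
    have hIndep : IndepFun (f a) (∏ j ∈ s, f j) P :=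
      (hind.indepFun_finset_prod_of_notMem hm ha).symm
    have h1 : Integrable (∏ j ∈ s, f j) P := hprodeq ▸ ih.1
    have hmul : Integrable (f a * ∏ j ∈ s, f j) P :=
      hIndep.integrable_mul (hint a) h1
    have hieq : (fun ω => ∏ i ∈ insert a s, f i ω) = f a * ∏ j ∈ s, f j := by
      funext ω; simp [Finset.prod_insert ha, Finset.prod_apply]
    constructor
    · rw [hieq]; exact hmul
    · have := hIndep.integral_mul_eq_mul_integral (hint a).aestronglyMeasurable h1.aestronglyMeasurable
      calc ∫ ω, ∏ i ∈ insert a s, f i ω ∂P = ∫ ω, (f a * ∏ j ∈ s, f j) ω ∂P := by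
            rw [← hieq]
        _ = (∫ ω, f a ω ∂P) * ∫ ω, (∏ j ∈ s, f j) ω ∂P := this
        _ = ∏ i ∈ insert a s, ∫ ω, f i ω ∂P := by
            rw [Finset.prod_insert ha, ← ih.2]; congr 1
            · exact integral_congr_ae (ae_of_all _ fun ω => by simp [Finset.prod_apply])

lemma mlaux_count (j n : ℕ) (hn : 1 ≤ n) (F : Finset (Fin j → ℕ))
    (hF : ∀ g ∈ F, (∀ t, g t ∈ Finset.range n) ∧
      ∀ i ∈ Finset.image g Finset.univ,
        2 ≤ (Finset.univ.filter (fun t => g t = i)).card) :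
    F.card ≤ (j / 2 + 1) * (j / 2) ^ j * n ^ (j / 2) := by
  classical
  set r := j / 2 with hr
  have hsub : F ⊆ (((Finset.range n).powerset.filter (fun s => s.card ≤ r)).biUnion
          (fun s => Fintype.piFinset (fun _ : Fin j => s))) := by
    intro g hg
    obtain ⟨hgpi, hgood⟩ := hF g hg
    rw [Finset.mem_biUnion]
    refine ⟨Finset.image g Finset.univ, ?_, ?_⟩
    · rw [Finset.mem_filter, Finset.mem_powerset]
      constructor
      · intro i hi
        rw [Finset.mem_image] at hi
        obtain ⟨t, _, rfl⟩ := hi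
        exact hgpi t
      · have hcard : (Finset.univ : Finset (Fin j)).card
            = ∑ i ∈ Finset.image g Finset.univ,
              (Finset.univ.filter (fun t => g t = i)).card :=
          Finset.card_eq_sum_card_fiberwise
            (fun t _ => Finset.mem_image_of_mem g (Finset.mem_univ t))
        have h2 : 2 * (Finset.image g Finset.univ).card ≤ j := by
          have : ∑ i ∈ Finset.image g Finset.univ, 2
              ≤ ∑ i ∈ Finset.image g Finset.univ,
                (Finset.univ.filter (fun t => g t = i)).card :=
            Finset.sum_le_sum (fun i hi => hgood i hi)
          simpa [Finset.sum_const, Finset.card_univ, mul_comm] using this.trans_eq hcard.symm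
        omega
    · exact Fintype.mem_piFinset.2 fun t => Finset.mem_image_of_mem g (Finset.mem_univ t)
  have h1 := Finset.card_le_card hsub
  have h2 := Finset.card_biUnion_le (s := ((Finset.range n).powerset.filter (fun s => s.card ≤ r)))
      (t := fun s => Fintype.piFinset (fun _ : Fin j => s))
  have h3 : ∑ s ∈ (Finset.range n).powerset.filter (fun s => s.card ≤ r),
      (Fintype.piFinset (fun _ : Fin j => s)).card
      ≤ ((Finset.range n).powerset.filter (fun s => s.card ≤ r)).card * r ^ j := by
    calc ∑ s ∈ (Finset.range n).powerset.filter (fun s => s.card ≤ r),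
        (Fintype.piFinset (fun _ : Fin j => s)).card
        ≤ ∑ _s ∈ (Finset.range n).powerset.filter (fun s => s.card ≤ r), r ^ j := by
          refine Finset.sum_le_sum fun s hs => ?_
          rw [Fintype.card_piFinset]
          simp only [Finset.prod_const, Finset.card_univ, Fintype.card_fin]
          exact Nat.pow_le_pow_left (Finset.mem_filter.1 hs).2 j
      _ = _ := by rw [Finset.sum_const, smul_eq_mul]
  have h4 : ((Finset.range n).powerset.filter (fun s => s.card ≤ r)).card ≤ (r + 1) * n ^ r := by
    have hsub2 : (Finset.range n).powerset.filter (fun s => s.card ≤ r)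
        ⊆ (Finset.range (r + 1)).biUnion (fun t => (Finset.range n).powersetCard t) := by
      intro s hs
      rw [Finset.mem_filter, Finset.mem_powerset] at hs
      rw [Finset.mem_biUnion]
      exact ⟨s.card, Finset.mem_range.2 (Nat.lt_succ_of_le hs.2),
        Finset.mem_powersetCard.2 ⟨hs.1, rfl⟩⟩
    calc ((Finset.range n).powerset.filter (fun s => s.card ≤ r)).card
        ≤ ((Finset.range (r + 1)).biUnion (fun t => (Finset.range n).powersetCard t)).card :=
          Finset.card_le_card hsub2
      _ ≤ ∑ t ∈ Finset.range (r + 1), ((Finset.range n).powersetCard t).card :=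
          Finset.card_biUnion_le
      _ ≤ ∑ t ∈ Finset.range (r + 1), n ^ r := by
          refine Finset.sum_le_sum fun t ht => ?_
          rw [Finset.card_powersetCard, Finset.card_range]
          exact (Nat.choose_le_pow n t).trans
            (Nat.pow_le_pow_right hn (Nat.lt_succ_iff.1 (Finset.mem_range.1 ht)))
      _ = (r + 1) * n ^ r := by rw [Finset.sum_const, Finset.card_range, smul_eq_mul]
  calc F.card ≤ _ := h1
    _ ≤ _ := h2
    _ ≤ ((Finset.range n).powerset.filter (fun s => s.card ≤ r)).card * r ^ j := h3
    _ ≤ ((r + 1) * n ^ r) * r ^ j := Nat.mul_le_mul_right _ h4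
    _ = (r + 1) * r ^ j * n ^ r := by ring

lemma mlaux_pow_int (Y : ℕ → Ω → ℝ) (hm : ∀ i, Measurable (Y i))
    (hident : ∀ i, IdentDistrib (Y i) (Y 0) P P) (k : ℕ)
    (hmom : ∀ j ≤ k, Integrable (fun ω => |Y 0 ω| ^ j) P)
    (i m : ℕ) (hmk : m ≤ k) :
    Integrable (fun ω => (Y i ω) ^ m) P ∧
      (∫ ω, (Y i ω) ^ m ∂P) = ∫ ω, (Y 0 ω) ^ m ∂P := by
  have h0 : Integrable (fun ω => (Y 0 ω) ^ m) P :=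
    (hmom m hmk).mono' ((hm 0).pow_const m).aestronglyMeasurable
      (ae_of_all _ fun ω => by simp [abs_pow])
  have hid : IdentDistrib (fun ω => (Y i ω) ^ m) (fun ω => (Y 0 ω) ^ m) P P :=
    (hident i).comp (measurable_id.pow_const m)
  exact ⟨hid.integrable_iff.2 h0, hid.integral_eq⟩

lemma mlaux_moment (Y : ℕ → Ω → ℝ) (hm : ∀ i, Measurable (Y i))
    (hind : iIndepFun Y P)
    (hident : ∀ i, IdentDistrib (Y i) (Y 0) P P) (k : ℕ)
    (hmom : ∀ j ≤ k, Integrable (fun ω => |Y 0 ω| ^ j) P)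
    (hzero : (∫ ω, Y 0 ω ∂P) = 0)
    (B : ℝ) (hB1 : 1 ≤ B) (hBm : ∀ m ≤ k, (∫ ω, |Y 0 ω| ^ m ∂P) ≤ B)
    {j : ℕ} (hj : j ≤ k) (n : ℕ) (hn : 1 ≤ n) :
    Integrable (fun ω => (∑ i ∈ Finset.range n, Y i ω) ^ j) P ∧
      |∫ ω, (∑ i ∈ Finset.range n, Y i ω) ^ j ∂P|
        ≤ ((j / 2 + 1) * (j / 2) ^ j * n ^ (j / 2) : ℕ) * B ^ j := by
  classical
  set pi := Fintype.piFinset (fun _ : Fin j => Finset.range n) with hpi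
  set mult := fun (g : Fin j → ℕ) (i : ℕ) => (Finset.univ.filter (fun t => g t = i)).card
    with hmult
  -- pointwise multinomial expansion
  have hexp : ∀ ω, (∑ i ∈ Finset.range n, Y i ω) ^ j
      = ∑ g ∈ pi, ∏ i ∈ Finset.image g Finset.univ, (Y i ω) ^ (mult g i) := by
    intro ω
    have h1 : (∑ i ∈ Finset.range n, Y i ω) ^ j
        = ∏ _t : Fin j, (∑ i ∈ Finset.range n, Y i ω) := by
      rw [Finset.prod_const, Finset.card_univ, Fintype.card_fin]
    rw [h1, Finset.prod_univ_sum]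
    refine Finset.sum_congr rfl fun g _ => ?_
    exact Finset.prod_comp (fun i => Y i ω) g
  have hmult_le : ∀ (g : Fin j → ℕ) i, mult g i ≤ k := fun g i =>
    le_trans (by simpa using (Finset.card_filter_le Finset.univ (fun t => g t = i))) hj
  -- each term: family of independent powers
  have hterm : ∀ g : Fin j → ℕ,
      Integrable (fun ω => ∏ i ∈ Finset.image g Finset.univ, (Y i ω) ^ (mult g i)) P ∧
      (∫ ω, ∏ i ∈ Finset.image g Finset.univ, (Y i ω) ^ (mult g i) ∂P)
        = ∏ i ∈ Finset.image g Finset.univ, ∫ ω, (Y 0 ω) ^ (mult g i) ∂P := by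
    intro g
    have hindF : iIndepFun
        (fun i => fun ω => (Y i ω) ^ (mult g i)) P :=
      hind.comp (fun i x => x ^ (mult g i)) (fun i => measurable_id.pow_const _)
    have hmF : ∀ i, Measurable (fun ω => (Y i ω) ^ (mult g i)) :=
      fun i => (hm i).pow_const _
    have hintF : ∀ i, Integrable (fun ω => (Y i ω) ^ (mult g i)) P :=
      fun i => (mlaux_pow_int Y hm hident k hmom i _ (hmult_le g i)).1
    obtain ⟨hI, hE⟩ := mlaux_integral_prod _ hindF hmF hintF (Finset.image g Finset.univ)
    refine ⟨hI, hE.trans ?_⟩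
    exact Finset.prod_congr rfl fun i _ =>
      (mlaux_pow_int Y hm hident k hmom i _ (hmult_le g i)).2
  have hfun : (fun ω => (∑ i ∈ Finset.range n, Y i ω) ^ j)
      = fun ω => ∑ g ∈ pi, ∏ i ∈ Finset.image g Finset.univ, (Y i ω) ^ (mult g i) :=
    funext hexp
  have hInt : Integrable (fun ω => (∑ i ∈ Finset.range n, Y i ω) ^ j) P := by
    rw [hfun]; exact integrable_finset_sum _ fun g _ => (hterm g).1
  refine ⟨hInt, ?_⟩
  have hIeq : (∫ ω, (∑ i ∈ Finset.range n, Y i ω) ^ j ∂P)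
      = ∑ g ∈ pi, ∏ i ∈ Finset.image g Finset.univ, ∫ ω, (Y 0 ω) ^ (mult g i) ∂P := by
    rw [hfun, integral_finset_sum _ fun g _ => (hterm g).1]
    exact Finset.sum_congr rfl fun g _ => (hterm g).2
  -- terms with some multiplicity 1 vanish
  set good := fun g : Fin j → ℕ => ∀ i ∈ Finset.image g Finset.univ,
    2 ≤ (Finset.univ.filter (fun t => g t = i)).card with hgood
  have hvanish : ∀ g ∈ pi, ¬ good g →
      (∏ i ∈ Finset.image g Finset.univ, ∫ ω, (Y 0 ω) ^ (mult g i) ∂P) = 0 := by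
    intro g _ hng
    rw [hgood] at hng
    obtain ⟨i, hi, hlt⟩ : ∃ i ∈ Finset.image g Finset.univ,
        (Finset.univ.filter (fun t => g t = i)).card < 2 := by
      by_contra hc
      push_neg at hc
      exact hng fun i hi => hc i hi
    have h1 : 1 ≤ mult g i := by
      rw [Finset.mem_image] at hi
      obtain ⟨t, _, rfl⟩ := hi
      have : t ∈ Finset.univ.filter (fun t' => g t' = g t) := by simp
      exact Finset.card_pos.2 ⟨t, this⟩
    have h2 : mult g i < 2 := hlt
    have hone : mult g i = 1 := by omega
    refine Finset.prod_eq_zero hi ?_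
    rw [hone]
    simpa using hzero
  have hsplit : (∑ g ∈ pi, ∏ i ∈ Finset.image g Finset.univ, ∫ ω, (Y 0 ω) ^ (mult g i) ∂P)
      = ∑ g ∈ pi.filter good, ∏ i ∈ Finset.image g Finset.univ,
          ∫ ω, (Y 0 ω) ^ (mult g i) ∂P := by
    refine (Finset.sum_subset (Finset.filter_subset _ _) ?_).symm
    intro g hg hng
    rw [Finset.mem_filter] at hng
    exact hvanish g hg (fun h => hng ⟨hg, h⟩)
  -- bound each good term
  have hbound : ∀ g : Fin j → ℕ,
      |∏ i ∈ Finset.image g Finset.univ, ∫ ω, (Y 0 ω) ^ (mult g i) ∂P| ≤ B ^ j := by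
    intro g
    rw [Finset.abs_prod]
    calc (∏ i ∈ Finset.image g Finset.univ, |∫ ω, (Y 0 ω) ^ (mult g i) ∂P|)
        ≤ ∏ i ∈ Finset.image g Finset.univ, B := by
          refine Finset.prod_le_prod (fun _ _ => abs_nonneg _) fun i _ => ?_
          calc |∫ ω, (Y 0 ω) ^ (mult g i) ∂P| ≤ ∫ ω, |(Y 0 ω) ^ (mult g i)| ∂P :=
                by
                simpa [Real.norm_eq_abs] using
                  norm_integral_le_integral_norm (fun ω => (Y 0 ω) ^ (mult g i))
            _ = ∫ ω, |Y 0 ω| ^ (mult g i) ∂P := by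
                congr 1; funext ω; exact abs_pow _ _
            _ ≤ B := hBm _ (hmult_le g i)
      _ = B ^ (Finset.image g Finset.univ).card := Finset.prod_const B
      _ ≤ B ^ j := pow_le_pow_right₀ hB1
          (le_trans Finset.card_image_le (by simp))
  -- count good terms
  have hcount : (pi.filter good).card ≤ (j / 2 + 1) * (j / 2) ^ j * n ^ (j / 2) := by
    refine mlaux_count j n hn _ fun g hg => ?_
    rw [Finset.mem_filter] at hg
    exact ⟨fun t => Fintype.mem_piFinset.1 hg.1 t, hg.2⟩
  calc |∫ ω, (∑ i ∈ Finset.range n, Y i ω) ^ j ∂P|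
      = |∑ g ∈ pi.filter good, ∏ i ∈ Finset.image g Finset.univ,
          ∫ ω, (Y 0 ω) ^ (mult g i) ∂P| := by rw [hIeq, hsplit]
    _ ≤ ∑ g ∈ pi.filter good, |∏ i ∈ Finset.image g Finset.univ,
          ∫ ω, (Y 0 ω) ^ (mult g i) ∂P| := Finset.abs_sum_le_sum_abs _ _
    _ ≤ ∑ _g ∈ pi.filter good, B ^ j := Finset.sum_le_sum fun g _ => hbound g
    _ = ((pi.filter good).card : ℝ) * B ^ j := by
        rw [Finset.sum_const, nsmul_eq_mul]
    _ ≤ ((j / 2 + 1) * (j / 2) ^ j * n ^ (j / 2) : ℕ) * B ^ j := by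
        have hBj : (0:ℝ) ≤ B ^ j := le_trans zero_le_one (one_le_pow₀ hB1)
        exact mul_le_mul_of_nonneg_right (Nat.cast_le.2 hcount) hBj

end MLEstAux

/-- **Theorem 3 (deviation of the modified ML estimator; Grünwald–de Rooij).**
Let `X_0, X_1, X_2, …` be i.i.d. real random variables, let `n₀ > 0` and `x₀` be
constants, define `μ̂_n := (n₀·x₀ + ∑_{i<n} X_i)/(n + n₀)` and `μ* := E[X]`.
If the first `k` moments of `X` exist, then `E[(μ̂_n − μ*)^k] = O(n^{−⌈k/2⌉})`. -/
theorem mlEst_deviation_moment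
    {Ω : Type} [MeasurableSpace Ω] (P : Measure Ω) [IsProbabilityMeasure P]
    (X : ℕ → Ω → ℝ) (hmeas : ∀ i, Measurable (X i))
    (hindep : iIndepFun X P)
    (hident : ∀ i, IdentDistrib (X i) (X 0) P P)
    (n0 : ℝ) (hn0 : 0 < n0) (x0 : ℝ)
    (k : ℕ) (hk : 0 < k)
    (hmom : ∀ j ≤ k, Integrable (fun ω => |X 0 ω| ^ j) P)
    (μstar : ℝ) (hμstar : μstar = ∫ ω, X 0 ω ∂P) :
    (fun n : ℕ =>
        ∫ ω, ((n0 * x0 + ∑ i ∈ Finset.range n, X i ω) / ((n : ℝ) + n0) - μstar) ^ k ∂P)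
      =O[atTop] (fun n : ℕ => ((n : ℝ) ^ ((k + 1) / 2 : ℕ))⁻¹) := by
  classical
  set Y : ℕ → Ω → ℝ := fun i ω => X i ω - μstar with hY
  have hYm : ∀ i, Measurable (Y i) := fun i => (hmeas i).sub measurable_const
  have hYind : iIndepFun Y P :=
    hindep.comp (fun _ x => x - μstar) (fun _ => measurable_id.sub measurable_const)
  have hYident : ∀ i, IdentDistrib (Y i) (Y 0) P P :=
    fun i => (hident i).comp (measurable_id.sub measurable_const)
  have hX0int : Integrable (X 0) P := by
    refine (hmom 1 hk).mono' (hmeas 0).aestronglyMeasurable (ae_of_all _ fun ω => ?_)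
    simp [Real.norm_eq_abs]
  have hYzero : (∫ ω, Y 0 ω ∂P) = 0 := by
    have : (∫ ω, Y 0 ω ∂P) = (∫ ω, X 0 ω ∂P) - ∫ _ω, μstar ∂P :=
      integral_sub hX0int (integrable_const _)
    rw [this, integral_const]
    simp [hμstar]
  have hYmom : ∀ m ≤ k, Integrable (fun ω => |Y 0 ω| ^ m) P := by
    intro m hmk
    have hg : Integrable (fun ω => ∑ i ∈ Finset.range (m + 1),
        |X 0 ω| ^ i * |μstar| ^ (m - i) * (m.choose i : ℝ)) P := by
      refine integrable_finset_sum _ fun i hi => ?_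
      have hik : i ≤ k := le_trans (Nat.lt_succ_iff.1 (Finset.mem_range.1 hi)) hmk
      exact ((hmom i hik).mul_const _).mul_const _
    refine hg.mono' ((hYm 0).abs.pow_const m).aestronglyMeasurable
      (ae_of_all _ fun ω => ?_)
    have h1 : |Y 0 ω| ≤ |X 0 ω| + |μstar| := abs_sub _ _
    rw [Real.norm_eq_abs, abs_pow, abs_abs]
    calc |Y 0 ω| ^ m ≤ (|X 0 ω| + |μstar|) ^ m :=
          pow_le_pow_left₀ (abs_nonneg _) h1 m
      _ = _ := add_pow _ _ m
  set B : ℝ := 1 + ∑ m ∈ Finset.range (k + 1), ∫ ω, |Y 0 ω| ^ m ∂P with hB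
  have hint_nonneg : ∀ m : ℕ, 0 ≤ ∫ ω, |Y 0 ω| ^ m ∂P :=
    fun m => integral_nonneg fun ω => by positivity
  have hB1 : 1 ≤ B :=
    le_add_of_nonneg_right (Finset.sum_nonneg fun m _ => hint_nonneg m)
  have hB0 : 0 ≤ B := le_trans zero_le_one hB1
  have hBm : ∀ m ≤ k, (∫ ω, |Y 0 ω| ^ m ∂P) ≤ B := by
    intro m hmk
    calc (∫ ω, |Y 0 ω| ^ m ∂P)
        ≤ ∑ i ∈ Finset.range (k + 1), ∫ ω, |Y 0 ω| ^ i ∂P :=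
          Finset.single_le_sum (fun i _ => hint_nonneg i)
            (Finset.mem_range.2 (Nat.lt_succ_of_le hmk))
      _ ≤ B := le_add_of_nonneg_left zero_le_one
  set c : ℝ := n0 * (x0 - μstar) with hc
  set D : ℝ := ∑ i ∈ Finset.range (k + 1), |c| ^ i * (k.choose i : ℝ) *
      (((k - i) / 2 + 1) * ((k - i) / 2) ^ (k - i) : ℕ) * B ^ (k - i) with hD
  have hD0 : 0 ≤ D := Finset.sum_nonneg fun i _ => by positivity
  rw [Asymptotics.isBigO_iff]
  refine ⟨D, ?_⟩
  filter_upwards [eventually_ge_atTop 1] with n hn1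
  have hnpos : (0 : ℝ) < n := by exact_mod_cast hn1
  have hn1' : (1 : ℝ) ≤ n := by exact_mod_cast hn1
  have hdpos : (0 : ℝ) < (n : ℝ) + n0 := by positivity
  -- pointwise rewrite of the integrand
  have hpt : (fun ω => ((n0 * x0 + ∑ i ∈ Finset.range n, X i ω) / ((n : ℝ) + n0) - μstar) ^ k)
      = fun ω => (((n : ℝ) + n0)⁻¹) ^ k * (c + ∑ i ∈ Finset.range n, Y i ω) ^ k := by
    funext ω
    have hsum : ∑ i ∈ Finset.range n, Y i ω
        = (∑ i ∈ Finset.range n, X i ω) - n * μstar := by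
      rw [hY, Finset.sum_sub_distrib, Finset.sum_const, Finset.card_range, nsmul_eq_mul]
    rw [← mul_pow, hsum, hc]
    congr 1
    field_simp
    ring
  have hmomj : ∀ j, j ≤ k →
      Integrable (fun ω => (∑ i ∈ Finset.range n, Y i ω) ^ j) P ∧
      |∫ ω, (∑ i ∈ Finset.range n, Y i ω) ^ j ∂P|
        ≤ ((j / 2 + 1) * (j / 2) ^ j * n ^ (j / 2) : ℕ) * B ^ j :=
    fun j hj => mlaux_moment Y hYm hYind hYident k hYmom hYzero B hB1 hBm hj n hn1
  have hexp2 : (fun ω => (c + ∑ i ∈ Finset.range n, Y i ω) ^ k)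
      = fun ω => ∑ i ∈ Finset.range (k + 1),
          c ^ i * (∑ t ∈ Finset.range n, Y t ω) ^ (k - i) * (k.choose i : ℝ) := by
    funext ω; rw [add_pow]
  have hIntTerm : ∀ i ∈ Finset.range (k + 1),
      Integrable (fun ω => c ^ i * (∑ t ∈ Finset.range n, Y t ω) ^ (k - i)
        * (k.choose i : ℝ)) P :=
    fun i _ => (((hmomj (k - i) (Nat.sub_le _ _)).1.const_mul _).mul_const _)
  have hIval : (∫ ω, (c + ∑ i ∈ Finset.range n, Y i ω) ^ k ∂P)
      = ∑ i ∈ Finset.range (k + 1),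
          c ^ i * (∫ ω, (∑ t ∈ Finset.range n, Y t ω) ^ (k - i) ∂P) * (k.choose i : ℝ) := by
    rw [hexp2, integral_finset_sum _ hIntTerm]
    refine Finset.sum_congr rfl fun i _ => ?_
    rw [integral_mul_const, integral_const_mul]
  -- per-term bound
  have hTb : ∀ i ∈ Finset.range (k + 1),
      |c ^ i * (∫ ω, (∑ t ∈ Finset.range n, Y t ω) ^ (k - i) ∂P) * (k.choose i : ℝ)|
        ≤ (|c| ^ i * (k.choose i : ℝ) *
            (((k - i) / 2 + 1) * ((k - i) / 2) ^ (k - i) : ℕ) * B ^ (k - i))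
          * (n : ℝ) ^ (k / 2) := by
    intro i _
    have h2 := (hmomj (k - i) (Nat.sub_le _ _)).2
    have hcast : ((((k - i) / 2 + 1) * ((k - i) / 2) ^ (k - i) * n ^ ((k - i) / 2) : ℕ) : ℝ)
        = ((((k - i) / 2 + 1) * ((k - i) / 2) ^ (k - i) : ℕ) : ℝ) * (n : ℝ) ^ ((k - i) / 2) := by
      push_cast; ring
    have hq : (n : ℝ) ^ ((k - i) / 2) ≤ (n : ℝ) ^ (k / 2) :=
      pow_le_pow_right₀ hn1' (Nat.div_le_div_right (Nat.sub_le k i))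
    have hBk : (0 : ℝ) ≤ B ^ (k - i) := pow_nonneg hB0 _
    have h3 : |∫ ω, (∑ t ∈ Finset.range n, Y t ω) ^ (k - i) ∂P|
        ≤ ((((k - i) / 2 + 1) * ((k - i) / 2) ^ (k - i) : ℕ) : ℝ)
            * (n : ℝ) ^ (k / 2) * B ^ (k - i) := by
      refine h2.trans ?_
      rw [hcast]
      exact mul_le_mul_of_nonneg_right
        (mul_le_mul_of_nonneg_left hq (Nat.cast_nonneg _)) hBk
    calc |c ^ i * (∫ ω, (∑ t ∈ Finset.range n, Y t ω) ^ (k - i) ∂P) * (k.choose i : ℝ)|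
        = |c| ^ i * |∫ ω, (∑ t ∈ Finset.range n, Y t ω) ^ (k - i) ∂P| * (k.choose i : ℝ) := by
          rw [abs_mul, abs_mul, abs_pow, Nat.abs_cast]
      _ ≤ |c| ^ i * (((((k - i) / 2 + 1) * ((k - i) / 2) ^ (k - i) : ℕ) : ℝ)
            * (n : ℝ) ^ (k / 2) * B ^ (k - i)) * (k.choose i : ℝ) :=
          mul_le_mul_of_nonneg_right
            (mul_le_mul_of_nonneg_left h3 (pow_nonneg (abs_nonneg _) i))
            (Nat.cast_nonneg _)
      _ = _ := by ring
  have hsumb : |∫ ω, (c + ∑ i ∈ Finset.range n, Y i ω) ^ k ∂P| ≤ D * (n : ℝ) ^ (k / 2) := by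
    rw [hIval, hD, Finset.sum_mul]
    exact (Finset.abs_sum_le_sum_abs _ _).trans (Finset.sum_le_sum hTb)
  -- final chain
  have hkey : ‖∫ ω, ((n0 * x0 + ∑ i ∈ Finset.range n, X i ω) / ((n : ℝ) + n0) - μstar) ^ k ∂P‖
      ≤ D * ((n : ℝ) ^ ((k + 1) / 2 : ℕ))⁻¹ := by
    rw [hpt, integral_const_mul]
    rw [Real.norm_eq_abs, abs_mul, abs_pow, abs_inv, abs_of_pos hdpos]
    have hinv : ((n : ℝ) + n0)⁻¹ ≤ ((n : ℝ))⁻¹ := by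
      apply inv_anti₀ hnpos
      linarith
    have hstep : (((n : ℝ) + n0)⁻¹) ^ k * |∫ ω, (c + ∑ i ∈ Finset.range n, Y i ω) ^ k ∂P|
        ≤ (((n : ℝ))⁻¹) ^ k * (D * (n : ℝ) ^ (k / 2)) := by
      refine mul_le_mul (pow_le_pow_left₀ (by positivity) hinv k) hsumb (abs_nonneg _) ?_
      positivity
    refine hstep.trans (le_of_eq ?_)
    have hk2 : (n : ℝ) ^ k = (n : ℝ) ^ (k / 2) * (n : ℝ) ^ ((k + 1) / 2) := by
      rw [← pow_add]; congr 1; omega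
    rw [inv_pow, hk2]
    have h1 : ((n : ℝ) ^ (k / 2)) ≠ 0 := by positivity
    have h2 : ((n : ℝ) ^ ((k + 1) / 2 : ℕ)) ≠ 0 := by positivity
    field_simp
  refine hkey.trans (le_of_eq ?_)
  rw [Real.norm_eq_abs, abs_inv, abs_pow, Nat.abs_cast]
end

section
/- Let X, X_1, X_2, … be i.i.d. real-valued random variables, let n_0 > 0 and x_0 ∈ ℝ be constants, define μ̂_n := (n_0·x_0 + Σ_{i=1}^n X_i)/(n + n_0) and μ* := E[X]. Let k ∈ {0, 2, 4, …} be an even nonnegative integer. If the first k moments of X exist, then for every δ > 0, P(|μ̂_n − μ*| ≥ δ) = O(n^{−⌈k/2⌉} δ^{−k}) as n → ∞, uniformly in δ. -/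
open MeasureTheory Filter Real Asymptotics ProbabilityTheory
open scoped ENNReal NNReal

variable {Ω : Type} [MeasurableSpace Ω] {P : Measure Ω} [IsProbabilityMeasure P]

-- pointwise: |x|^j ≤ 1 + |x|^k for j ≤ k
lemma abs_pow_le_one_add (x : ℝ) {j k : ℕ} (hj : j ≤ k) : |x| ^ j ≤ 1 + |x| ^ k := by
  rcases le_or_gt (|x|) 1 with h | h
  · have : |x| ^ j ≤ 1 := pow_le_one₀ (abs_nonneg x) h
    nlinarith [pow_nonneg (abs_nonneg x) k]
  · have : |x| ^ j ≤ |x| ^ k := pow_le_pow_right₀ h.le hj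
    linarith

lemma two_pow_bound (x y : ℝ) (hx : 0 ≤ x) (hy : 0 ≤ y) (k : ℕ) :
    (x + y) ^ k ≤ 2 ^ k * (x ^ k + y ^ k) := by
  have h1 : x + y ≤ 2 * max x y := by
    rcases le_total x y with h | h <;> simp [max_eq_right, max_eq_left, h] <;> linarith
  calc (x + y) ^ k ≤ (2 * max x y) ^ k :=
        pow_le_pow_left₀ (by positivity) h1 k
    _ = 2 ^ k * (max x y) ^ k := mul_pow 2 _ k
    _ ≤ 2 ^ k * (x ^ k + y ^ k) := by
        apply mul_le_mul_of_nonneg_left _ (by positivity)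
        rcases le_total x y with h | h
        · rw [max_eq_right h]; nlinarith [pow_nonneg hx k]
        · rw [max_eq_left h]; nlinarith [pow_nonneg hy k]

lemma aux_int_pow {k j : ℕ} (hj : j ≤ k) {f : Ω → ℝ} (hf : MemLp f (k : ℝ≥0∞) P) :
    Integrable (fun ω => f ω ^ j) P := by
  rcases Nat.eq_zero_or_pos j with rfl | hj0
  · simpa using integrable_const (1 : ℝ)
  have hle : (j : ℝ≥0∞) ≤ (k : ℝ≥0∞) := by exact_mod_cast hj
  have hfj : MemLp f (j : ℝ≥0∞) P := hf.mono_exponent hle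
  have h := hfj.integrable_norm_rpow (by exact_mod_cast hj0.ne') (by simp)
  refine h.mono' (hfj.aestronglyMeasurable.pow _) ?_
  · filter_upwards with ω
    rw [ENNReal.toReal_natCast, Real.rpow_natCast]
    simp [abs_pow]

lemma moment_sum_bound (Y : ℕ → Ω → ℝ) (hmeas : ∀ i, Measurable (Y i))
    (hindep : iIndepFun Y P)
    (hident : ∀ i, IdentDistrib (Y i) (Y 0) P P)
    (k : ℕ) (hk : MemLp (Y 0) (k : ℝ≥0∞) P)
    (hzero : ∫ ω, Y 0 ω ∂P = 0) :
    ∀ m : ℕ, 2 * m ≤ k →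
      ∃ a : ℝ, 0 ≤ a ∧ ∀ n : ℕ,
        ∫ ω, (∑ i ∈ Finset.range n, Y i ω) ^ (2 * m) ∂P ≤ a * (n : ℝ) ^ m := by
  have hY : ∀ i, MemLp (Y i) (k : ℝ≥0∞) P := fun i => ((hident i).memLp_iff).mpr hk
  set T : ℕ → Ω → ℝ := fun n ω => ∑ i ∈ Finset.range n, Y i ω with hTdef
  have hTmem : ∀ n, MemLp (T n) (k : ℝ≥0∞) P := by
    intro n
    have := memLp_finset_sum' (μ := P) (p := (k : ℝ≥0∞)) (Finset.range n)
      (fun i _ => hY i)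
    convert this using 1
    ext ω
    simp [hTdef]
  have hTint : ∀ n j, j ≤ k → Integrable (fun ω => T n ω ^ j) P :=
    fun n j hj => aux_int_pow hj (hTmem n)
  have hYint : ∀ i j, j ≤ k → Integrable (fun ω => Y i ω ^ j) P :=
    fun i j hj => aux_int_pow hj (hY i)
  have hYabs : ∀ j, j ≤ k → Integrable (fun ω => |Y 0 ω| ^ j) P := by
    intro j hj
    simpa [abs_pow] using (hYint 0 j hj).abs
  have hYmom : ∀ i j, ∫ ω, Y i ω ^ j ∂P = ∫ ω, Y 0 ω ^ j ∂P := by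
    intro i j
    exact ((hident i).comp (measurable_id.pow_const j)).integral_eq
  have hYmean : ∀ i, ∫ ω, Y i ω ∂P = 0 := by
    intro i
    rw [(hident i).integral_eq]; exact hzero
  intro m
  induction m with
  | zero =>
    intro _
    exact ⟨1, zero_le_one, fun n => by simp⟩
  | succ m ih =>
    intro hm2
    have hmk : 2 * m ≤ k := by omega
    have hKk : 2 * m + 2 ≤ k := by omega
    obtain ⟨a, ha0, hA⟩ := ih hmk
    set K := 2 * m + 2 with hKdef
    set M : ℝ := (∫ ω, |Y 0 ω| ^ k ∂P) + 1 with hMdef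
    have hM1 : 1 ≤ M := by
      have : 0 ≤ ∫ ω, |Y 0 ω| ^ k ∂P := integral_nonneg fun ω => by positivity
      linarith
    have hM0 : 0 ≤ M := by linarith
    -- moments of Y are bounded by M
    have hMom : ∀ j, j ≤ k → |∫ ω, Y 0 ω ^ j ∂P| ≤ M := by
      intro j hj
      have h1 : |∫ ω, Y 0 ω ^ j ∂P| ≤ ∫ ω, |Y 0 ω| ^ j ∂P := by
        have := norm_integral_le_integral_norm (μ := P) (fun ω => Y 0 ω ^ j)
        simpa [Real.norm_eq_abs, abs_pow] using this
      have h2 : ∫ ω, |Y 0 ω| ^ j ∂P ≤ ∫ ω, (1 + |Y 0 ω| ^ k) ∂P := by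
        refine integral_mono (hYabs j hj) ((integrable_const 1).add (hYabs k le_rfl)) ?_
        intro ω
        exact abs_pow_le_one_add _ hj
      have h3 : ∫ ω, (1 + |Y 0 ω| ^ k) ∂P = M := by
        rw [integral_add (integrable_const 1) (hYabs k le_rfl)]
        simp [hMdef, add_comm]
      linarith
    -- absolute moments of T n of order ≤ 2m are bounded
    have hTabs : ∀ n j, j ≤ 2 * m → |∫ ω, T n ω ^ j ∂P| ≤ 1 + a * (n : ℝ) ^ m := by
      intro n j hj
      have hjk : j ≤ k := le_trans hj hmk
      have h1 : |∫ ω, T n ω ^ j ∂P| ≤ ∫ ω, |T n ω| ^ j ∂P := by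
        have := norm_integral_le_integral_norm (μ := P) (fun ω => T n ω ^ j)
        simpa [Real.norm_eq_abs, abs_pow] using this
      have hTabsint : Integrable (fun ω => |T n ω| ^ (2 * m)) P := by
        simpa [abs_pow] using (hTint n (2 * m) hmk).abs
      have h2 : ∫ ω, |T n ω| ^ j ∂P ≤ ∫ ω, (1 + |T n ω| ^ (2 * m)) ∂P := by
        refine integral_mono ?_ ((integrable_const 1).add hTabsint) ?_
        · simpa [abs_pow] using (hTint n j hjk).abs
        · intro ω; exact abs_pow_le_one_add _ hj
      have h3 : ∫ ω, (1 + |T n ω| ^ (2 * m)) ∂P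
          = 1 + ∫ ω, T n ω ^ (2 * m) ∂P := by
        rw [integral_add (integrable_const 1) hTabsint]
        have : ∀ ω, |T n ω| ^ (2 * m) = T n ω ^ (2 * m) :=
          fun ω => (even_two_mul m).pow_abs _
        simp [this]
      have := hA n
      linarith
    -- independence of T n and Y n
    have hTY : ∀ n, IndepFun (T n) (Y n) P := by
      intro n
      have := hindep.indepFun_finsetSum_of_notMem hmeas
        (Finset.notMem_range_self (n := n))
      convert this using 1
      ext ω
      simp [hTdef]
    -- the increment bound
    set c : ℝ := 2 ^ K * M * (1 + a) with hcdef
    have hc0 : 0 ≤ c := by positivity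
    have hstep : ∀ n : ℕ, ∫ ω, T (n + 1) ω ^ K ∂P
        ≤ ∫ ω, T n ω ^ K ∂P + c * ((n : ℝ) + 1) ^ m := by
      intro n
      -- binomial expansion
      have hindpow : ∀ j : ℕ, IndepFun (fun ω => T n ω ^ j)
          (fun ω => Y n ω ^ (K - j)) P :=
        fun j => (hTY n).comp (measurable_id.pow_const j) (measurable_id.pow_const (K - j))
      have hintmul : ∀ j, j ∈ Finset.range (K + 1) →
          Integrable (fun ω => T n ω ^ j * Y n ω ^ (K - j) * (K.choose j : ℝ)) P := by
        intro j hj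
        have hj' : j ≤ K := by
          simp only [Finset.mem_range] at hj; omega
        exact (((hindpow j).integrable_mul (hTint n j (le_trans hj' hKk))
          (hYint n (K - j) (by omega)))).mul_const _
      have hexp : ∫ ω, T (n + 1) ω ^ K ∂P
          = ∑ j ∈ Finset.range (K + 1),
              (∫ ω, T n ω ^ j ∂P) * (∫ ω, Y n ω ^ (K - j) ∂P) * (K.choose j : ℝ) := by
        have hfun : ∀ ω, T (n + 1) ω ^ K
            = ∑ j ∈ Finset.range (K + 1),
                T n ω ^ j * Y n ω ^ (K - j) * (K.choose j : ℝ) := by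
          intro ω
          have : T (n + 1) ω = T n ω + Y n ω := by
            simp [hTdef, Finset.sum_range_succ]
          rw [this, add_pow]
        calc ∫ ω, T (n + 1) ω ^ K ∂P
            = ∫ ω, ∑ j ∈ Finset.range (K + 1),
                T n ω ^ j * Y n ω ^ (K - j) * (K.choose j : ℝ) ∂P := by
              congr 1; ext ω; exact hfun ω
          _ = ∑ j ∈ Finset.range (K + 1),
              ∫ ω, T n ω ^ j * Y n ω ^ (K - j) * (K.choose j : ℝ) ∂P :=
              integral_finset_sum _ hintmul
          _ = ∑ j ∈ Finset.range (K + 1),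
              (∫ ω, T n ω ^ j ∂P) * (∫ ω, Y n ω ^ (K - j) ∂P) * (K.choose j : ℝ) := by
              refine Finset.sum_congr rfl fun j hj => ?_
              have hj' : j ≤ K := by
                simp only [Finset.mem_range] at hj; omega
              rw [integral_mul_const]
              congr 1
              exact (hindpow j).integral_mul_eq_mul_integral
                (hTint n j (le_trans hj' hKk)).aestronglyMeasurable (hYint n (K - j) (by omega)).aestronglyMeasurable
      -- split off the top two terms
      rw [hexp]
      rw [Finset.sum_range_succ, Finset.sum_range_succ]
      have htop : (∫ ω, T n ω ^ K ∂P) * (∫ ω, Y n ω ^ (K - K) ∂P) * (K.choose K : ℝ)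
          = ∫ ω, T n ω ^ K ∂P := by simp
      have hnext : (∫ ω, T n ω ^ (2 * m + 1) ∂P) * (∫ ω, Y n ω ^ (K - (2 * m + 1)) ∂P)
          * (K.choose (2 * m + 1) : ℝ) = 0 := by
        have h9 : K - (2 * m + 1) = 1 := by omega
        rw [h9]
        simp [pow_one, hYmean n]
      rw [htop, hnext]
      have hrest : ∑ j ∈ Finset.range (2 * m + 1),
          (∫ ω, T n ω ^ j ∂P) * (∫ ω, Y n ω ^ (K - j) ∂P) * (K.choose j : ℝ)
          ≤ c * ((n : ℝ) + 1) ^ m := by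
        have hterm : ∀ j ∈ Finset.range (2 * m + 1),
            (∫ ω, T n ω ^ j ∂P) * (∫ ω, Y n ω ^ (K - j) ∂P) * (K.choose j : ℝ)
            ≤ (K.choose j : ℝ) * (M * (1 + a) * ((n : ℝ) + 1) ^ m) := by
          intro j hj
          have hj' : j ≤ 2 * m := by
            simp only [Finset.mem_range] at hj; omega
          have h1 := hTabs n j hj'
          have h2 : |∫ ω, Y n ω ^ (K - j) ∂P| ≤ M := by
            rw [hYmom n (K - j)]; exact hMom (K - j) (by omega)
          have h3 : 1 + a * (n : ℝ) ^ m ≤ (1 + a) * ((n : ℝ) + 1) ^ m := by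
            have hp1 : (n : ℝ) ^ m ≤ ((n : ℝ) + 1) ^ m :=
              pow_le_pow_left₀ (by positivity) (by linarith) m
            have hp2 : 1 ≤ ((n : ℝ) + 1) ^ m :=
              one_le_pow₀ (by push_cast; linarith [Nat.cast_nonneg (α := ℝ) n])
            nlinarith
          have h4 : (∫ ω, T n ω ^ j ∂P) * (∫ ω, Y n ω ^ (K - j) ∂P)
              ≤ (1 + a * (n : ℝ) ^ m) * M := by
            calc (∫ ω, T n ω ^ j ∂P) * (∫ ω, Y n ω ^ (K - j) ∂P)
                ≤ |(∫ ω, T n ω ^ j ∂P) * (∫ ω, Y n ω ^ (K - j) ∂P)| := le_abs_self _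
              _ = |∫ ω, T n ω ^ j ∂P| * |∫ ω, Y n ω ^ (K - j) ∂P| := abs_mul _ _
              _ ≤ (1 + a * (n : ℝ) ^ m) * M := by
                  have habs1 : (0:ℝ) ≤ |∫ ω, T n ω ^ j ∂P| := abs_nonneg _
                  have habs2 : (0:ℝ) ≤ |∫ ω, Y n ω ^ (K - j) ∂P| := abs_nonneg _
                  exact mul_le_mul h1 h2 habs2 (le_trans habs1 h1)
          have h5 : (1 + a * (n : ℝ) ^ m) * M ≤ M * (1 + a) * ((n : ℝ) + 1) ^ m := by
            have := mul_le_mul_of_nonneg_right h3 hM0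
            nlinarith
          calc (∫ ω, T n ω ^ j ∂P) * (∫ ω, Y n ω ^ (K - j) ∂P) * (K.choose j : ℝ)
              ≤ ((1 + a * (n : ℝ) ^ m) * M) * (K.choose j : ℝ) :=
                mul_le_mul_of_nonneg_right h4 (by positivity)
            _ ≤ (M * (1 + a) * ((n : ℝ) + 1) ^ m) * (K.choose j : ℝ) :=
                mul_le_mul_of_nonneg_right (by linarith) (by positivity)
            _ = (K.choose j : ℝ) * (M * (1 + a) * ((n : ℝ) + 1) ^ m) := by ring
        calc ∑ j ∈ Finset.range (2 * m + 1),
            (∫ ω, T n ω ^ j ∂P) * (∫ ω, Y n ω ^ (K - j) ∂P) * (K.choose j : ℝ)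
            ≤ ∑ j ∈ Finset.range (2 * m + 1),
              (K.choose j : ℝ) * (M * (1 + a) * ((n : ℝ) + 1) ^ m) :=
              Finset.sum_le_sum hterm
          _ = (∑ j ∈ Finset.range (2 * m + 1), (K.choose j : ℝ))
              * (M * (1 + a) * ((n : ℝ) + 1) ^ m) := by
              rw [Finset.sum_mul]
          _ ≤ (2 : ℝ) ^ K * (M * (1 + a) * ((n : ℝ) + 1) ^ m) := by
              refine mul_le_mul_of_nonneg_right ?_ (by positivity)
              have h1 : ∑ j ∈ Finset.range (2 * m + 1), (K.choose j) ≤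
                  ∑ j ∈ Finset.range (K + 1), (K.choose j) := by
                apply Finset.sum_le_sum_of_subset
                apply Finset.range_subset_range.mpr; omega
              have h2 : ∑ j ∈ Finset.range (K + 1), K.choose j = 2 ^ K :=
                Nat.sum_range_choose K
              calc (∑ j ∈ Finset.range (2 * m + 1), (K.choose j : ℝ))
                  = ((∑ j ∈ Finset.range (2 * m + 1), K.choose j : ℕ) : ℝ) := by push_cast; ring
                _ ≤ ((2 ^ K : ℕ) : ℝ) := by exact_mod_cast h1.trans (le_of_eq h2)
                _ = (2 : ℝ) ^ K := by push_cast; ring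
          _ = c * ((n : ℝ) + 1) ^ m := by rw [hcdef]; ring
      linarith
    -- conclude by induction on n
    refine ⟨c, hc0, ?_⟩
    have hmain : ∀ n : ℕ, ∫ ω, T n ω ^ K ∂P ≤ c * (n : ℝ) ^ (m + 1) := by
      intro n
      induction n with
      | zero =>
        have : ∀ ω, T 0 ω ^ K = 0 := by
          intro ω
          simp [hTdef, hKdef]
        simp [this]
      | succ n ihn =>
        have h1 := hstep n
        have h2 : (n : ℝ) ^ (m + 1) + ((n : ℝ) + 1) ^ m ≤ ((n : ℝ) + 1) ^ (m + 1) := by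
          have hp : (n : ℝ) ^ m ≤ ((n : ℝ) + 1) ^ m :=
            pow_le_pow_left₀ (by positivity) (by linarith [Nat.cast_nonneg (α := ℝ) n]) m
          have hn0 : (0:ℝ) ≤ (n : ℝ) := Nat.cast_nonneg n
          have : ((n : ℝ) + 1) ^ (m + 1) = ((n : ℝ) + 1) ^ m * (n : ℝ) + ((n : ℝ) + 1) ^ m := by
            ring
          rw [this, pow_succ]
          nlinarith
        have h3 : c * ((n : ℝ) ^ (m + 1) + ((n : ℝ) + 1) ^ m) ≤ c * ((n : ℝ) + 1) ^ (m + 1) :=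
          mul_le_mul_of_nonneg_left h2 hc0
        push_cast
        nlinarith
    intro n
    have := hmain n
    have hKeq : 2 * (m + 1) = K := by omega
    rw [hKeq]
    exact this

/-- **Theorem 4 (deviation probability of the modified ML estimator; Grünwald–de Rooij).**
Let `X_0, X_1, X_2, …` be i.i.d. real random variables, let `n₀ > 0` and `x₀` be constants,
define `μ̂_n := (n₀·x₀ + ∑_{i<n} X_i)/(n + n₀)` and `μ* := E[X]`.  Let `k` be an even
nonnegative integer.  If the first `k` moments of `X` exist, then for every `δ > 0`,
`P(|μ̂_n − μ*| ≥ δ) = O(n^{−⌈k/2⌉} δ^{−k})` as `n → ∞`, uniformly in `δ`.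
(Since `k` is even, `⌈k/2⌉ = k/2`.) -/
theorem mlEst_deviation_probability
    {Ω : Type} [MeasurableSpace Ω] (P : Measure Ω) [IsProbabilityMeasure P]
    (X : ℕ → Ω → ℝ) (hmeas : ∀ i, Measurable (X i))
    (hindep : iIndepFun X P)
    (hident : ∀ i, IdentDistrib (X i) (X 0) P P)
    (n0 : ℝ) (hn0 : 0 < n0) (x0 : ℝ)
    (k : ℕ) (hk : Even k)
    (hmom : ∀ j ≤ k, Integrable (fun ω => |X 0 ω| ^ j) P)
    (μstar : ℝ) (hμstar : μstar = ∫ ω, X 0 ω ∂P) :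
    ∃ C : ℝ, ∃ N : ℕ, ∀ n ≥ N, ∀ δ : ℝ, 0 < δ →
      (P {ω | δ ≤ |(n0 * x0 + ∑ i ∈ Finset.range n, X i ω) / ((n : ℝ) + n0) - μstar|}).toReal
        ≤ C * ((n : ℝ) ^ (k / 2 : ℕ))⁻¹ * (δ ^ k)⁻¹ := by
  -- trivial case k = 0
  rcases Nat.eq_zero_or_pos k with rfl | hkpos
  · refine ⟨1, 0, fun n _ δ hδ => ?_⟩
    have h1 : P {ω | δ ≤ |(n0 * x0 + ∑ i ∈ Finset.range n, X i ω) / ((n : ℝ) + n0) - μstar|}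
        ≤ 1 := prob_le_one
    have h2 := ENNReal.toReal_mono (by simp) h1
    simpa using h2
  -- now k ≥ 2, even
  obtain ⟨m, hmeq⟩ := hk
  have hke : Even k := ⟨m, hmeq⟩
  have hkm : k = 2 * m := by omega
  have hm1 : 1 ≤ m := by omega
  -- Memℒp of X 0
  have hX0mem : MemLp (X 0) (k : ℝ≥0∞) P := by
    have hknz : (k : ℝ≥0∞) ≠ 0 := by exact_mod_cast hkpos.ne'
    have hkt : (k : ℝ≥0∞) ≠ ∞ := by simp
    have := (memLp_norm_rpow_iff (μ := P) (q := (k : ℝ≥0∞)) (p := (k : ℝ≥0∞))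
      ((hmeas 0).aestronglyMeasurable (μ := P)) hknz hkt)
    rw [ENNReal.div_self hknz hkt] at this
    apply this.mp
    rw [memLp_one_iff_integrable]
    have : (fun x => ‖X 0 x‖ ^ ((k : ℝ≥0∞)).toReal) = fun x => |X 0 x| ^ k := by
      ext x
      rw [ENNReal.toReal_natCast, Real.rpow_natCast, Real.norm_eq_abs]
    rw [this]
    exact hmom k le_rfl
  -- center the variables
  set Y : ℕ → Ω → ℝ := fun i ω => X i ω - μstar with hYdef
  have hYmeas : ∀ i, Measurable (Y i) := fun i => (hmeas i).sub measurable_const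
  have hYindep : iIndepFun Y P := by
    have := hindep.comp (fun _ => fun x : ℝ => x - μstar)
      (fun _ => measurable_id.sub measurable_const)
    exact this
  have hYident : ∀ i, IdentDistrib (Y i) (Y 0) P P :=
    fun i => (hident i).comp (measurable_id.sub measurable_const)
  have hYmem : MemLp (Y 0) (k : ℝ≥0∞) P := hX0mem.sub (memLp_const μstar)
  have hX0int : Integrable (X 0) P := by
    have h1 := hmom 1 (by omega)
    simp only [pow_one] at h1
    exact h1.mono' (hmeas 0).aestronglyMeasurable
      (ae_of_all _ fun ω => le_of_eq (Real.norm_eq_abs _))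
  have hYzero : ∫ ω, Y 0 ω ∂P = 0 := by
    rw [hYdef]
    simp only
    rw [integral_sub hX0int (integrable_const μstar), integral_const]
    simp [hμstar]
  -- moment bound for the sums
  obtain ⟨a, ha0, hA⟩ := moment_sum_bound Y hYmeas hYindep hYident k hYmem hYzero m
    (le_of_eq hkm.symm)
  set c0 : ℝ := n0 * (x0 - μstar) with hc0def
  set C : ℝ := 2 ^ k * (a + |c0| ^ k) with hCdef
  have hC0 : 0 ≤ C := by positivity
  refine ⟨C, 1, fun n hn δ hδ => ?_⟩
  have hn1 : (1 : ℝ) ≤ (n : ℝ) := by exact_mod_cast hn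
  have hnn0 : (0 : ℝ) < (n : ℝ) + n0 := by linarith
  set T : Ω → ℝ := fun ω => ∑ i ∈ Finset.range n, Y i ω with hTdef
  set G : Ω → ℝ := fun ω => (((n : ℝ) + n0))⁻¹ * (T ω + c0) with hGdef
  -- the estimator deviation equals G
  have hGeq : ∀ ω, (n0 * x0 + ∑ i ∈ Finset.range n, X i ω) / ((n : ℝ) + n0) - μstar = G ω := by
    intro ω
    have hsum : ∑ i ∈ Finset.range n, X i ω = T ω + (n : ℝ) * μstar := by
      rw [hTdef]
      simp only [hYdef]
      rw [Finset.sum_sub_distrib]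
      simp [Finset.card_range]
    rw [hGdef]
    simp only
    rw [hsum]
    field_simp
    ring
  -- Memℒp and integrability of G^k
  have hTmem : MemLp T (k : ℝ≥0∞) P := by
    have hYm : ∀ i, MemLp (Y i) (k : ℝ≥0∞) P := fun i => ((hYident i).memLp_iff).mpr hYmem
    have := memLp_finset_sum' (μ := P) (p := (k : ℝ≥0∞)) (Finset.range n)
      (fun i (_ : i ∈ Finset.range n) => hYm i)
    convert this using 1
    ext ω
    simp [hTdef]
  have hGmem : MemLp G (k : ℝ≥0∞) P :=
    (hTmem.add (memLp_const c0)).const_mul _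
  have hGkint : Integrable (fun ω => G ω ^ k) P := aux_int_pow le_rfl hGmem
  have hTkint : Integrable (fun ω => T ω ^ k) P := aux_int_pow le_rfl hTmem
  -- Markov
  have hGnonneg : 0 ≤ᵐ[P] fun ω => G ω ^ k := by
    filter_upwards with ω
    exact hke.pow_nonneg _
  have hmarkov := mul_meas_ge_le_integral_of_nonneg hGnonneg hGkint (δ ^ k)
  have hsubset : {ω | δ ≤ |(n0 * x0 + ∑ i ∈ Finset.range n, X i ω) / ((n : ℝ) + n0) - μstar|}
      ⊆ {ω | δ ^ k ≤ G ω ^ k} := by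
    intro ω hω
    simp only [Set.mem_setOf_eq] at hω ⊢
    rw [hGeq ω] at hω
    calc δ ^ k ≤ |G ω| ^ k := pow_le_pow_left₀ hδ.le hω k
      _ = G ω ^ k := hke.pow_abs _
  -- bound the integral of G^k
  have hpt : ∀ ω, G ω ^ k = (T ω + c0) ^ k * ((((n : ℝ) + n0))⁻¹) ^ k := by
    intro ω; rw [hGdef]; rw [mul_pow]; ring
  have hintG : ∫ ω, G ω ^ k ∂P = (∫ ω, (T ω + c0) ^ k ∂P) * ((((n : ℝ) + n0))⁻¹) ^ k := by
    simp only [hpt]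
    rw [integral_mul_const]
  have hTc0int : Integrable (fun ω => (T ω + c0) ^ k) P :=
    aux_int_pow le_rfl (hTmem.add (memLp_const c0))
  have hint1 : ∫ ω, (T ω + c0) ^ k ∂P ≤ 2 ^ k * ((∫ ω, T ω ^ k ∂P) + |c0| ^ k) := by
    have hrhsint : Integrable (fun ω => 2 ^ k * (T ω ^ k + |c0| ^ k)) P :=
      ((hTkint.add (integrable_const _)).const_mul _)
    have hmono : ∀ ω, (T ω + c0) ^ k ≤ 2 ^ k * (T ω ^ k + |c0| ^ k) := by
      intro ω
      calc (T ω + c0) ^ k = |T ω + c0| ^ k := (hke.pow_abs _).symm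
        _ ≤ (|T ω| + |c0|) ^ k :=
            pow_le_pow_left₀ (abs_nonneg _) (abs_add_le _ _) k
        _ ≤ 2 ^ k * (|T ω| ^ k + |c0| ^ k) :=
            two_pow_bound _ _ (abs_nonneg _) (abs_nonneg _) k
        _ = 2 ^ k * (T ω ^ k + |c0| ^ k) := by rw [hke.pow_abs]
    calc ∫ ω, (T ω + c0) ^ k ∂P ≤ ∫ ω, 2 ^ k * (T ω ^ k + |c0| ^ k) ∂P :=
          integral_mono hTc0int hrhsint hmono
      _ = 2 ^ k * ((∫ ω, T ω ^ k ∂P) + |c0| ^ k) := by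
          rw [integral_const_mul, integral_add hTkint (integrable_const _), integral_const]
          simp
  have hTk : ∫ ω, T ω ^ k ∂P ≤ a * (n : ℝ) ^ m := by
    have := hA n
    rw [hkm]
    exact this
  have hnm1 : (1 : ℝ) ≤ (n : ℝ) ^ m := one_le_pow₀ hn1
  have hint2 : ∫ ω, (T ω + c0) ^ k ∂P ≤ C * (n : ℝ) ^ m := by
    have h1 : (∫ ω, T ω ^ k ∂P) + |c0| ^ k ≤ (a + |c0| ^ k) * (n : ℝ) ^ m := by
      have : |c0| ^ k ≤ |c0| ^ k * (n : ℝ) ^ m := le_mul_of_one_le_right (by positivity) hnm1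
      nlinarith
    calc ∫ ω, (T ω + c0) ^ k ∂P ≤ 2 ^ k * ((∫ ω, T ω ^ k ∂P) + |c0| ^ k) := hint1
      _ ≤ 2 ^ k * ((a + |c0| ^ k) * (n : ℝ) ^ m) := by
          apply mul_le_mul_of_nonneg_left h1 (by positivity)
      _ = C * (n : ℝ) ^ m := by rw [hCdef]; ring
  have hinv : ((((n : ℝ) + n0))⁻¹) ^ k ≤ (((n : ℝ) ^ k))⁻¹ := by
    rw [← inv_pow]
    apply pow_le_pow_left₀ (by positivity)
    apply inv_anti₀ (by linarith) (by linarith)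
  have hGint_bd : ∫ ω, G ω ^ k ∂P ≤ C * ((n : ℝ) ^ m)⁻¹ := by
    rw [hintG]
    have hTc0nonneg : 0 ≤ ∫ ω, (T ω + c0) ^ k ∂P :=
      integral_nonneg fun ω => hke.pow_nonneg _
    calc (∫ ω, (T ω + c0) ^ k ∂P) * ((((n : ℝ) + n0))⁻¹) ^ k
        ≤ (C * (n : ℝ) ^ m) * (((n : ℝ) ^ k))⁻¹ := by
          apply mul_le_mul hint2 hinv (by positivity)
          positivity
      _ = C * ((n : ℝ) ^ m)⁻¹ := by
          rw [hkm]
          have hnpos : (0 : ℝ) < (n : ℝ) := by linarith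
          field_simp
          ring
  -- put it together
  have hmeasfin : P {ω | δ ^ k ≤ G ω ^ k} ≠ ⊤ := measure_ne_top _ _
  have hev_le : (P {ω | δ ≤ |(n0 * x0 + ∑ i ∈ Finset.range n, X i ω) / ((n : ℝ) + n0) - μstar|}).toReal
      ≤ (P {ω | δ ^ k ≤ G ω ^ k}).toReal :=
    ENNReal.toReal_mono hmeasfin (measure_mono hsubset)
  have hδk : (0 : ℝ) < δ ^ k := by positivity
  have hfinal : (P {ω | δ ^ k ≤ G ω ^ k}).toReal ≤ (C * ((n : ℝ) ^ m)⁻¹) * (δ ^ k)⁻¹ := by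
    have hmarkov' : (P {ω | δ ^ k ≤ G ω ^ k}).toReal ≤ (∫ ω, G ω ^ k ∂P) / δ ^ k := by
      rw [le_div_iff₀' hδk]
      exact hmarkov
    calc (P {ω | δ ^ k ≤ G ω ^ k}).toReal ≤ (∫ ω, G ω ^ k ∂P) / δ ^ k := hmarkov'
      _ ≤ (C * ((n : ℝ) ^ m)⁻¹) / δ ^ k := by
          exact div_le_div_of_nonneg_right hGint_bd hδk.le
      _ = (C * ((n : ℝ) ^ m)⁻¹) * (δ ^ k)⁻¹ := div_eq_mul_inv _ _
  have hk2 : k / 2 = m := by omega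
  rw [hk2]
  calc (P _).toReal ≤ (P {ω | δ ^ k ≤ G ω ^ k}).toReal := hev_le
    _ ≤ (C * ((n : ℝ) ^ m)⁻¹) * (δ ^ k)⁻¹ := hfinal
    _ = C * ((n : ℝ) ^ m)⁻¹ * (δ ^ k)⁻¹ := by ring
end

section
/- Fix s ∈ {0, 2, 4} and let f(μ) be a continuous function of μ. Let X, X_1, X_2, … be i.i.d. ∼ P with mean μ*, let μ̂_i := (n_0·x_0 + Σ_{j=1}^i X_j)/(i + n_0) for constants x_0 and n_0 > 0. Suppose that for both T := X and T := −X: if T is unbounded from above then there exists an even k ≥ 4 such that the first k moments of T exist under P and f(μ) = O(μ^{k−s−2}); and if T is bounded from above by a constant g then f(μ) is polynomial in 1/(g − μ). Then E_P[f(μ) · (μ̂_i − μ*)^s], where μ is any (measurably chosen) point between μ* and μ̂_i, is of order O(i^{−s/2}) as i → ∞. -/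
open MeasureTheory Filter Real Asymptotics ProbabilityTheory


lemma aux_pow_le {a : ℝ} (ha : 0 ≤ a) {s t m : ℕ} (hst : s ≤ t) (htm : t ≤ m) :
    a ^ t ≤ a ^ s + a ^ m := by
  rcases le_total a 1 with h | h
  · exact (pow_le_pow_of_le_one ha h hst).trans
      (le_add_of_nonneg_right (pow_nonneg ha m))
  · exact (pow_le_pow_right₀ h htm).trans (le_add_of_nonneg_left (pow_nonneg ha s))

lemma aux_two_pow {a b : ℝ} (ha : 0 ≤ a) (hb : 0 ≤ b) (e : ℕ) :
    (a + b) ^ e ≤ 2 ^ e * (a ^ e + b ^ e) := by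
  have h1 : a + b ≤ 2 * max a b := by
    rcases le_total a b with h | h
    · rw [max_eq_right h]; linarith
    · rw [max_eq_left h]; linarith
  have h2 : (max a b) ^ e ≤ a ^ e + b ^ e := by
    rcases le_total a b with h | h
    · rw [max_eq_right h]; exact le_add_of_nonneg_left (pow_nonneg ha e)
    · rw [max_eq_left h]; exact le_add_of_nonneg_right (pow_nonneg hb e)
  calc (a + b) ^ e ≤ (2 * max a b) ^ e :=
        pow_le_pow_left₀ (by positivity) h1 e
    _ = 2 ^ e * (max a b) ^ e := mul_pow _ _ _
    _ ≤ 2 ^ e * (a ^ e + b ^ e) := by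
        have : (0:ℝ) ≤ 2 ^ e := by positivity
        nlinarith [h2]

lemma aux_compact (F : ℝ → ℝ) (hF : Continuous F) (a b : ℝ) :
    ∃ M : ℝ, 0 ≤ M ∧ ∀ x ∈ Set.Icc a b, |F x| ≤ M := by
  obtain ⟨C, hC⟩ := (isCompact_Icc (a := a) (b := b)).exists_bound_of_continuousOn
    hF.continuousOn
  exact ⟨max C 0, le_max_right _ _, fun x hx => (hC x hx).trans (le_max_left _ _)⟩

lemma aux_count (i t : ℕ) (hti : t / 2 ≤ i)
    [inst : DecidablePred fun (k : ℕ → ℕ) => ∀ a, k a ≠ 1] :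
    ((Finset.piAntidiag (Finset.range i) t).filter (fun k => ∀ a, k a ≠ 1)).card
      ≤ i ^ (t / 2) * (t + 1) ^ (t / 2) := by
  classical
  set r := t / 2 with hr
  have hcardpi : ∀ S : Finset ℕ, (Finset.piAntidiag S t).card ≤ (t + 1) ^ S.card := by
    intro S
    have : (Finset.piAntidiag S t).card
        ≤ (Fintype.piFinset (fun _ : {x // x ∈ S} => Finset.range (t + 1))).card := by
      refine Finset.card_le_card_of_injOn
        (fun (k : ℕ → ℕ) (j : {x // x ∈ S}) => k j.1) ?_ ?_
      · intro k hk
        rw [Finset.mem_coe, Finset.mem_piAntidiag] at hk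
        rw [Finset.mem_coe, Fintype.mem_piFinset]
        intro j
        show k j.1 ∈ Finset.range (t + 1)
        rw [Finset.mem_range, Nat.lt_succ_iff, ← hk.1]
        exact Finset.single_le_sum (f := k) (fun _ _ => Nat.zero_le _) j.2
      · intro k1 h1 k2 h2 heq
        simp only [Finset.mem_coe, Finset.mem_piAntidiag] at h1 h2
        funext j
        by_cases hj : j ∈ S
        · exact congrFun heq ⟨j, hj⟩
        · have e1 : k1 j = 0 := by by_contra h; exact hj (h1.2 j h)
          have e2 : k2 j = 0 := by by_contra h; exact hj (h2.2 j h)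
          rw [e1, e2]
    calc (Finset.piAntidiag S t).card
        ≤ (Fintype.piFinset (fun _ : {x // x ∈ S} => Finset.range (t + 1))).card := this
      _ = (t + 1) ^ S.card := by
          rw [Fintype.card_piFinset]
          simp [Finset.card_range, Finset.prod_const, Fintype.card_coe]
  have hsub : (Finset.piAntidiag (Finset.range i) t).filter (fun k => ∀ a, k a ≠ 1)
      ⊆ (Finset.powersetCard r (Finset.range i)).biUnion
          (fun S => Finset.piAntidiag S t) := by
    intro k hk
    rw [Finset.mem_filter, Finset.mem_piAntidiag] at hk
    obtain ⟨⟨hsum, hsupp⟩, hone⟩ := hk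
    set supp := (Finset.range i).filter (fun j => k j ≠ 0) with hsuppdef
    have hsupple : supp.card ≤ r := by
      have h2 : supp.card * 2 ≤ ∑ j ∈ supp, k j := by
        rw [Finset.card_eq_sum_ones, Finset.sum_mul, one_mul]
        refine Finset.sum_le_sum ?_
        intro j hj
        rw [hsuppdef, Finset.mem_filter] at hj
        have h1 := hone j
        have h2 := hj.2
        omega
      have h3 : ∑ j ∈ supp, k j ≤ t := by
        rw [← hsum]
        exact Finset.sum_le_sum_of_subset (Finset.filter_subset _ _)
      rw [hr, Nat.le_div_iff_mul_le (by norm_num)]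
      omega
    obtain ⟨S, hsS, hSr, hScard⟩ := Finset.exists_subsuperset_card_eq
      (Finset.filter_subset (fun j => k j ≠ 0) (Finset.range i)) hsupple
      (by rwa [Finset.card_range])
    rw [Finset.mem_biUnion]
    refine ⟨S, Finset.mem_powersetCard.2 ⟨hSr, hScard⟩, ?_⟩
    rw [Finset.mem_piAntidiag]
    constructor
    · rw [← hsum]
      refine Finset.sum_subset hSr ?_
      intro x hx hxS
      by_contra h
      exact hxS (hsS (Finset.mem_filter.2 ⟨hx, h⟩))
    · intro a ha
      exact hsS (Finset.mem_filter.2 ⟨hsupp a ha, ha⟩)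
  calc ((Finset.piAntidiag (Finset.range i) t).filter (fun k => ∀ a, k a ≠ 1)).card
      ≤ ((Finset.powersetCard r (Finset.range i)).biUnion
          (fun S => Finset.piAntidiag S t)).card := Finset.card_le_card hsub
    _ ≤ ∑ S ∈ Finset.powersetCard r (Finset.range i), (Finset.piAntidiag S t).card :=
        Finset.card_biUnion_le
    _ ≤ ∑ S ∈ Finset.powersetCard r (Finset.range i), (t + 1) ^ r := by
        refine Finset.sum_le_sum ?_
        intro S hS
        have := (Finset.mem_powersetCard.1 hS).2
        calc (Finset.piAntidiag S t).card ≤ (t + 1) ^ S.card := hcardpi S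
          _ = (t + 1) ^ r := by rw [this]
    _ = (Finset.powersetCard r (Finset.range i)).card * (t + 1) ^ r := by
        rw [Finset.sum_const, smul_eq_mul]
    _ ≤ i ^ r * (t + 1) ^ r := by
        apply Nat.mul_le_mul_right
        rw [Finset.card_powersetCard, Finset.card_range]
        exact Nat.choose_le_pow i r

private theorem key_moment
    {Ω : Type} [MeasurableSpace Ω] (P : Measure Ω) [IsProbabilityMeasure P]
    (X : ℕ → Ω → ℝ) (hmeas : ∀ i, Measurable (X i))
    (hindep : iIndepFun X P)
    (hident : ∀ i, IdentDistrib (X i) (X 0) P P)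
    (hXint : Integrable (X 0) P)
    (μstar : ℝ) (hμstar : μstar = ∫ ω, X 0 ω ∂P)
    (n0 : ℝ) (hn0 : 0 < n0) (x0 : ℝ)
    (m : ℕ) (hm : Even m)
    (hmom : ∀ j ≤ m, Integrable (fun ω => |X 0 ω| ^ j) P) :
    ∃ D : ℝ, 0 ≤ D ∧ ∀ i : ℕ, m ≤ i → 1 ≤ i →
      Integrable (fun ω =>
        ((n0 * x0 + ∑ j ∈ Finset.range i, X j ω) / ((i : ℝ) + n0) - μstar) ^ m) P ∧
      ∫ ω, ((n0 * x0 + ∑ j ∈ Finset.range i, X j ω) / ((i : ℝ) + n0) - μstar) ^ m ∂P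
        ≤ D * (((i : ℝ) ^ (m / 2 : ℕ))⁻¹) := by
  classical
  -- centered absolute moments
  have hcabs : ∀ c, c ≤ m → Integrable (fun ω => |X 0 ω - μstar| ^ c) P := by
    intro c hc
    have hmeas0 : Measurable fun ω => |X 0 ω - μstar| ^ c :=
      ((hmeas 0).sub_const μstar).abs.pow_const c
    refine Integrable.mono' (g := fun ω => ∑ tt ∈ Finset.range (c + 1),
        |X 0 ω| ^ tt * |μstar| ^ (c - tt) * (c.choose tt : ℝ)) ?_
        hmeas0.aestronglyMeasurable ?_
    · refine integrable_finset_sum _ ?_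
      intro tt htt
      have h1 : tt ≤ m := le_trans (Nat.lt_succ_iff.1 (Finset.mem_range.1 htt)) hc
      exact ((hmom tt h1).mul_const _).mul_const _
    · refine Filter.Eventually.of_forall (fun ω => ?_)
      rw [Real.norm_eq_abs, abs_of_nonneg (by positivity)]
      have h1 : |X 0 ω - μstar| ≤ |X 0 ω| + |μstar| := by
        rw [sub_eq_add_neg]
        exact (abs_add_le _ _).trans (by rw [abs_neg])
      calc |X 0 ω - μstar| ^ c ≤ (|X 0 ω| + |μstar|) ^ c :=
            pow_le_pow_left₀ (abs_nonneg _) h1 c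
        _ = _ := add_pow _ _ c
  have hcent : ∀ c, c ≤ m → Integrable (fun ω => (X 0 ω - μstar) ^ c) P := by
    intro c hc
    refine Integrable.mono' (hcabs c hc)
      (((hmeas 0).sub_const μstar).pow_const c).aestronglyMeasurable ?_
    exact Filter.Eventually.of_forall fun ω => by
      rw [Real.norm_eq_abs, abs_pow]
  -- identical distribution transfer
  have hId : ∀ (jj c : ℕ), IdentDistrib (fun ω => (X jj ω - μstar) ^ c)
      (fun ω => (X 0 ω - μstar) ^ c) P P := fun jj c =>
    (hident jj).comp ((measurable_id.sub_const μstar).pow_const c)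
  have hWint : ∀ jj c, c ≤ m → Integrable (fun ω => (X jj ω - μstar) ^ c) P :=
    fun jj c hc => (hId jj c).integrable_iff.2 (hcent c hc)
  have hWval : ∀ jj c, ∫ ω, (X jj ω - μstar) ^ c ∂P = ∫ ω, (X 0 ω - μstar) ^ c ∂P :=
    fun jj c => (hId jj c).integral_eq
  have hzero : ∫ ω, (X 0 ω - μstar) ^ 1 ∂P = 0 := by
    simp only [pow_one]
    rw [integral_sub hXint (integrable_const _), integral_const]
    simp only [probReal_univ, one_smul]
    rw [hμstar]; ring
  -- the bound B on centered moments
  set B : ℝ := 1 + ∑ c ∈ Finset.range (m + 1), ∫ ω, |X 0 ω - μstar| ^ c ∂P with hB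
  have hsumnn : 0 ≤ ∑ c ∈ Finset.range (m + 1), ∫ ω, |X 0 ω - μstar| ^ c ∂P :=
    Finset.sum_nonneg fun c _ => integral_nonneg fun ω => by positivity
  have hB1 : 1 ≤ B := by rw [hB]; linarith
  have hB0 : 0 ≤ B := le_trans zero_le_one hB1
  have hBc : ∀ c, c ≤ m → |∫ ω, (X 0 ω - μstar) ^ c ∂P| ≤ B := by
    intro c hc
    have h1 : |∫ ω, (X 0 ω - μstar) ^ c ∂P| ≤ ∫ ω, |X 0 ω - μstar| ^ c ∂P := by
      have h2 := norm_integral_le_integral_norm (μ := P) (f := fun ω => (X 0 ω - μstar) ^ c)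
      simpa [Real.norm_eq_abs, abs_pow] using h2
    have h3 : ∫ ω, |X 0 ω - μstar| ^ c ∂P
        ≤ ∑ c' ∈ Finset.range (m + 1), ∫ ω, |X 0 ω - μstar| ^ c' ∂P :=
      Finset.single_le_sum (f := fun c' => ∫ ω, |X 0 ω - μstar| ^ c' ∂P)
        (fun c' _ => integral_nonneg fun ω => by positivity)
        (Finset.mem_range.2 (Nat.lt_succ_of_le hc))
    rw [hB]; linarith
  -- product over independent factors
  have hWmeas : ∀ (k : ℕ → ℕ) (j : ℕ), Measurable fun ω => (X j ω - μstar) ^ k j :=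
    fun k j => ((hmeas j).sub_const μstar).pow_const _
  have hWindep : ∀ k : ℕ → ℕ, iIndepFun
      (fun j ω => (X j ω - μstar) ^ k j) P :=
    fun k => hindep.comp (fun j x => (x - μstar) ^ k j)
      (fun j => (measurable_id.sub_const μstar).pow_const _)
  have hprodW : ∀ (k : ℕ → ℕ), (∀ j, k j ≤ m) → ∀ S : Finset ℕ,
      Integrable (fun ω => ∏ j ∈ S, (X j ω - μstar) ^ k j) P ∧
      ∫ ω, ∏ j ∈ S, (X j ω - μstar) ^ k j ∂P
        = ∏ j ∈ S, ∫ ω, (X j ω - μstar) ^ k j ∂P := by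
    intro k hk S
    induction S using Finset.cons_induction with
    | empty => simp
    | cons a s ha ih =>
      have hInd : IndepFun (fun ω => ∏ j ∈ s, (X j ω - μstar) ^ k j)
          (fun ω => (X a ω - μstar) ^ k a) P := by
        have h := (hWindep k).indepFun_finsetProd_of_notMem
          (fun j => hWmeas k j) ha
        have heq : (∏ j ∈ s, fun ω => (X j ω - μstar) ^ k j)
            = fun ω => ∏ j ∈ s, (X j ω - μstar) ^ k j := by
          funext ω; simp
        rwa [heq] at h
      have h2 : (fun ω => ∏ j ∈ Finset.cons a s ha, (X j ω - μstar) ^ k j)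
          = (fun ω => (X a ω - μstar) ^ k a)
            * (fun ω => ∏ j ∈ s, (X j ω - μstar) ^ k j) := by
        funext ω; rw [Finset.prod_cons]; rfl
      constructor
      · rw [h2]
        exact hInd.symm.integrable_mul (hWint a (k a) (hk a)) ih.1
      · rw [h2, hInd.symm.integral_mul_eq_mul_integral (hWint a (k a) (hk a)).aestronglyMeasurable
          ih.1.aestronglyMeasurable,
          Finset.prod_cons, ih.2]
  -- core bound on powers of the centered sum
  have hcore : ∀ t, t ≤ m → ∀ i : ℕ, t / 2 ≤ i →
      Integrable (fun ω => (∑ j ∈ Finset.range i, (X j ω - μstar)) ^ t) P ∧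
      |∫ ω, (∑ j ∈ Finset.range i, (X j ω - μstar)) ^ t ∂P|
        ≤ (((t : ℝ) + 1) ^ (t / 2) * (t.factorial : ℝ) * B ^ t) * (i : ℝ) ^ (t / 2) := by
    intro t ht i hti
    have hexp : (fun ω => (∑ j ∈ Finset.range i, (X j ω - μstar)) ^ t)
        = fun ω => ∑ k ∈ Finset.piAntidiag (Finset.range i) t,
            (Nat.multinomial (Finset.range i) k : ℝ)
              * ∏ j ∈ Finset.range i, (X j ω - μstar) ^ k j := by
      funext ω
      exact Finset.sum_pow_eq_sum_piAntidiag (Finset.range i) (fun j => X j ω - μstar) t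
    have hkle : ∀ k ∈ Finset.piAntidiag (Finset.range i) t, ∀ j, k j ≤ m := by
      intro k hkmem j
      rw [Finset.mem_piAntidiag] at hkmem
      by_cases h0 : k j = 0
      · omega
      · have hj : j ∈ Finset.range i := hkmem.2 j h0
        have : k j ≤ t := by
          rw [← hkmem.1]
          exact Finset.single_le_sum (f := k) (fun _ _ => Nat.zero_le _) hj
        omega
    have hSint : Integrable
        (fun ω => (∑ j ∈ Finset.range i, (X j ω - μstar)) ^ t) P := by
      rw [hexp]
      exact integrable_finset_sum _
        (fun k hkmem => ((hprodW k (hkle k hkmem) _).1.const_mul _))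
    refine ⟨hSint, ?_⟩
    have hval : ∫ ω, (∑ j ∈ Finset.range i, (X j ω - μstar)) ^ t ∂P
        = ∑ k ∈ Finset.piAntidiag (Finset.range i) t,
            (Nat.multinomial (Finset.range i) k : ℝ)
              * ∏ j ∈ Finset.range i, ∫ ω, (X j ω - μstar) ^ k j ∂P := by
      rw [hexp, integral_finset_sum _
        (fun k hkmem => ((hprodW k (hkle k hkmem) _).1.const_mul _))]
      refine Finset.sum_congr rfl fun k hkmem => ?_
      rw [integral_const_mul, (hprodW k (hkle k hkmem) _).2]
    rw [hval]
    -- drop the vanishing terms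
    have hdrop : ∑ k ∈ Finset.piAntidiag (Finset.range i) t,
          (Nat.multinomial (Finset.range i) k : ℝ)
            * ∏ j ∈ Finset.range i, ∫ ω, (X j ω - μstar) ^ k j ∂P
        = ∑ k ∈ (Finset.piAntidiag (Finset.range i) t).filter (fun k => ∀ a, k a ≠ 1),
            (Nat.multinomial (Finset.range i) k : ℝ)
              * ∏ j ∈ Finset.range i, ∫ ω, (X j ω - μstar) ^ k j ∂P := by
      refine (Finset.sum_filter_of_ne ?_).symm
      intro k hkmem hne a
      by_contra hka
      apply hne
      have hamem : a ∈ Finset.range i := by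
        rw [Finset.mem_piAntidiag] at hkmem
        exact hkmem.2 a (by rw [hka]; exact one_ne_zero)
      have : ∏ j ∈ Finset.range i, ∫ ω, (X j ω - μstar) ^ k j ∂P = 0 :=
        Finset.prod_eq_zero hamem (by rw [hka, hWval a 1, hzero])
      rw [this, mul_zero]
    rw [hdrop]
    -- bound each remaining term
    have hterm : ∀ k ∈ (Finset.piAntidiag (Finset.range i) t).filter
          (fun k => ∀ a, k a ≠ 1),
        |(Nat.multinomial (Finset.range i) k : ℝ)
            * ∏ j ∈ Finset.range i, ∫ ω, (X j ω - μstar) ^ k j ∂P|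
          ≤ (t.factorial : ℝ) * B ^ t := by
      intro k hkmem
      have hkpi := (Finset.mem_filter.1 hkmem).1
      have hsum : ∑ j ∈ Finset.range i, k j = t := (Finset.mem_piAntidiag.1 hkpi).1
      have hmult : (Nat.multinomial (Finset.range i) k : ℝ) ≤ (t.factorial : ℝ) := by
        have hspec := Nat.multinomial_spec (Finset.range i) k
        rw [hsum] at hspec
        have h1 : Nat.multinomial (Finset.range i) k ≤ t.factorial := by
          calc Nat.multinomial (Finset.range i) k
              ≤ (∏ j ∈ Finset.range i, (k j).factorial)
                  * Nat.multinomial (Finset.range i) k :=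
                Nat.le_mul_of_pos_left _
                  (Finset.prod_pos fun j _ => Nat.factorial_pos _)
            _ = t.factorial := hspec
        exact_mod_cast h1
      rw [abs_mul, Nat.abs_cast, Finset.abs_prod]
      have hprodle : ∏ j ∈ Finset.range i, |∫ ω, (X j ω - μstar) ^ k j ∂P| ≤ B ^ t := by
        have hrw : ∏ j ∈ Finset.range i, |∫ ω, (X j ω - μstar) ^ k j ∂P|
            = ∏ j ∈ (Finset.range i).filter (fun j => k j ≠ 0),
                |∫ ω, (X j ω - μstar) ^ k j ∂P| := by
          refine (Finset.prod_filter_of_ne ?_).symm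
          intro j _ hne
          by_contra h0
          apply hne
          rw [h0]
          simp
        rw [hrw]
        have hcard : ((Finset.range i).filter (fun j => k j ≠ 0)).card ≤ t := by
          calc ((Finset.range i).filter (fun j => k j ≠ 0)).card
              = ∑ j ∈ (Finset.range i).filter (fun j => k j ≠ 0), 1 := by
                rw [Finset.card_eq_sum_ones]
            _ ≤ ∑ j ∈ (Finset.range i).filter (fun j => k j ≠ 0), k j := by
                refine Finset.sum_le_sum fun j hj => ?_
                have := (Finset.mem_filter.1 hj).2
                omega
            _ ≤ ∑ j ∈ Finset.range i, k j :=
                Finset.sum_le_sum_of_subset (Finset.filter_subset _ _)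
            _ = t := hsum
        calc (∏ j ∈ (Finset.range i).filter (fun j => k j ≠ 0),
              |∫ ω, (X j ω - μstar) ^ k j ∂P|)
            ≤ ∏ _j ∈ (Finset.range i).filter (fun j => k j ≠ 0), B := by
              refine Finset.prod_le_prod (fun j _ => abs_nonneg _) fun j hj => ?_
              rw [hWval j (k j)]
              exact hBc (k j) (hkle k hkpi j)
          _ = B ^ ((Finset.range i).filter (fun j => k j ≠ 0)).card :=
              Finset.prod_const B
          _ ≤ B ^ t := pow_le_pow_right₀ hB1 hcard
      exact mul_le_mul hmult hprodle
        (Finset.prod_nonneg fun j _ => abs_nonneg _) (by positivity)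
    refine le_trans (Finset.abs_sum_le_sum_abs _ _)
      (le_trans (Finset.sum_le_sum hterm) ?_)
    rw [Finset.sum_const, nsmul_eq_mul]
    calc (((Finset.piAntidiag (Finset.range i) t).filter
            (fun k => ∀ a, k a ≠ 1)).card : ℝ) * ((t.factorial : ℝ) * B ^ t)
        ≤ ((i ^ (t / 2) * (t + 1) ^ (t / 2) : ℕ) : ℝ) * ((t.factorial : ℝ) * B ^ t) := by
          refine mul_le_mul_of_nonneg_right ?_ (by positivity)
          exact_mod_cast aux_count i t hti
      _ = (((t : ℝ) + 1) ^ (t / 2) * (t.factorial : ℝ) * B ^ t) * (i : ℝ) ^ (t / 2) := by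
          push_cast
          ring
  -- assembly
  set a : ℝ := n0 * (x0 - μstar) with hadef
  set Ct : ℕ → ℝ := fun t => ((t : ℝ) + 1) ^ (t / 2) * (t.factorial : ℝ) * B ^ t with hCt
  have hCtnn : ∀ t, 0 ≤ Ct t := fun t => by
    rw [hCt]
    have := hB0
    positivity
  set D0 : ℝ := ∑ tt ∈ Finset.range (m + 1),
      (m.choose tt : ℝ) * |a| ^ tt * Ct (m - tt) with hD0
  have hD0nn : 0 ≤ D0 :=
    Finset.sum_nonneg fun tt _ =>
      mul_nonneg (mul_nonneg (by positivity) (by positivity)) (hCtnn _)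
  refine ⟨D0, hD0nn, ?_⟩
  intro i him hi1
  have hipos : (0:ℝ) < (i:ℝ) := by exact_mod_cast hi1
  have hione : (1:ℝ) ≤ (i:ℝ) := by exact_mod_cast hi1
  have hino : (0:ℝ) < (i:ℝ) + n0 := by positivity
  have hdiv2 : ∀ tt : ℕ, (m - tt) / 2 ≤ i :=
    fun tt => le_trans (le_trans (Nat.div_le_self _ 2) (Nat.sub_le m tt)) him
  have hsub : ∀ ω : Ω, ∑ j ∈ Finset.range i, (X j ω - μstar)
      = (∑ j ∈ Finset.range i, X j ω) - (i:ℝ) * μstar := by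
    intro ω
    rw [Finset.sum_sub_distrib, Finset.sum_const, Finset.card_range, nsmul_eq_mul]
  have hptm : (fun ω => ((n0 * x0 + ∑ j ∈ Finset.range i, X j ω) / ((i : ℝ) + n0)
        - μstar) ^ m)
      = fun ω => (a + ∑ j ∈ Finset.range i, (X j ω - μstar)) ^ m
          * ((((i:ℝ) + n0) ^ m)⁻¹) := by
    funext ω
    have h1 : (n0 * x0 + ∑ j ∈ Finset.range i, X j ω) / ((i : ℝ) + n0) - μstar
        = (a + ∑ j ∈ Finset.range i, (X j ω - μstar)) / ((i:ℝ) + n0) := by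
      rw [hsub ω, hadef]
      field_simp
      ring
    rw [h1, div_pow, div_eq_mul_inv]
  have hexp2 : (fun ω => (a + ∑ j ∈ Finset.range i, (X j ω - μstar)) ^ m)
      = fun ω => ∑ tt ∈ Finset.range (m + 1),
          (a ^ tt * (m.choose tt : ℝ))
            * (∑ j ∈ Finset.range i, (X j ω - μstar)) ^ (m - tt) := by
    funext ω
    rw [add_pow]
    exact Finset.sum_congr rfl fun tt _ => by ring
  have haSint : Integrable
      (fun ω => (a + ∑ j ∈ Finset.range i, (X j ω - μstar)) ^ m) P := by
    rw [hexp2]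
    exact integrable_finset_sum _ fun tt _ =>
      ((hcore (m - tt) (Nat.sub_le m tt) i (hdiv2 tt)).1.const_mul _)
  have hint1 : Integrable (fun ω =>
      ((n0 * x0 + ∑ j ∈ Finset.range i, X j ω) / ((i : ℝ) + n0) - μstar) ^ m) P := by
    rw [hptm]
    exact haSint.mul_const _
  refine ⟨hint1, ?_⟩
  have hval2 : ∫ ω, (a + ∑ j ∈ Finset.range i, (X j ω - μstar)) ^ m ∂P
      = ∑ tt ∈ Finset.range (m + 1), (a ^ tt * (m.choose tt : ℝ))
          * ∫ ω, (∑ j ∈ Finset.range i, (X j ω - μstar)) ^ (m - tt) ∂P := by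
    rw [hexp2, integral_finset_sum _ (fun tt _ =>
      ((hcore (m - tt) (Nat.sub_le m tt) i (hdiv2 tt)).1.const_mul _))]
    exact Finset.sum_congr rfl fun tt _ => integral_const_mul _ _
  have habs : |∫ ω, (a + ∑ j ∈ Finset.range i, (X j ω - μstar)) ^ m ∂P|
      ≤ D0 * (i:ℝ) ^ (m / 2) := by
    rw [hval2]
    refine le_trans (Finset.abs_sum_le_sum_abs _ _) ?_
    rw [hD0, Finset.sum_mul]
    refine Finset.sum_le_sum fun tt _ => ?_
    have h1 := (hcore (m - tt) (Nat.sub_le m tt) i (hdiv2 tt)).2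
    have h2 : ((i:ℝ)) ^ ((m - tt) / 2) ≤ (i:ℝ) ^ (m / 2) :=
      pow_le_pow_right₀ hione
        (le_trans (Nat.div_le_div_right (Nat.sub_le m tt)) (le_refl _))
    have h3 : |∫ ω, (∑ j ∈ Finset.range i, (X j ω - μstar)) ^ (m - tt) ∂P|
        ≤ Ct (m - tt) * (i:ℝ) ^ (m / 2) := by
      refine le_trans h1 ?_
      rw [hCt]
      exact mul_le_mul_of_nonneg_left h2 (by positivity)
    calc |(a ^ tt * (m.choose tt : ℝ))
          * ∫ ω, (∑ j ∈ Finset.range i, (X j ω - μstar)) ^ (m - tt) ∂P|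
        = (|a| ^ tt * (m.choose tt : ℝ))
            * |∫ ω, (∑ j ∈ Finset.range i, (X j ω - μstar)) ^ (m - tt) ∂P| := by
          rw [abs_mul, abs_mul, abs_pow, Nat.abs_cast]
      _ ≤ (|a| ^ tt * (m.choose tt : ℝ)) * (Ct (m - tt) * (i:ℝ) ^ (m / 2)) := by
          refine mul_le_mul_of_nonneg_left h3 (by positivity)
      _ = (m.choose tt : ℝ) * |a| ^ tt * Ct (m - tt) * (i:ℝ) ^ (m / 2) := by ring
  have hfin : ∫ ω, ((n0 * x0 + ∑ j ∈ Finset.range i, X j ω) / ((i : ℝ) + n0)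
        - μstar) ^ m ∂P
      = (∫ ω, (a + ∑ j ∈ Finset.range i, (X j ω - μstar)) ^ m ∂P)
          * ((((i:ℝ) + n0) ^ m)⁻¹) := by
    rw [hptm, integral_mul_const]
  rw [hfin]
  have h4 : ((((i:ℝ) + n0) ^ m))⁻¹ ≤ (((i:ℝ) ^ m))⁻¹ := by
    refine inv_anti₀ (by positivity) ?_
    exact pow_le_pow_left₀ (le_of_lt hipos) (by linarith) m
  have h5 : (0:ℝ) < ((i:ℝ) + n0) ^ m := by positivity
  calc (∫ ω, (a + ∑ j ∈ Finset.range i, (X j ω - μstar)) ^ m ∂P)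
        * ((((i:ℝ) + n0) ^ m)⁻¹)
      ≤ |∫ ω, (a + ∑ j ∈ Finset.range i, (X j ω - μstar)) ^ m ∂P|
        * ((((i:ℝ) + n0) ^ m)⁻¹) :=
        mul_le_mul_of_nonneg_right (le_abs_self _) (by positivity)
    _ ≤ (D0 * (i:ℝ) ^ (m / 2)) * (((i:ℝ) ^ m))⁻¹ :=
        mul_le_mul habs h4 (by positivity) (by positivity)
    _ = D0 * (((i:ℝ) ^ (m / 2))⁻¹) := by
        have hm2 : m / 2 + m / 2 = m := by
          obtain ⟨r, hr⟩ := hm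
          omega
        have hpow : (i:ℝ) ^ m = (i:ℝ) ^ (m / 2) * (i:ℝ) ^ (m / 2) := by
          rw [← pow_add, hm2]
        rw [hpow]
        have hne : (i:ℝ) ^ (m / 2) ≠ 0 := by positivity
        field_simp



/-- The growth/moment condition of Lemma 4 (the bounding lemma) for one of the two signs
`T := X` or `T := −X`.  Here `fT` is the function `f`, reflected (composed with negation)
in the case `T := −X`.  If `T` is unbounded from above then there is an even `k ≥ 4` such
that the first `k` moments of `T` exist and `fT(μ) = O(μ^{k−s−2})`; if `T` is bounded from
above by a constant `g` then `fT` is polynomial in `1/(g−μ)`. -/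
def SideCond {Ω : Type} [MeasurableSpace Ω] (P : Measure Ω) (T : Ω → ℝ)
    (fT : ℝ → ℝ) (s : ℕ) : Prop :=
  ((¬ ∃ g : ℝ, ∀ᵐ ω ∂P, T ω ≤ g) →
    ∃ k : ℕ, 4 ≤ k ∧ Even k ∧
      (∀ j ≤ k, Integrable (fun ω => |T ω| ^ j) P) ∧
      fT =O[atTop] (fun μ : ℝ => μ ^ ((k : ℤ) - (s : ℤ) - 2))) ∧
  ((∃ g : ℝ, ∀ᵐ ω ∂P, T ω ≤ g) →
    ∃ g : ℝ, (∀ᵐ ω ∂P, T ω ≤ g) ∧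
      ∃ p : Polynomial ℝ, ∀ μ < g, fT μ = Polynomial.eval (1 / (g - μ)) p)

set_option maxHeartbeats 1000000 in
/-- **Lemma 4 (the bounding lemma; Grünwald–Kotłowski).**  Fix `s ∈ {0, 2, 4}` and a
continuous `f`.  Let `X_0, X_1, …` be i.i.d. `∼ P` with mean `μ*`, and let
`μ̂_i := (n₀·x₀ + ∑_{j<i} X_j)/(i + n₀)`.  Under the growth/moment condition for both
`T := X` and `T := −X`, the quantity `E_P[f(μ)·(μ̂_i − μ*)^s]`, where `μ` is any
measurably chosen point between `μ*` and `μ̂_i`, is of order `O(i^{−s/2})` as `i → ∞`,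
uniformly over all such measurable choices of `μ`. -/
theorem lemma_bounding
    {Ω : Type} [MeasurableSpace Ω] (P : Measure Ω) [IsProbabilityMeasure P]
    (X : ℕ → Ω → ℝ) (hmeas : ∀ i, Measurable (X i))
    (hindep : iIndepFun X P)
    (hident : ∀ i, IdentDistrib (X i) (X 0) P P)
    (hXint : Integrable (X 0) P)
    (μstar : ℝ) (hμstar : μstar = ∫ ω, X 0 ω ∂P)
    (n0 : ℝ) (hn0 : 0 < n0) (x0 : ℝ)
    (s : ℕ) (hs : s = 0 ∨ s = 2 ∨ s = 4)
    (f : ℝ → ℝ) (hf : Continuous f)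
    (hcondX : SideCond P (X 0) f s)
    (hcondnegX : SideCond P (fun ω => -(X 0 ω)) (fun μ => f (-μ)) s) :
    ∃ C : ℝ, ∃ N : ℕ,
      ∀ ξ : ℕ → Ω → ℝ, (∀ i, Measurable (ξ i)) →
        (∀ i ω, ξ i ω ∈
          Set.uIcc μstar ((n0 * x0 + ∑ j ∈ Finset.range i, X j ω) / ((i : ℝ) + n0))) →
        ∀ i ≥ N,
          |∫ ω, f (ξ i ω) *
              ((n0 * x0 + ∑ j ∈ Finset.range i, X j ω) / ((i : ℝ) + n0) - μstar) ^ s ∂P|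
            ≤ C * ((i : ℝ) ^ (s / 2 : ℕ))⁻¹ := by
  classical
  have hseven : Even s := by rcases hs with h | h | h <;> subst h <;> decide
  have hs4 : s ≤ 4 := by rcases hs with h | h | h <;> omega
  set μh : ℕ → Ω → ℝ :=
    fun i ω => (n0 * x0 + ∑ j ∈ Finset.range i, X j ω) / ((i : ℝ) + n0) with hμh
  -- cap/growth data for the upper side
  have side1 : ∃ (e₁ : ℕ) (c₁ A₁ : ℝ), 0 ≤ c₁ ∧ 1 ≤ A₁ ∧ Even (e₁ + s) ∧
      ((∀ j ≤ max (e₁ + s) s, Integrable (fun ω => |X 0 ω| ^ j) P)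
        ∨ (e₁ = 0 ∧ ∃ g : ℝ, ∀ᵐ ω ∂P, X 0 ω ≤ g)) ∧
      (∀ᵐ ω ∂P, ∀ i : ℕ, ∀ x ∈ Set.uIcc μstar (μh i ω), A₁ < x → |f x| ≤ c₁ * x ^ e₁) := by
    by_cases hb : ∃ g : ℝ, ∀ᵐ ω ∂P, X 0 ω ≤ g
    · obtain ⟨g, hg, -⟩ := hcondX.2 hb
      refine ⟨0, 0, max 1 (max μstar (max x0 g)), le_refl 0, le_max_left _ _,
        by simpa using hseven, Or.inr ⟨rfl, ⟨g, hg⟩⟩, ?_⟩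
      have hall : ∀ᵐ ω ∂P, ∀ j : ℕ, X j ω ≤ g := by
        rw [ae_all_iff]
        intro j
        exact (hident j).symm.ae_snd (p := fun x => x ≤ g) measurableSet_Iic hg
      filter_upwards [hall] with ω hω i x hx hAx
      exfalso
      have h1 : μh i ω ≤ max x0 g := by
        rw [hμh]
        rw [div_le_iff₀ (by positivity)]
        calc n0 * x0 + ∑ j ∈ Finset.range i, X j ω
            ≤ n0 * max x0 g + ∑ _j ∈ Finset.range i, max x0 g := by
              refine add_le_add ?_ ?_
              · exact mul_le_mul_of_nonneg_left (le_max_left x0 g) (le_of_lt hn0)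
              · exact Finset.sum_le_sum fun j _ => le_trans (hω j) (le_max_right _ _)
          _ = max x0 g * ((i:ℝ) + n0) := by
              rw [Finset.sum_const, Finset.card_range, nsmul_eq_mul]; ring
      have h2 : x ≤ max μstar (μh i ω) := by
        rcases Set.mem_uIcc.1 hx with ⟨_, h⟩ | ⟨_, h⟩
        · exact le_trans h (le_max_right _ _)
        · exact le_trans h (le_max_left _ _)
      have h3 : x ≤ max 1 (max μstar (max x0 g)) := by
        rcases le_total μstar (μh i ω) with h | h
        · have := max_eq_right h ▸ h2
          calc x ≤ μh i ω := by rw [max_eq_right h] at h2; exact h2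
            _ ≤ max x0 g := h1
            _ ≤ max 1 (max μstar (max x0 g)) :=
                le_trans (le_max_right μstar _) (le_max_right 1 _)
        · calc x ≤ μstar := by rw [max_eq_left h] at h2; exact h2
            _ ≤ max 1 (max μstar (max x0 g)) :=
                le_trans (le_max_left μstar _) (le_max_right 1 _)
      linarith
    · obtain ⟨k, hk4, hkeven, hkmom, hkO⟩ := hcondX.1 hb
      obtain ⟨c, hcb⟩ := hkO.bound
      obtain ⟨A0, hA0⟩ := Filter.eventually_atTop.1 hcb
      set e : ℕ := ((k : ℤ) - (s : ℤ) - 2).toNat with he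
      have hes : e + s = k - 2 ∨ e = 0 := by
        rcases le_or_gt 0 ((k : ℤ) - (s : ℤ) - 2) with h | h
        · left
          have h2 := Int.toNat_of_nonneg h
          omega
        · right
          rw [he, Int.toNat_of_nonpos (le_of_lt h)]
      have heven : Even (e + s) := by
        rw [Nat.even_iff] at hseven ⊢
        have hkev := hkeven
        rw [Nat.even_iff] at hkev
        rcases hes with h | h <;> omega
      refine ⟨e, max c 0, max A0 1, le_max_right _ _, le_max_right _ _, heven,
        Or.inl ?_, ?_⟩
      · intro j hj
        refine hkmom j (le_trans hj ?_)
        rcases hes with h | h <;> omega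
      · refine Filter.Eventually.of_forall fun ω i x _ hAx => ?_
        have hx1 : (1:ℝ) < x := lt_of_le_of_lt (le_max_right A0 1) hAx
        have hxA0 : A0 ≤ x := le_trans (le_max_left A0 1) (le_of_lt hAx)
        have h1 := hA0 x hxA0
        rw [Real.norm_eq_abs, Real.norm_eq_abs] at h1
        have hx0 : (0:ℝ) < x := by linarith
        have h2 : |x ^ ((k : ℤ) - (s : ℤ) - 2)| = x ^ ((k : ℤ) - (s : ℤ) - 2) :=
          abs_of_pos (zpow_pos hx0 _)
        have h3 : x ^ ((k : ℤ) - (s : ℤ) - 2) ≤ x ^ (e : ℤ) :=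
          zpow_le_zpow_right₀ (le_of_lt hx1) (by rw [he]; exact Int.self_le_toNat _)
        have h4 : x ^ (e : ℤ) = x ^ e := zpow_natCast x e
        calc |f x| ≤ c * |x ^ ((k : ℤ) - (s : ℤ) - 2)| := h1
          _ ≤ max c 0 * x ^ e := by
            rw [h2]
            refine mul_le_mul (le_max_left _ _) (by rw [← h4]; exact h3)
              (le_of_lt (zpow_pos hx0 _)) (le_max_right _ _)
  -- cap/growth data for the lower side
  have side2 : ∃ (e₂ : ℕ) (c₂ A₂ : ℝ), 0 ≤ c₂ ∧ 1 ≤ A₂ ∧ Even (e₂ + s) ∧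
      ((∀ j ≤ max (e₂ + s) s, Integrable (fun ω => |X 0 ω| ^ j) P)
        ∨ (e₂ = 0 ∧ ∃ g : ℝ, ∀ᵐ ω ∂P, -(X 0 ω) ≤ g)) ∧
      (∀ᵐ ω ∂P, ∀ i : ℕ, ∀ x ∈ Set.uIcc μstar (μh i ω), x < -A₂ →
        |f x| ≤ c₂ * (-x) ^ e₂) := by
    by_cases hb : ∃ g : ℝ, ∀ᵐ ω ∂P, -(X 0 ω) ≤ g
    · obtain ⟨g, hg, -⟩ := hcondnegX.2 hb
      refine ⟨0, 0, max 1 (max (-μstar) (max (-x0) g)), le_refl 0, le_max_left _ _,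
        by simpa using hseven, Or.inr ⟨rfl, ⟨g, hg⟩⟩, ?_⟩
      have hall : ∀ᵐ ω ∂P, ∀ j : ℕ, -(X j ω) ≤ g := by
        rw [ae_all_iff]
        intro j
        exact ((hident j).symm.comp measurable_neg).ae_snd (p := fun x => x ≤ g)
          measurableSet_Iic hg
      filter_upwards [hall] with ω hω i x hx hAx
      exfalso
      have h1 : min x0 (-g) ≤ μh i ω := by
        rw [hμh]
        rw [le_div_iff₀ (by positivity)]
        calc min x0 (-g) * ((i:ℝ) + n0)
            = n0 * min x0 (-g) + ∑ _j ∈ Finset.range i, min x0 (-g) := by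
              rw [Finset.sum_const, Finset.card_range, nsmul_eq_mul]; ring
          _ ≤ n0 * x0 + ∑ j ∈ Finset.range i, X j ω := by
              refine add_le_add ?_ ?_
              · exact mul_le_mul_of_nonneg_left (min_le_left x0 (-g)) (le_of_lt hn0)
              · refine Finset.sum_le_sum fun j _ => ?_
                have := hω j
                calc min x0 (-g) ≤ -g := min_le_right _ _
                  _ ≤ X j ω := by linarith
      have h2 : min μstar (μh i ω) ≤ x := by
        rcases Set.mem_uIcc.1 hx with ⟨h, _⟩ | ⟨h, _⟩
        · exact le_trans (min_le_left _ _) h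
        · exact le_trans (min_le_right _ _) h
      have h3 : -(max 1 (max (-μstar) (max (-x0) g))) ≤ x := by
        rcases le_total μstar (μh i ω) with h | h
        · calc -(max 1 (max (-μstar) (max (-x0) g)))
              ≤ μstar := by
                have h9 : -μstar ≤ max 1 (max (-μstar) (max (-x0) g)) :=
                  le_trans (le_max_left (-μstar) (max (-x0) g))
                    (le_max_right 1 (max (-μstar) (max (-x0) g)))
                linarith
            _ = min μstar (μh i ω) := (min_eq_left h).symm
            _ ≤ x := h2
        · calc -(max 1 (max (-μstar) (max (-x0) g)))
              ≤ min x0 (-g) := by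
                have hx0' := le_trans (le_trans (le_max_left (-x0) g)
                  (le_max_right (-μstar) _)) (le_max_right 1 _)
                have hg' := le_trans (le_trans (le_max_right (-x0) g)
                  (le_max_right (-μstar) _)) (le_max_right 1 _)
                rw [le_min_iff]
                constructor <;> linarith
            _ ≤ μh i ω := h1
            _ = min μstar (μh i ω) := (min_eq_right h).symm
            _ ≤ x := h2
      linarith
    · obtain ⟨k, hk4, hkeven, hkmom, hkO⟩ := hcondnegX.1 hb
      obtain ⟨c, hcb⟩ := hkO.bound
      obtain ⟨A0, hA0⟩ := Filter.eventually_atTop.1 hcb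
      set e : ℕ := ((k : ℤ) - (s : ℤ) - 2).toNat with he
      have hes : e + s = k - 2 ∨ e = 0 := by
        rcases le_or_gt 0 ((k : ℤ) - (s : ℤ) - 2) with h | h
        · left
          have h2 := Int.toNat_of_nonneg h
          omega
        · right
          rw [he, Int.toNat_of_nonpos (le_of_lt h)]
      have heven : Even (e + s) := by
        rw [Nat.even_iff] at hseven ⊢
        have hkev := hkeven
        rw [Nat.even_iff] at hkev
        rcases hes with h | h <;> omega
      refine ⟨e, max c 0, max A0 1, le_max_right _ _, le_max_right _ _, heven,
        Or.inl ?_, ?_⟩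
      · intro j hj
        have h5 := hkmom j (le_trans hj (by rcases hes with h | h <;> omega))
        simpa using h5
      · refine Filter.Eventually.of_forall fun ω i x _ hAx => ?_
        have hx1 : (1:ℝ) < -x := by
          have := le_max_right A0 1
          linarith
        have hxA0 : A0 ≤ -x := by
          have := le_max_left A0 1
          linarith
        have h1 := hA0 (-x) hxA0
        rw [Real.norm_eq_abs, Real.norm_eq_abs, neg_neg] at h1
        have hx0 : (0:ℝ) < -x := by linarith
        have h2 : |(-x) ^ ((k : ℤ) - (s : ℤ) - 2)| = (-x) ^ ((k : ℤ) - (s : ℤ) - 2) :=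
          abs_of_pos (zpow_pos hx0 _)
        have h3 : (-x) ^ ((k : ℤ) - (s : ℤ) - 2) ≤ (-x) ^ (e : ℤ) :=
          zpow_le_zpow_right₀ (le_of_lt hx1) (by rw [he]; exact Int.self_le_toNat _)
        have h4 : (-x) ^ (e : ℤ) = (-x) ^ e := zpow_natCast _ e
        calc |f x| ≤ c * |(-x) ^ ((k : ℤ) - (s : ℤ) - 2)| := h1
          _ ≤ max c 0 * (-x) ^ e := by
            rw [h2]
            refine mul_le_mul (le_max_left _ _) (by rw [← h4]; exact h3)
              (le_of_lt (zpow_pos hx0 _)) (le_max_right _ _)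
  obtain ⟨e₁, c₁, A₁, hc₁, hA₁, heven₁, hmomor₁, hcap₁⟩ := side1
  obtain ⟨e₂, c₂, A₂, hc₂, hA₂, heven₂, hmomor₂, hcap₂⟩ := side2
  set m : ℕ := max (max (e₁ + s) (e₂ + s)) s with hm
  have hsm : s ≤ m := le_max_right _ _
  have hmeven : Even m := by
    have hmax : ∀ a b : ℕ, Even a → Even b → Even (max a b) := by
      intro a b ha hb
      rcases le_total a b with h | h
      · rwa [max_eq_right h]
      · rwa [max_eq_left h]
    exact hmax _ _ (hmax _ _ heven₁ heven₂) hseven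
  have he₁m : e₁ + s ≤ m := le_trans (le_max_left _ _) (le_max_left _ _)
  have he₂m : e₂ + s ≤ m := le_trans (le_max_right _ _) (le_max_left _ _)
  have hmomall : ∀ j ≤ m, Integrable (fun ω => |X 0 ω| ^ j) P := by
    rcases hmomor₁ with h₁ | ⟨he₁, g₁, hg₁⟩
    · rcases hmomor₂ with h₂ | ⟨he₂, g₂, hg₂⟩
      · intro j hj
        have : j ≤ max (e₁ + s) s ∨ j ≤ max (e₂ + s) s := by omega
        rcases this with h | h
        · exact h₁ j h
        · exact h₂ j h
      · intro j hj
        exact h₁ j (by omega)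
    · rcases hmomor₂ with h₂ | ⟨he₂, g₂, hg₂⟩
      · intro j hj
        exact h₂ j (by omega)
      · -- both sides bounded
        have hbd : ∀ᵐ ω ∂P, |X 0 ω| ≤ max g₁ g₂ := by
          filter_upwards [hg₁, hg₂] with ω h1 h2
          rw [abs_le]
          constructor
          · have := le_max_right g₁ g₂
            linarith
          · exact le_trans h1 (le_max_left _ _)
        intro j hj
        refine Integrable.mono' (integrable_const ((max g₁ g₂) ^ j))
          ((hmeas 0).abs.pow_const j).aestronglyMeasurable ?_
        filter_upwards [hbd] with ω hω
        rw [Real.norm_eq_abs, abs_of_nonneg (by positivity)]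
        exact pow_le_pow_left₀ (abs_nonneg _) hω j
  obtain ⟨Ds, hDs0, hDs⟩ := key_moment P X hmeas hindep hident hXint μstar hμstar
    n0 hn0 x0 s hseven (fun j hj => hmomall j (le_trans hj hsm))
  obtain ⟨Dm, hDm0, hDm⟩ := key_moment P X hmeas hindep hident hXint μstar hμstar
    n0 hn0 x0 m hmeven hmomall
  obtain ⟨M₀, hM₀0, hM₀⟩ := aux_compact f hf (-A₂) A₁
  set Mtot : ℝ := M₀ + c₁ * 2 ^ e₁ * (|μstar| ^ e₁ + 1)
      + c₂ * 2 ^ e₂ * (|μstar| ^ e₂ + 1) with hMtot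
  have hMtot0 : 0 ≤ Mtot := by
    rw [hMtot]
    positivity
  refine ⟨Mtot * (Ds + Dm), m + 1, ?_⟩
  intro ξ hξmeas hξmem i hiN
  have him : m ≤ i := by omega
  have hi1 : 1 ≤ i := by omega
  have hione : (1:ℝ) ≤ (i:ℝ) := by exact_mod_cast hi1
  obtain ⟨hints, hbnds⟩ := hDs i (by omega) hi1
  obtain ⟨hintm, hbndm⟩ := hDm i him hi1
  -- pointwise a.e. bound
  have hptb : ∀ᵐ ω ∂P, ‖f (ξ i ω) * (μh i ω - μstar) ^ s‖
      ≤ Mtot * ((μh i ω - μstar) ^ s + (μh i ω - μstar) ^ m) := by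
    filter_upwards [hcap₁, hcap₂] with ω h₁ h₂
    have hx := hξmem i ω
    set x := ξ i ω with hxdef
    set Dv := |μh i ω - μstar| with hDv
    have hDv0 : 0 ≤ Dv := abs_nonneg _
    have hxle : |x| ≤ |μstar| + Dv := by
      have h5 : |x - μstar| ≤ |μh i ω - μstar| := Set.abs_sub_left_of_mem_uIcc hx
      calc |x| = |x - μstar + μstar| := by ring_nf
        _ ≤ |x - μstar| + |μstar| := abs_add_le _ _
        _ ≤ |μstar| + Dv := by rw [hDv]; linarith
    have hfx : |f x| ≤ M₀ + c₁ * (|μstar| + Dv) ^ e₁ + c₂ * (|μstar| + Dv) ^ e₂ := by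
      have t1 : (0:ℝ) ≤ c₁ * (|μstar| + Dv) ^ e₁ := by positivity
      have t2 : (0:ℝ) ≤ c₂ * (|μstar| + Dv) ^ e₂ := by positivity
      rcases le_or_gt x A₁ with hxA1 | hxA1
      · rcases le_or_gt (-A₂) x with hxA2 | hxA2
        · have := hM₀ x ⟨hxA2, hxA1⟩
          linarith
        · have hfb := h₂ i x hx hxA2
          have hnx : -x ≤ |μstar| + Dv := le_trans (neg_le_abs x) hxle
          have hnx0 : (0:ℝ) ≤ -x := by linarith
          have h6 : c₂ * (-x) ^ e₂ ≤ c₂ * (|μstar| + Dv) ^ e₂ :=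
            mul_le_mul_of_nonneg_left (pow_le_pow_left₀ hnx0 hnx e₂) hc₂
          linarith
      · have hfb := h₁ i x hx hxA1
        have hpx : x ≤ |μstar| + Dv := le_trans (le_abs_self x) hxle
        have hpx0 : (0:ℝ) ≤ x := by linarith
        have h6 : c₁ * x ^ e₁ ≤ c₁ * (|μstar| + Dv) ^ e₁ :=
          mul_le_mul_of_nonneg_left (pow_le_pow_left₀ hpx0 hpx e₁) hc₁
        linarith
    have hnorm : ‖f x * (μh i ω - μstar) ^ s‖ = |f x| * Dv ^ s := by
      rw [Real.norm_eq_abs, abs_mul, abs_pow]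
    rw [hnorm]
    have hDs' : (μh i ω - μstar) ^ s = Dv ^ s := (hseven.pow_abs _).symm
    have hDm' : (μh i ω - μstar) ^ m = Dv ^ m := (hmeven.pow_abs _).symm
    rw [hDs', hDm']
    have h2p1 : (|μstar| + Dv) ^ e₁ ≤ 2 ^ e₁ * (|μstar| ^ e₁ + Dv ^ e₁) :=
      aux_two_pow (abs_nonneg _) hDv0 e₁
    have h2p2 : (|μstar| + Dv) ^ e₂ ≤ 2 ^ e₂ * (|μstar| ^ e₂ + Dv ^ e₂) :=
      aux_two_pow (abs_nonneg _) hDv0 e₂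
    have hup1 : Dv ^ (e₁ + s) ≤ Dv ^ s + Dv ^ m :=
      aux_pow_le hDv0 (Nat.le_add_left s e₁) he₁m
    have hup2 : Dv ^ (e₂ + s) ≤ Dv ^ s + Dv ^ m :=
      aux_pow_le hDv0 (Nat.le_add_left s e₂) he₂m
    have hup0 : Dv ^ s ≤ Dv ^ s + Dv ^ m :=
      le_add_of_nonneg_right (pow_nonneg hDv0 m)
    calc |f x| * Dv ^ s
        ≤ (M₀ + c₁ * (|μstar| + Dv) ^ e₁ + c₂ * (|μstar| + Dv) ^ e₂) * Dv ^ s :=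
          mul_le_mul_of_nonneg_right hfx (by positivity)
      _ ≤ (M₀ + c₁ * (2 ^ e₁ * (|μstar| ^ e₁ + Dv ^ e₁))
            + c₂ * (2 ^ e₂ * (|μstar| ^ e₂ + Dv ^ e₂))) * Dv ^ s := by
          have b1 := mul_le_mul_of_nonneg_left h2p1 hc₁
          have b2 := mul_le_mul_of_nonneg_left h2p2 hc₂
          have : (0:ℝ) ≤ Dv ^ s := by positivity
          nlinarith
      _ = M₀ * Dv ^ s + c₁ * 2 ^ e₁ * |μstar| ^ e₁ * Dv ^ s
            + c₁ * 2 ^ e₁ * Dv ^ (e₁ + s)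
            + c₂ * 2 ^ e₂ * |μstar| ^ e₂ * Dv ^ s
            + c₂ * 2 ^ e₂ * Dv ^ (e₂ + s) := by
          rw [pow_add, pow_add]
          ring
      _ ≤ Mtot * (Dv ^ s + Dv ^ m) := by
          rw [hMtot]
          have k0 : (0:ℝ) ≤ M₀ := hM₀0
          have k1 : (0:ℝ) ≤ c₁ * 2 ^ e₁ * |μstar| ^ e₁ := by positivity
          have k2 : (0:ℝ) ≤ c₁ * 2 ^ e₁ := by positivity
          have k3 : (0:ℝ) ≤ c₂ * 2 ^ e₂ * |μstar| ^ e₂ := by positivity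
          have k4 : (0:ℝ) ≤ c₂ * 2 ^ e₂ := by positivity
          nlinarith [mul_le_mul_of_nonneg_left hup0 k0,
            mul_le_mul_of_nonneg_left hup0 k1,
            mul_le_mul_of_nonneg_left hup1 k2,
            mul_le_mul_of_nonneg_left hup0 k3,
            mul_le_mul_of_nonneg_left hup2 k4]
  have hμhmeas : Measurable fun ω => (μh i ω - μstar) ^ s := by
    rw [hμh]
    exact (((measurable_const.add
      (Finset.measurable_sum _ fun j _ => hmeas j)).div_const _).sub_const _).pow_const _
  have hG : Integrable
      (fun ω => Mtot * ((μh i ω - μstar) ^ s + (μh i ω - μstar) ^ m)) P :=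
    (hints.add hintm).const_mul Mtot
  have hle : |∫ ω, f (ξ i ω) * (μh i ω - μstar) ^ s ∂P|
      ≤ ∫ ω, Mtot * ((μh i ω - μstar) ^ s + (μh i ω - μstar) ^ m) ∂P := by
    rw [← Real.norm_eq_abs]
    refine norm_integral_le_of_norm_le hG hptb
  refine le_trans hle ?_
  rw [integral_const_mul, integral_add hints hintm]
  have hinv : ((i:ℝ) ^ (m / 2 : ℕ))⁻¹ ≤ ((i:ℝ) ^ (s / 2 : ℕ))⁻¹ := by
    refine inv_anti₀ (by positivity) ?_
    exact pow_le_pow_right₀ hione (Nat.div_le_div_right hsm)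
  have hfin : (∫ ω, (μh i ω - μstar) ^ s ∂P) + ∫ ω, (μh i ω - μstar) ^ m ∂P
      ≤ (Ds + Dm) * ((i:ℝ) ^ (s / 2 : ℕ))⁻¹ := by
    have h7 : ∫ ω, (μh i ω - μstar) ^ s ∂P ≤ Ds * ((i:ℝ) ^ (s / 2 : ℕ))⁻¹ := hbnds
    have h8 : ∫ ω, (μh i ω - μstar) ^ m ∂P ≤ Dm * ((i:ℝ) ^ (s / 2 : ℕ))⁻¹ :=
      le_trans hbndm (mul_le_mul_of_nonneg_left hinv hDm0)
    rw [add_mul]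
    linarith
  calc Mtot * ((∫ ω, (μh i ω - μstar) ^ s ∂P) + ∫ ω, (μh i ω - μstar) ^ m ∂P)
      ≤ Mtot * ((Ds + Dm) * ((i:ℝ) ^ (s / 2 : ℕ))⁻¹) :=
        mul_le_mul_of_nonneg_left hfin hMtot0
    _ = Mtot * (Ds + Dm) * ((i:ℝ) ^ (s / 2 : ℕ))⁻¹ := by ring
end

section
/- Let M be a single-parameter regular exponential family with sufficient statistic X, Fisher information I_M(μ) (mean-value parameterization), and let μ̂_n ∈ Θ_mean. Let M'_{μ̂_n}(z) := M_{μ̂_n}(z) · (1 + (1/(2n)) I_M(μ̂_n)(X(z) − μ̂_n)²) / (1 + 1/(2n)) be the slightly squashed ML estimator. Then the Kullback-Leibler divergence D(M'_{μ̂_n} ‖ M_{μ̂_n}) = O(1/n) as n → ∞ (uniformly for μ̂_n in any fixed compact subset of Θ_mean). -/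
open MeasureTheory Filter Real Asymptotics ProbabilityTheory

/-- A single-parameter regular exponential family on outcome space `Z`, relative to a base
measure `ν`, given in its mean-value parameterization.  `Θ` is the mean-value parameter
space (an open interval), `X` the sufficient statistic, `carrier` the carrier `h`,
`natParam μ` the natural parameter corresponding to the mean value `μ`, `Znorm` the
normalizing constant `Z(η)`, and `dens μ` the density of the member `M_μ` w.r.t. `ν`. -/
structure ExpFam (Z : Type) [MeasurableSpace Z] (ν : Measure Z) where
  Θ : Set ℝ
  Θ_open : IsOpen Θ
  Θ_ordConn : Θ.OrdConnected
  Θ_nonempty : Θ.Nonempty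
  X : Z → ℝ
  X_meas : Measurable X
  carrier : Z → ℝ
  carrier_nonneg : ∀ z, 0 ≤ carrier z
  natParam : ℝ → ℝ
  Znorm : ℝ → ℝ
  Znorm_pos : ∀ μ ∈ Θ, 0 < Znorm (natParam μ)
  dens : ℝ → Z → ℝ
  dens_def : ∀ μ ∈ Θ, ∀ z,
    dens μ z = Real.exp (-(natParam μ) * X z) * carrier z / Znorm (natParam μ)
  dens_meas : ∀ μ, Measurable (dens μ)
  dens_integrable : ∀ μ ∈ Θ, Integrable (dens μ) ν
  dens_integral_one : ∀ μ ∈ Θ, ∫ z, dens μ z ∂ν = 1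
  mean_integrable : ∀ μ ∈ Θ, Integrable (fun z => X z * dens μ z) ν
  mean_eq : ∀ μ ∈ Θ, ∫ z, X z * dens μ z ∂ν = μ
  var_integrable : ∀ μ ∈ Θ, Integrable (fun z => (X z - μ) ^ 2 * dens μ z) ν
  var_pos : ∀ μ ∈ Θ, 0 < ∫ z, (X z - μ) ^ 2 * dens μ z ∂ν

namespace ExpFam

variable {Z : Type} [MeasurableSpace Z] {ν : Measure Z}

/-- The member `M_μ` of the family, as a measure on `Z`. -/
noncomputable def toMeasure (F : ExpFam Z ν) (μ : ℝ) : Measure Z :=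
  ν.withDensity (fun z => ENNReal.ofReal (F.dens μ z))

/-- The variance `var_{M_μ}(X)` of the sufficient statistic under the member with mean `μ`. -/
noncomputable def var (F : ExpFam Z ν) (μ : ℝ) : ℝ :=
  ∫ z, (F.X z - μ) ^ 2 * F.dens μ z ∂ν

/-- Fisher information in the mean-value parameterization: `I(μ) = 1 / var_{M_μ}(X)`. -/
noncomputable def fisher (F : ExpFam Z ν) (μ : ℝ) : ℝ := (F.var μ)⁻¹

/-- Kullback-Leibler divergence `D(M_{μ₁} ‖ M_{μ₂})` between two members of the family. -/
noncomputable def kl (F : ExpFam Z ν) (μ₁ μ₂ : ℝ) : ℝ :=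
  ∫ z, F.dens μ₁ z * Real.log (F.dens μ₁ z / F.dens μ₂ z) ∂ν

end ExpFam

/-- The prefix `z^i = (z_1, …, z_i)` of a tuple `z^n`, for `i : Fin n`. -/
def prefixOf {Z : Type} {n : ℕ} (zs : Fin n → Z) (i : Fin n) : Fin i.val → Z :=
  fun j => zs (Fin.castLE i.isLt.le j)

/-- Codelength `L_U(z^n) = ∑_{i<n} - ln M_{μ̄_i(z^i)}(z_{i+1})` of the plug-in universal
code based on the estimator sequence `est`. -/
noncomputable def pluginCodelen {Z : Type} [MeasurableSpace Z] {ν : Measure Z}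
    (F : ExpFam Z ν) (est : (n : ℕ) → (Fin n → Z) → ℝ) {n : ℕ} (zs : Fin n → Z) : ℝ :=
  ∑ i : Fin n, - Real.log (F.dens (est i.val (prefixOf zs i)) (zs i))

/-- Relative redundancy `R_U(n) = E_P[L_U(Z^n)] - inf_{μ ∈ Θ} E_P[- ln M_μ(Z^n)]` of the
plug-in code based on `est`, when the data are i.i.d. `∼ P`. -/
noncomputable def pluginRedundancy {Z : Type} [MeasurableSpace Z] {ν : Measure Z}
    (F : ExpFam Z ν) (P : Measure Z) (est : (n : ℕ) → (Fin n → Z) → ℝ) (n : ℕ) : ℝ :=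
  (∫ zs : Fin n → Z, pluginCodelen F est zs ∂(Measure.pi fun _ : Fin n => P)) -
    ⨅ μ : F.Θ, ∫ zs : Fin n → Z, ∑ i : Fin n, - Real.log (F.dens (μ : ℝ) (zs i))
      ∂(Measure.pi fun _ : Fin n => P)


namespace SquashAux
open MeasureTheory Real

lemma exp_interp {clo chi c x : ℝ} (h1 : clo ≤ c) (h2 : c ≤ chi) :
    exp (-c * x) ≤ exp (-clo * x) + exp (-chi * x) := by
  rcases le_or_gt 0 x with hx | hx
  · have h : -c * x ≤ -clo * x := by nlinarith
    calc exp (-c * x) ≤ exp (-clo * x) := exp_le_exp.2 h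
    _ ≤ _ := le_add_of_nonneg_right (exp_pos _).le
  · have h : -c * x ≤ -chi * x := by nlinarith
    calc exp (-c * x) ≤ exp (-chi * x) := exp_le_exp.2 h
    _ ≤ _ := le_add_of_nonneg_left (exp_pos _).le

lemma pow_le_exp_abs (d : ℝ) (hd : 0 < d) (k : ℕ) (x : ℝ) :
    |x| ^ k ≤ (k.factorial / d ^ k) * (exp (d * x) + exp (-d * x)) := by
  have h1 : (d * |x|) ^ k / (k.factorial : ℝ) ≤ exp (d * |x|) := by
    calc (d * |x|) ^ k / (k.factorial : ℝ)
        ≤ ∑ i ∈ Finset.range (k + 1), (d * |x|) ^ i / (i.factorial : ℝ) := by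
          exact Finset.single_le_sum (f := fun i => (d * |x|) ^ i / (i.factorial : ℝ))
            (fun i _ => by positivity) (Finset.self_mem_range_succ k)
    _ ≤ exp (d * |x|) := Real.sum_le_exp_of_nonneg (by positivity) _
  have h2 : exp (d * |x|) ≤ exp (d * x) + exp (-d * x) := by
    rcases le_or_gt 0 x with hx | hx
    · rw [abs_of_nonneg hx]
      exact le_add_of_nonneg_right (exp_pos _).le
    · rw [abs_of_neg hx]
      have : d * -x = -d * x := by ring
      rw [this]
      exact le_add_of_nonneg_left (exp_pos _).le
  have hfac : (0:ℝ) < (k.factorial : ℝ) := by positivity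
  have hdk : (0:ℝ) < d ^ k := by positivity
  have h3 : |x| ^ k = (d * |x|) ^ k / d ^ k := by
    rw [mul_pow]
    field_simp
  rw [h3]
  calc (d * |x|) ^ k / d ^ k = ((d * |x|) ^ k / (k.factorial : ℝ)) * ((k.factorial : ℝ) / d ^ k) := by
        field_simp
  _ ≤ exp (d * |x|) * ((k.factorial : ℝ) / d ^ k) := by
        apply mul_le_mul_of_nonneg_right h1 (by positivity)
  _ ≤ (exp (d * x) + exp (-d * x)) * ((k.factorial : ℝ) / d ^ k) := by
        apply mul_le_mul_of_nonneg_right h2 (by positivity)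
  _ = (k.factorial / d ^ k) * (exp (d * x) + exp (-d * x)) := by ring


variable {Z : Type} [MeasurableSpace Z] {ν : Measure Z}

/-- The unnormalized density `e^{-c X} h`. -/
noncomputable def g (M : ExpFam Z ν) (c : ℝ) : Z → ℝ :=
  fun z => exp (-c * M.X z) * M.carrier z

lemma g_nonneg (M : ExpFam Z ν) (c : ℝ) (z : Z) : 0 ≤ g M c z :=
  mul_nonneg (exp_pos _).le (M.carrier_nonneg z)

lemma g_meas (M : ExpFam Z ν) (c : ℝ) : Measurable (g M c) := by
  obtain ⟨μ₀, hμ₀⟩ := M.Θ_nonempty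
  have hZ : M.Znorm (M.natParam μ₀) ≠ 0 := (M.Znorm_pos μ₀ hμ₀).ne'
  have : g M c = fun z =>
      exp ((M.natParam μ₀ - c) * M.X z) * (M.Znorm (M.natParam μ₀) * M.dens μ₀ z) := by
    funext z
    rw [M.dens_def μ₀ hμ₀ z]
    rw [mul_div_assoc', mul_comm (M.Znorm (M.natParam μ₀)), mul_div_assoc,
      div_self hZ, mul_one, ← mul_assoc, ← Real.exp_add]
    ring_nf
    simp [g, neg_mul]
  rw [this]
  exact ((M.X_meas.const_mul _).exp).mul ((M.dens_meas μ₀).const_mul _)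

lemma dens_eq_g (M : ExpFam Z ν) {μ : ℝ} (hμ : μ ∈ M.Θ) (z : Z) :
    M.dens μ z = g M (M.natParam μ) z / M.Znorm (M.natParam μ) := by
  rw [M.dens_def μ hμ z]; rfl

lemma g_eq_dens (M : ExpFam Z ν) {μ : ℝ} (hμ : μ ∈ M.Θ) (z : Z) :
    g M (M.natParam μ) z = M.Znorm (M.natParam μ) * M.dens μ z := by
  rw [dens_eq_g M hμ z, mul_div_cancel₀]
  exact (M.Znorm_pos μ hμ).ne'

lemma g_integrable (M : ExpFam Z ν) {μ : ℝ} (hμ : μ ∈ M.Θ) :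
    Integrable (g M (M.natParam μ)) ν := by
  have : g M (M.natParam μ) = fun z => M.Znorm (M.natParam μ) * M.dens μ z :=
    funext (g_eq_dens M hμ)
  rw [this]
  exact (M.dens_integrable μ hμ).const_mul _

lemma g_integral (M : ExpFam Z ν) {μ : ℝ} (hμ : μ ∈ M.Θ) :
    ∫ z, g M (M.natParam μ) z ∂ν = M.Znorm (M.natParam μ) := by
  rw [funext (g_eq_dens M hμ), integral_const_mul, M.dens_integral_one μ hμ, mul_one]

lemma Xg_integrable (M : ExpFam Z ν) {μ : ℝ} (hμ : μ ∈ M.Θ) :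
    Integrable (fun z => M.X z * g M (M.natParam μ) z) ν := by
  have : (fun z => M.X z * g M (M.natParam μ) z)
      = fun z => M.Znorm (M.natParam μ) * (M.X z * M.dens μ z) := by
    funext z; rw [g_eq_dens M hμ]; ring
  rw [this]
  exact (M.mean_integrable μ hμ).const_mul _

lemma Xg_integral (M : ExpFam Z ν) {μ : ℝ} (hμ : μ ∈ M.Θ) :
    ∫ z, M.X z * g M (M.natParam μ) z ∂ν = μ * M.Znorm (M.natParam μ) := by
  have : (fun z => M.X z * g M (M.natParam μ) z)
      = fun z => M.Znorm (M.natParam μ) * (M.X z * M.dens μ z) := by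
    funext z; rw [g_eq_dens M hμ]; ring
  rw [this, integral_const_mul, M.mean_eq μ hμ]; ring

lemma sqg_integrable (M : ExpFam Z ν) {μ : ℝ} (hμ : μ ∈ M.Θ) :
    Integrable (fun z => (M.X z - μ) ^ 2 * g M (M.natParam μ) z) ν := by
  have : (fun z => (M.X z - μ) ^ 2 * g M (M.natParam μ) z)
      = fun z => M.Znorm (M.natParam μ) * ((M.X z - μ) ^ 2 * M.dens μ z) := by
    funext z; rw [g_eq_dens M hμ]; ring
  rw [this]
  exact (M.var_integrable μ hμ).const_mul _

lemma sqg_integral (M : ExpFam Z ν) {μ : ℝ} (hμ : μ ∈ M.Θ) :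
    ∫ z, (M.X z - μ) ^ 2 * g M (M.natParam μ) z ∂ν = M.var μ * M.Znorm (M.natParam μ) := by
  have : (fun z => (M.X z - μ) ^ 2 * g M (M.natParam μ) z)
      = fun z => M.Znorm (M.natParam μ) * ((M.X z - μ) ^ 2 * M.dens μ z) := by
    funext z; rw [g_eq_dens M hμ]; ring
  rw [this, integral_const_mul]
  unfold ExpFam.var; ring

/-- Mean monotonicity: a larger natural parameter gives a smaller mean. -/
lemma mean_mono (M : ExpFam Z ν) {μ₁ μ₂ : ℝ} (h₁ : μ₁ ∈ M.Θ) (h₂ : μ₂ ∈ M.Θ)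
    (hη : M.natParam μ₁ < M.natParam μ₂) : μ₂ ≤ μ₁ := by
  set η₁ := M.natParam μ₁
  set η₂ := M.natParam μ₂
  set c := η₂ - η₁ with hc
  have hcpos : 0 < c := sub_pos.2 hη
  set w₀ := exp (-c * μ₁) with hw₀
  -- pointwise: w(z) * g₁(z) = g₂(z)
  have hwg : ∀ z, exp (-c * M.X z) * g M η₁ z = g M η₂ z := by
    intro z
    unfold g
    rw [← mul_assoc, ← Real.exp_add, hc]
    ring_nf
  -- pointwise nonpositivity
  have hptr : ∀ z, (M.X z - μ₁) * (exp (-c * M.X z) - w₀) * g M η₁ z ≤ 0 := by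
    intro z
    apply mul_nonpos_of_nonpos_of_nonneg _ (g_nonneg M η₁ z)
    rcases le_total μ₁ (M.X z) with hx | hx
    · apply mul_nonpos_of_nonneg_of_nonpos (by linarith)
      rw [hw₀, sub_nonpos, exp_le_exp]
      nlinarith
    · apply mul_nonpos_of_nonpos_of_nonneg (by linarith)
      rw [hw₀, sub_nonneg, exp_le_exp]
      nlinarith
  -- identify the function with a combination of integrable pieces
  have hfun : (fun z => (M.X z - μ₁) * (exp (-c * M.X z) - w₀) * g M η₁ z)
      = fun z => (M.X z * g M η₂ z - μ₁ * g M η₂ z)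
          - (w₀ * (M.X z * g M η₁ z) - (w₀ * μ₁) * g M η₁ z) := by
    funext z
    rw [← hwg z]
    ring
  have hI2X := Xg_integrable M h₂
  have hI2 := g_integrable M h₂
  have hI1X := Xg_integrable M h₁
  have hI1 := g_integrable M h₁
  have A1 : Integrable (fun z => M.X z * g M η₂ z - μ₁ * g M η₂ z) ν :=
    hI2X.sub (hI2.const_mul μ₁)
  have A2 : Integrable (fun z => w₀ * (M.X z * g M η₁ z) - (w₀ * μ₁) * g M η₁ z) ν :=
    (hI1X.const_mul w₀).sub (hI1.const_mul (w₀ * μ₁))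
  have hint : ∫ z, (M.X z - μ₁) * (exp (-c * M.X z) - w₀) * g M η₁ z ∂ν
      = (μ₂ - μ₁) * M.Znorm η₂ := by
    rw [hfun, integral_sub A1 A2,
      integral_sub hI2X (hI2.const_mul μ₁),
      integral_sub (hI1X.const_mul w₀) (hI1.const_mul (w₀ * μ₁)),
      integral_const_mul, integral_const_mul, integral_const_mul,
      Xg_integral M h₂, g_integral M h₂, Xg_integral M h₁, g_integral M h₁]
    ring
  have hle : (μ₂ - μ₁) * M.Znorm η₂ ≤ 0 := by
    rw [← hint]
    exact integral_nonpos hptr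
  have hZ2 : 0 < M.Znorm η₂ := M.Znorm_pos μ₂ h₂
  nlinarith

/-- If the natural parameters agree, the means agree. -/
lemma mean_inj (M : ExpFam Z ν) {μ₁ μ₂ : ℝ} (h₁ : μ₁ ∈ M.Θ) (h₂ : μ₂ ∈ M.Θ)
    (hη : M.natParam μ₁ = M.natParam μ₂) : μ₁ = μ₂ := by
  have e1 := Xg_integral M h₁
  have e2 := Xg_integral M h₂
  rw [hη] at e1
  have hZ : 0 < M.Znorm (M.natParam μ₂) := M.Znorm_pos μ₂ h₂
  have := e1.symm.trans e2
  exact mul_right_cancel₀ hZ.ne' this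

/-- Interior on the high side: slightly larger exponents remain integrable. -/
lemma interior_hi (M : ExpFam Z ν) {a : ℝ} (ha : a ∈ M.Θ) :
    ∃ δ > 0, Integrable (g M (M.natParam a + δ)) ν := by
  by_contra hcon
  push_neg at hcon
  obtain ⟨ε, hε, hball⟩ := Metric.isOpen_iff.1 M.Θ_open a ha
  have hμ' : a - ε / 2 ∈ M.Θ := by
    apply hball
    simp only [Metric.mem_ball, Real.dist_eq]
    rw [abs_lt]
    constructor <;> linarith
  set μ' := a - ε / 2
  have hlt : μ' < a := by simp only [μ']; linarith
  have hint' := g_integrable M hμ'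
  rcases lt_trichotomy (M.natParam μ') (M.natParam a) with h | h | h
  · exact absurd (mean_mono M hμ' ha h) (by linarith)
  · exact absurd (mean_inj M hμ' ha h) (by linarith)
  · have : M.natParam μ' = M.natParam a + (M.natParam μ' - M.natParam a) := by ring
    rw [this] at hint'
    exact hcon _ (by linarith) hint'

/-- Interior on the low side. -/
lemma interior_lo (M : ExpFam Z ν) {b : ℝ} (hb : b ∈ M.Θ) :
    ∃ δ > 0, Integrable (g M (M.natParam b - δ)) ν := by
  by_contra hcon
  push_neg at hcon
  obtain ⟨ε, hε, hball⟩ := Metric.isOpen_iff.1 M.Θ_open b hb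
  have hμ' : b + ε / 2 ∈ M.Θ := by
    apply hball
    simp only [Metric.mem_ball, Real.dist_eq]
    rw [abs_lt]
    constructor <;> linarith
  set μ' := b + ε / 2
  have hlt : b < μ' := by simp only [μ']; linarith
  have hint' := g_integrable M hμ'
  rcases lt_trichotomy (M.natParam μ') (M.natParam b) with h | h | h
  · have : M.natParam μ' = M.natParam b - (M.natParam b - M.natParam μ') := by ring
    rw [this] at hint'
    exact hcon _ (by linarith) hint'
  · exact absurd (mean_inj M hμ' hb h) (by linarith)
  · exact absurd (mean_mono M hb hμ' h) (by linarith)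

/-- The sufficient statistic is not a.e. constant on the support of the carrier. -/
lemma not_ae_const (M : ExpFam Z ν) {μb : ℝ} (hb : μb ∈ M.Θ) (r : ℝ) :
    ¬ (∀ᵐ z ∂ν, M.carrier z = 0 ∨ M.X z = r) := by
  intro hae
  have hdens0 : ∀ z, M.carrier z = 0 → M.dens μb z = 0 := by
    intro z hz
    rw [M.dens_def μb hb z, hz, mul_zero, zero_div]
  have h1 : ∀ᵐ z ∂ν, M.X z * M.dens μb z - r * M.dens μb z = 0 := by
    filter_upwards [hae] with z hz
    rcases hz with hz | hz
    · rw [hdens0 z hz]; ring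
    · rw [hz]; ring
  have h2 : ∫ z, (M.X z * M.dens μb z - r * M.dens μb z) ∂ν = 0 :=
    integral_eq_zero_of_ae h1
  have h3 : ∫ z, (M.X z * M.dens μb z - r * M.dens μb z) ∂ν = μb - r := by
    rw [integral_sub (M.mean_integrable μb hb) ((M.dens_integrable μb hb).const_mul r),
      integral_const_mul, M.mean_eq μb hb, M.dens_integral_one μb hb, mul_one]
  have hrb : r = μb := by rw [h3] at h2; linarith
  have h4 : ∀ᵐ z ∂ν, (M.X z - μb) ^ 2 * M.dens μb z = 0 := by
    filter_upwards [hae] with z hz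
    rcases hz with hz | hz
    · rw [hdens0 z hz]; ring
    · rw [← hrb, hz]; ring
  have h5 := M.var_pos μb hb
  rw [integral_eq_zero_of_ae h4] at h5
  exact lt_irrefl 0 h5

/-- The variance functional in the natural parameterization. -/
noncomputable def Vfun (M : ExpFam Z ν) (c : ℝ) : ℝ :=
  (∫ z, (M.X z) ^ 2 * g M c z ∂ν) / (∫ z, g M c z ∂ν)
    - ((∫ z, M.X z * g M c z ∂ν) / (∫ z, g M c z ∂ν)) ^ 2

end SquashAux

/-- The slightly squashed version `M'_{μ̂}` of the member `M_{μ̂}`, at squashing level `n`: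
`M'_{μ̂}(z) = M_{μ̂}(z) · (1 + (1/(2n)) I_M(μ̂)(X(z) − μ̂)²) / (1 + 1/(2n))`. -/
noncomputable def squashDensAt {Z : Type} [MeasurableSpace Z] {ν : Measure Z}
    (F : ExpFam Z ν) (n : ℕ) (μhat : ℝ) (z : Z) : ℝ :=
  F.dens μhat z * (1 + (1 / (2 * (n : ℝ))) * F.fisher μhat * (F.X z - μhat) ^ 2) /
    (1 + 1 / (2 * (n : ℝ)))

set_option maxHeartbeats 1600000 in
/-- **The slightly squashed ML estimator is "almost in-model".**  Let `M` be a
single-parameter regular exponential family with Fisher information `I_M(μ)` in the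
mean-value parameterization.  Then the Kullback-Leibler divergence
`D(M'_{μ̂_n} ‖ M_{μ̂_n}) = O(1/n)` as `n → ∞`, uniformly for `μ̂_n` in any fixed compact
subset of `Θ_mean`. -/
theorem squashed_kl_isBigO
    {Z : Type} [MeasurableSpace Z] (ν : Measure Z)
    (M : ExpFam Z ν) (K : Set ℝ) (hK : IsCompact K) (hKΘ : K ⊆ M.Θ) :
    ∃ C : ℝ, ∃ N : ℕ, ∀ n ≥ N, ∀ μhat ∈ K,
      |∫ z, squashDensAt M n μhat z *
          Real.log (squashDensAt M n μhat z / M.dens μhat z) ∂ν| ≤ C / (n : ℝ) :=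
  by
  classical
  open SquashAux in
  rcases K.eq_empty_or_nonempty with hKe | hne
  · refine ⟨0, 1, fun n _ μhat hμ => ?_⟩
    rw [hKe] at hμ
    exact absurd hμ (Set.notMem_empty μhat)
  -- endpoints of a compact interval inside Θ
  have hKmin : sInf K ∈ K := hK.sInf_mem hne
  have hKmax : sSup K ∈ K := hK.sSup_mem hne
  obtain ⟨εa, hεa, hba⟩ := Metric.isOpen_iff.1 M.Θ_open _ (hKΘ hKmin)
  obtain ⟨εb, hεb, hbb⟩ := Metric.isOpen_iff.1 M.Θ_open _ (hKΘ hKmax)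
  set a : ℝ := sInf K - εa / 2 with ha_def
  set b : ℝ := sSup K + εb / 2 with hb_def
  have ha : a ∈ M.Θ := by
    apply hba
    simp only [Metric.mem_ball, Real.dist_eq, ha_def]
    rw [abs_lt]; constructor <;> linarith
  have hb : b ∈ M.Θ := by
    apply hbb
    simp only [Metric.mem_ball, Real.dist_eq, hb_def]
    rw [abs_lt]; constructor <;> linarith
  have haK : ∀ μ ∈ K, a < μ ∧ μ < b := by
    intro μ hμ
    have h1 := csInf_le hK.bddBelow hμ
    have h2 := le_csSup hK.bddAbove hμ
    constructor <;> [skip; skip] <;> simp only [ha_def, hb_def] <;> linarith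
  -- natural parameter range
  set α : ℝ := M.natParam b with hα_def
  set β : ℝ := M.natParam a with hβ_def
  have hηK : ∀ μ ∈ K, α ≤ M.natParam μ ∧ M.natParam μ ≤ β := by
    intro μ hμ
    have hμΘ := hKΘ hμ
    constructor
    · by_contra hcon
      push_neg at hcon
      exact absurd (mean_mono M hμΘ hb hcon) (not_le.2 (haK μ hμ).2)
    · by_contra hcon
      push_neg at hcon
      exact absurd (mean_mono M ha hμΘ hcon) (not_le.2 (haK μ hμ).1)
  obtain ⟨μw, hμw⟩ := hne
  have hαβ : α ≤ β := le_trans (hηK μw hμw).1 (hηK μw hμw).2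
  -- interior wiggle room and master dominating function
  obtain ⟨δa, hδa, Ihi⟩ := interior_hi M ha
  obtain ⟨δb, hδb, Ilo⟩ := interior_lo M hb
  set clo : ℝ := α - δb with hclo_def
  set chi : ℝ := β + δa with hchi_def
  set d : ℝ := min δa δb / 2 with hd_def
  have hdpos : 0 < d := by
    simp only [hd_def]
    have := lt_min hδa hδb
    linarith
  have hdδa : 2 * d ≤ δa := by
    simp only [hd_def]
    have := min_le_left δa δb
    linarith
  have hdδb : 2 * d ≤ δb := by
    simp only [hd_def]
    have := min_le_right δa δb
    linarith
  set G₀ : Z → ℝ := fun z => g M clo z + g M chi z with hG₀_def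
  have hG₀ : Integrable G₀ ν := Ilo.add Ihi
  have hG₀nn : ∀ z, 0 ≤ G₀ z := fun z => add_nonneg (g_nonneg M clo z) (g_nonneg M chi z)
  have hG₀meas : Measurable G₀ := (g_meas M clo).add (g_meas M chi)
  have hginterp : ∀ c, clo ≤ c → c ≤ chi → ∀ z, g M c z ≤ G₀ z := by
    intro c h1 h2 z
    have := mul_le_mul_of_nonneg_right (exp_interp h1 h2 (x := M.X z)) (M.carrier_nonneg z)
    simpa [g, hG₀_def, add_mul] using this
  have hgint : ∀ c, clo ≤ c → c ≤ chi → Integrable (g M c) ν := by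
    intro c h1 h2
    refine hG₀.mono' (g_meas M c).aestronglyMeasurable (ae_of_all _ fun z => ?_)
    rw [Real.norm_eq_abs, abs_of_nonneg (g_nonneg M c z)]
    exact hginterp c h1 h2 z
  -- polynomial-moment domination
  have hPk : ∀ (k : ℕ) (c : ℝ), clo ≤ c - d → c + d ≤ chi → ∀ z,
      |M.X z| ^ k * g M c z ≤ (k.factorial / d ^ k) * (G₀ z + G₀ z) := by
    intro k c h1 h2 z
    have e1 : exp (d * M.X z) * g M c z = g M (c - d) z := by
      simp only [g, ← mul_assoc, ← Real.exp_add]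
      ring_nf
    have e2 : exp (-d * M.X z) * g M c z = g M (c + d) z := by
      simp only [g, ← mul_assoc, ← Real.exp_add]
      ring_nf
    have hcd1 : c - d ≤ chi := by linarith
    have hcd2 : clo ≤ c + d := by linarith
    calc |M.X z| ^ k * g M c z
        ≤ ((k.factorial / d ^ k) * (exp (d * M.X z) + exp (-d * M.X z))) * g M c z :=
          mul_le_mul_of_nonneg_right (pow_le_exp_abs d hdpos k (M.X z)) (g_nonneg M c z)
      _ = (k.factorial / d ^ k) * (g M (c - d) z + g M (c + d) z) := by
          rw [← e1, ← e2]; ring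
      _ ≤ (k.factorial / d ^ k) * (G₀ z + G₀ z) := by
          apply mul_le_mul_of_nonneg_left
            (add_le_add (hginterp _ h1 hcd1 z) (hginterp _ hcd2 h2 z))
          positivity
  have hPkint : ∀ (k : ℕ), Integrable (fun z => ((k.factorial : ℝ) / d ^ k) * (G₀ z + G₀ z)) ν :=
    fun k => (hG₀.add hG₀).const_mul _
  -- continuity of the moment functionals
  have hAc : ∀ c₀ ∈ Set.Icc α β, ContinuousAt (fun c => ∫ z, g M c z ∂ν) c₀ := by
    intro c₀ hc₀
    refine continuousAt_of_dominated
      (F := fun c z => g M c z)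
      (bound := fun z => (((0 : ℕ).factorial : ℝ) / d ^ 0) * (G₀ z + G₀ z))
      (Filter.Eventually.of_forall fun c => (g_meas M c).aestronglyMeasurable) ?_ (hPkint 0) ?_
    · have hev : ∀ᶠ c in nhds c₀, c ∈ Metric.ball c₀ (d / 2) :=
        Metric.ball_mem_nhds c₀ (by positivity)
      filter_upwards [hev] with c hc
      apply ae_of_all
      intro z
      have hcd0 : |c - c₀| < d / 2 := by simpa [Real.dist_eq] using hc
      obtain ⟨hcd1, hcd2⟩ := abs_lt.1 hcd0
      have hc₀1 := hc₀.1
      have hc₀2 := hc₀.2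
      rw [Real.norm_eq_abs, abs_of_nonneg (g_nonneg M c z)]
      have hstep : g M c z ≤ G₀ z :=
        hginterp c (by simp only [hclo_def]; linarith) (by simp only [hchi_def]; linarith) z
      have hnn := hG₀nn z
      have hrw : (((0 : ℕ).factorial : ℝ) / d ^ 0) * (G₀ z + G₀ z) = 2 * G₀ z := by
        norm_num
        ring
      rw [hrw]
      linarith
    · apply ae_of_all
      intro z
      have hcg : Continuous fun c : ℝ => g M c z :=
        (Real.continuous_exp.comp ((continuous_id.neg).mul continuous_const)).mul
          continuous_const
      exact (hcg).continuousAt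
  have hBc : ∀ c₀ ∈ Set.Icc α β, ContinuousAt (fun c => ∫ z, M.X z * g M c z ∂ν) c₀ := by
    intro c₀ hc₀
    refine continuousAt_of_dominated
      (F := fun c z => M.X z * g M c z)
      (bound := fun z => (((1 : ℕ).factorial : ℝ) / d ^ 1) * (G₀ z + G₀ z))
      (Filter.Eventually.of_forall fun c => (M.X_meas.mul (g_meas M c)).aestronglyMeasurable) ?_ (hPkint 1) ?_
    · have hev : ∀ᶠ c in nhds c₀, c ∈ Metric.ball c₀ (d / 2) :=
        Metric.ball_mem_nhds c₀ (by positivity)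
      filter_upwards [hev] with c hc
      apply ae_of_all
      intro z
      have hcd0 : |c - c₀| < d / 2 := by simpa [Real.dist_eq] using hc
      obtain ⟨hcd1, hcd2⟩ := abs_lt.1 hcd0
      have hc₀1 := hc₀.1
      have hc₀2 := hc₀.2
      rw [Real.norm_eq_abs, abs_mul, abs_of_nonneg (g_nonneg M c z), ← pow_one |M.X z|]
      exact hPk 1 c (by simp only [hclo_def]; linarith) (by simp only [hchi_def]; linarith) z
    · apply ae_of_all
      intro z
      have hcg : Continuous fun c : ℝ => g M c z :=
        (Real.continuous_exp.comp ((continuous_id.neg).mul continuous_const)).mul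
          continuous_const
      exact (continuous_const.mul hcg).continuousAt
  have hQc : ∀ c₀ ∈ Set.Icc α β, ContinuousAt (fun c => ∫ z, (M.X z) ^ 2 * g M c z ∂ν) c₀ := by
    intro c₀ hc₀
    refine continuousAt_of_dominated
      (F := fun c z => (M.X z) ^ 2 * g M c z)
      (bound := fun z => (((2 : ℕ).factorial : ℝ) / d ^ 2) * (G₀ z + G₀ z))
      (Filter.Eventually.of_forall fun c => ((M.X_meas.pow_const 2).mul (g_meas M c)).aestronglyMeasurable) ?_ (hPkint 2) ?_
    · have hev : ∀ᶠ c in nhds c₀, c ∈ Metric.ball c₀ (d / 2) :=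
        Metric.ball_mem_nhds c₀ (by positivity)
      filter_upwards [hev] with c hc
      apply ae_of_all
      intro z
      have hcd0 : |c - c₀| < d / 2 := by simpa [Real.dist_eq] using hc
      obtain ⟨hcd1, hcd2⟩ := abs_lt.1 hcd0
      have hc₀1 := hc₀.1
      have hc₀2 := hc₀.2
      rw [Real.norm_eq_abs, abs_mul, abs_of_nonneg (g_nonneg M c z), abs_pow]
      exact hPk 2 c (by simp only [hclo_def]; linarith) (by simp only [hchi_def]; linarith) z
    · apply ae_of_all
      intro z
      have hcg : Continuous fun c : ℝ => g M c z :=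
        (Real.continuous_exp.comp ((continuous_id.neg).mul continuous_const)).mul
          continuous_const
      exact (continuous_const.mul hcg).continuousAt
  -- uniform lower bound on the normalizer
  set c1 : ℝ := ∫ z, min (g M α z) (g M β z) ∂ν with hc1_def
  have hminint : Integrable (fun z => min (g M α z) (g M β z)) ν := by
    refine hG₀.mono' ((g_meas M α).min (g_meas M β)).aestronglyMeasurable
      (ae_of_all _ fun z => ?_)
    rw [Real.norm_eq_abs, abs_of_nonneg (le_min (g_nonneg M α z) (g_nonneg M β z))]
    exact le_trans (min_le_left _ _) (hginterp α (by simp only [hclo_def]; linarith)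
      (by simp only [hchi_def]; linarith) z)
  have hminnn : ∀ z, 0 ≤ min (g M α z) (g M β z) :=
    fun z => le_min (g_nonneg M α z) (g_nonneg M β z)
  have hc1A : ∀ c ∈ Set.Icc α β, c1 ≤ ∫ z, g M c z ∂ν := by
    intro c hc
    have hminle : ∀ z, min (g M α z) (g M β z) ≤ g M c z := by
      intro z
      rcases le_or_gt 0 (M.X z) with hx | hx
      · refine le_trans (min_le_right _ _) ?_
        apply mul_le_mul_of_nonneg_right _ (M.carrier_nonneg z)
        apply exp_le_exp.2
        nlinarith [hc.2]
      · refine le_trans (min_le_left _ _) ?_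
        apply mul_le_mul_of_nonneg_right _ (M.carrier_nonneg z)
        apply exp_le_exp.2
        nlinarith [hc.1]
    exact integral_mono hminint
      (hgint c (by simp only [hclo_def]; have := hc.1; linarith)
        (by simp only [hchi_def]; have := hc.2; linarith)) hminle
  have hc1pos : 0 < c1 := by
    rcases (integral_nonneg (μ := ν) (f := fun z => min (g M α z) (g M β z)) hminnn).lt_or_eq with h | h
    · exact h
    exfalso
    have hae : (fun z => min (g M α z) (g M β z)) =ᵐ[ν] 0 :=
      (integral_eq_zero_iff_of_nonneg hminnn hminint).1 h.symm
    have hae2 : g M α =ᵐ[ν] 0 := by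
      filter_upwards [hae] with z hz
      simp only [Pi.zero_apply] at hz ⊢
      rcases le_total (g M α z) (g M β z) with hle | hle
      · rw [min_eq_left hle] at hz
        exact hz
      · rw [min_eq_right hle] at hz
        rcases mul_eq_zero.1 hz with h' | h'
        · exact absurd h' (exp_pos _).ne'
        · simp only [g, h', mul_zero]
    have hz0 : ∫ z, g M α z ∂ν = 0 := integral_eq_zero_of_ae hae2
    have hgi := g_integral M hb
    rw [← hα_def] at hgi
    rw [hgi] at hz0
    have := M.Znorm_pos b hb
    rw [← hα_def] at this
    linarith
  -- positivity of the variance functional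
  have hIXg : ∀ c ∈ Set.Icc α β, Integrable (fun z => M.X z * g M c z) ν := by
    intro c hc
    refine (hPkint 1).mono' (M.X_meas.mul (g_meas M c)).aestronglyMeasurable
      (ae_of_all _ fun z => ?_)
    rw [Real.norm_eq_abs, abs_mul, abs_of_nonneg (g_nonneg M c z), ← pow_one |M.X z|]
    exact hPk 1 c (by simp only [hclo_def]; have := hc.1; linarith)
      (by simp only [hchi_def]; have := hc.2; linarith) z
  have hIX2g : ∀ c ∈ Set.Icc α β, Integrable (fun z => (M.X z) ^ 2 * g M c z) ν := by
    intro c hc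
    refine (hPkint 2).mono' ((M.X_meas.pow_const 2).mul (g_meas M c)).aestronglyMeasurable
      (ae_of_all _ fun z => ?_)
    rw [Real.norm_eq_abs, abs_mul, abs_of_nonneg (g_nonneg M c z), abs_pow]
    exact hPk 2 c (by simp only [hclo_def]; have := hc.1; linarith)
      (by simp only [hchi_def]; have := hc.2; linarith) z
  have hVpos : ∀ c ∈ Set.Icc α β, 0 < Vfun M c := by
    intro c hc
    have hA := lt_of_lt_of_le hc1pos (hc1A c hc)
    have Ig : Integrable (g M c) ν := hgint c
      (by simp only [hclo_def]; have := hc.1; linarith)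
      (by simp only [hchi_def]; have := hc.2; linarith)
    have IXg := hIXg c hc
    have IX2g := hIX2g c hc
    set m : ℝ := (∫ z, M.X z * g M c z ∂ν) / (∫ z, g M c z ∂ν) with hm_def
    have hfun : (fun z => (M.X z - m) ^ 2 * g M c z)
        = fun z => ((M.X z) ^ 2 * g M c z - (2 * m) * (M.X z * g M c z))
            + m ^ 2 * g M c z := by
      funext z; ring
    have Iw : Integrable (fun z => (M.X z - m) ^ 2 * g M c z) ν := by
      rw [hfun]
      exact (IX2g.sub (IXg.const_mul (2 * m))).add (Ig.const_mul (m ^ 2))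
    have hWval : ∫ z, (M.X z - m) ^ 2 * g M c z ∂ν
        = (∫ z, (M.X z) ^ 2 * g M c z ∂ν) - (2 * m) * (∫ z, M.X z * g M c z ∂ν)
            + m ^ 2 * (∫ z, g M c z ∂ν) := by
      have Isub : Integrable
          (fun z => (M.X z) ^ 2 * g M c z - (2 * m) * (M.X z * g M c z)) ν :=
        IX2g.sub (IXg.const_mul (2 * m))
      rw [hfun, integral_add Isub (Ig.const_mul (m ^ 2)),
        integral_sub IX2g (IXg.const_mul (2 * m)), integral_const_mul, integral_const_mul]
    have hWnn : 0 ≤ ∫ z, (M.X z - m) ^ 2 * g M c z ∂ν :=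
      integral_nonneg fun z => mul_nonneg (sq_nonneg _) (g_nonneg M c z)
    have hWpos : 0 < ∫ z, (M.X z - m) ^ 2 * g M c z ∂ν := by
      rcases hWnn.lt_or_eq with h | h
      · exact h
      exfalso
      have haez : (fun z => (M.X z - m) ^ 2 * g M c z) =ᵐ[ν] 0 :=
        (integral_eq_zero_iff_of_nonneg
          (fun z => mul_nonneg (sq_nonneg _) (g_nonneg M c z)) Iw).1 h.symm
      apply not_ae_const M hb m
      filter_upwards [haez] with z hz
      simp only [Pi.zero_apply] at hz
      rcases mul_eq_zero.1 hz with h' | h'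
      · right
        have h'' : M.X z - m = 0 := sq_eq_zero_iff.1 h'
        linarith
      · left
        rcases mul_eq_zero.1 h' with h'' | h''
        · exact absurd h'' (exp_pos _).ne'
        · exact h''
    have hVeq : Vfun M c = (∫ z, (M.X z - m) ^ 2 * g M c z ∂ν) / (∫ z, g M c z ∂ν) := by
      rw [hWval]
      simp only [Vfun, hm_def]
      field_simp
      ring
    rw [hVeq]
    exact div_pos hWpos hA
  -- uniform lower bound on the variance
  have hVcont : ContinuousOn (Vfun M) (Set.Icc α β) := by
    intro c hc
    have hA := lt_of_lt_of_le hc1pos (hc1A c hc)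
    exact (((hQc c hc).div (hAc c hc) hA.ne').sub
      (((hBc c hc).div (hAc c hc) hA.ne').pow 2)).continuousWithinAt
  obtain ⟨cstar, hcstar, hminV⟩ :=
    isCompact_Icc.exists_isMinOn (Set.nonempty_Icc.2 hαβ) hVcont
  set cv : ℝ := Vfun M cstar with hcv_def
  have hcv : 0 < cv := hVpos cstar hcstar
  have hVlb : ∀ c ∈ Set.Icc α β, cv ≤ Vfun M c := fun c hc => isMinOn_iff.1 hminV c hc
  -- the variance in mean parameterization
  have hvar : ∀ μ ∈ K, M.var μ = Vfun M (M.natParam μ) := by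
    intro μ hμ
    have hμΘ := hKΘ hμ
    have hc : M.natParam μ ∈ Set.Icc α β := ⟨(hηK μ hμ).1, (hηK μ hμ).2⟩
    have hZpos := M.Znorm_pos μ hμΘ
    have hA : ∫ z, g M (M.natParam μ) z ∂ν = M.Znorm (M.natParam μ) := g_integral M hμΘ
    have hB : ∫ z, M.X z * g M (M.natParam μ) z ∂ν = μ * M.Znorm (M.natParam μ) :=
      Xg_integral M hμΘ
    have hsq : ∫ z, (M.X z - μ) ^ 2 * g M (M.natParam μ) z ∂ν
        = M.var μ * M.Znorm (M.natParam μ) := sqg_integral M hμΘ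
    have IXg := hIXg _ hc
    have IX2g := hIX2g _ hc
    have Ig : Integrable (g M (M.natParam μ)) ν := g_integrable M hμΘ
    have hfun : (fun z => (M.X z - μ) ^ 2 * g M (M.natParam μ) z)
        = fun z => ((M.X z) ^ 2 * g M (M.natParam μ) z
            - (2 * μ) * (M.X z * g M (M.natParam μ) z))
            + μ ^ 2 * g M (M.natParam μ) z := by
      funext z; ring
    have Isub : Integrable (fun z => (M.X z) ^ 2 * g M (M.natParam μ) z
        - (2 * μ) * (M.X z * g M (M.natParam μ) z)) ν :=
      IX2g.sub (IXg.const_mul (2 * μ))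
    have hsq2 : ∫ z, (M.X z - μ) ^ 2 * g M (M.natParam μ) z ∂ν
        = (∫ z, (M.X z) ^ 2 * g M (M.natParam μ) z ∂ν)
          - (2 * μ) * (∫ z, M.X z * g M (M.natParam μ) z ∂ν)
          + μ ^ 2 * (∫ z, g M (M.natParam μ) z ∂ν) := by
      rw [hfun, integral_add Isub (Ig.const_mul (μ ^ 2)),
        integral_sub IX2g (IXg.const_mul (2 * μ)), integral_const_mul, integral_const_mul]
    rw [hB, hA, hsq] at hsq2
    have hQ : ∫ z, (M.X z) ^ 2 * g M (M.natParam μ) z ∂ν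
        = M.var μ * M.Znorm (M.natParam μ) + μ ^ 2 * M.Znorm (M.natParam μ) := by
      nlinarith [hsq2]
    simp only [Vfun]
    rw [hQ, hB, hA]
    field_simp
    ring
  -- uniform fourth-moment bound
  set R : ℝ := max |a| |b| with hR_def
  set CB : ℝ := 8 * ((4 : ℕ).factorial / d ^ 4 + R ^ 4) with hCB_def
  set C4 : ℝ := (CB / c1) * (∫ z, (G₀ z + G₀ z) ∂ν) with hC4_def
  have hE4 : ∀ μ ∈ K, Integrable (fun z => (M.X z - μ) ^ 4 * M.dens μ z) ν ∧
      ∫ z, (M.X z - μ) ^ 4 * M.dens μ z ∂ν ≤ C4 := by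
    intro μ hμ
    have hμΘ := hKΘ hμ
    have hc : M.natParam μ ∈ Set.Icc α β := ⟨(hηK μ hμ).1, (hηK μ hμ).2⟩
    have hZpos := M.Znorm_pos μ hμΘ
    have hZc1 : c1 ≤ M.Znorm (M.natParam μ) := by
      rw [← g_integral M hμΘ]
      exact hc1A _ hc
    have hR0 : 0 ≤ R := le_trans (abs_nonneg a) (le_max_left _ _)
    have hμR : |μ| ≤ R := by
      have h1 := (haK μ hμ).1
      have h2 := (haK μ hμ).2
      have ha' : -|a| ≤ a := neg_abs_le a
      have hb' : b ≤ |b| := le_abs_self b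
      have hra : |a| ≤ R := le_max_left _ _
      have hrb : |b| ≤ R := le_max_right _ _
      rw [abs_le]
      constructor <;> linarith
    have hdnn : ∀ z, 0 ≤ M.dens μ z := by
      intro z
      rw [M.dens_def μ hμΘ z]
      have := M.carrier_nonneg z
      positivity
    have hpt : ∀ z, (M.X z - μ) ^ 4 * M.dens μ z ≤ (CB / c1) * (G₀ z + G₀ z) := by
      intro z
      have hxa : |M.X z - μ| ≤ |M.X z| + R :=
        le_trans (abs_sub _ _) (by have := abs_nonneg (M.X z); linarith)
      have h4 : (M.X z - μ) ^ 4 ≤ 8 * (|M.X z| ^ 4 + R ^ 4) := by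
        have he : (M.X z - μ) ^ 4 = |M.X z - μ| ^ 4 := by
          rw [← abs_pow]
          rw [abs_of_nonneg (by positivity)]
        rw [he]
        have hb4 : |M.X z - μ| ^ 4 ≤ (|M.X z| + R) ^ 4 := by
          apply pow_le_pow_left₀ (abs_nonneg _) hxa
        refine le_trans hb4 ?_
        nlinarith [sq_nonneg (|M.X z| - R), sq_nonneg (|M.X z| ^ 2 - R ^ 2),
          abs_nonneg (M.X z), sq_nonneg (|M.X z| + R), mul_nonneg (abs_nonneg (M.X z)) hR0]
      have hg4 : (M.X z - μ) ^ 4 * g M (M.natParam μ) z ≤ CB * (G₀ z + G₀ z) := by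
        have hstep1 : (M.X z - μ) ^ 4 * g M (M.natParam μ) z
            ≤ (8 * (|M.X z| ^ 4 + R ^ 4)) * g M (M.natParam μ) z :=
          mul_le_mul_of_nonneg_right h4 (g_nonneg M _ z)
        have hstep2 : |M.X z| ^ 4 * g M (M.natParam μ) z
            ≤ ((4 : ℕ).factorial / d ^ 4) * (G₀ z + G₀ z) :=
          hPk 4 _ (by simp only [hclo_def]; have := hc.1; linarith)
            (by simp only [hchi_def]; have := hc.2; linarith) z
        have hstep3 : g M (M.natParam μ) z ≤ G₀ z + G₀ z := by
          refine le_trans (hginterp _ (by simp only [hclo_def]; have := hc.1; linarith)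
            (by simp only [hchi_def]; have := hc.2; linarith) z) ?_
          have := hG₀nn z
          linarith
        have hgnn := g_nonneg M (M.natParam μ) z
        have k2 := mul_le_mul_of_nonneg_left hstep2 (by norm_num : (0:ℝ) ≤ 8)
        have k3 := mul_le_mul_of_nonneg_left hstep3 (by positivity : (0:ℝ) ≤ 8 * R ^ 4)
        calc (M.X z - μ) ^ 4 * g M (M.natParam μ) z
            ≤ (8 * (|M.X z| ^ 4 + R ^ 4)) * g M (M.natParam μ) z := hstep1
          _ = 8 * (|M.X z| ^ 4 * g M (M.natParam μ) z)
              + (8 * R ^ 4) * g M (M.natParam μ) z := by ring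
          _ ≤ 8 * (((4 : ℕ).factorial / d ^ 4) * (G₀ z + G₀ z))
              + (8 * R ^ 4) * (G₀ z + G₀ z) := add_le_add k2 k3
          _ = CB * (G₀ z + G₀ z) := by simp only [hCB_def]; ring
      rw [dens_eq_g M hμΘ z, mul_div_assoc']
      have hrhs : CB / c1 * (G₀ z + G₀ z) = CB * (G₀ z + G₀ z) / c1 := by ring
      rw [hrhs, div_le_div_iff₀ hZpos hc1pos]
      calc (M.X z - μ) ^ 4 * g M (M.natParam μ) z * c1
          ≤ (CB * (G₀ z + G₀ z)) * c1 := by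
            apply mul_le_mul_of_nonneg_right hg4 hc1pos.le
        _ ≤ (CB * (G₀ z + G₀ z)) * M.Znorm (M.natParam μ) := by
            apply mul_le_mul_of_nonneg_left hZc1
            have h1 := hG₀nn z
            have h2 : 0 ≤ CB := by
              simp only [hCB_def]
              positivity
            positivity
        _ = CB * (G₀ z + G₀ z) * M.Znorm (M.natParam μ) := by ring
    have hmeas : Measurable (fun z => (M.X z - μ) ^ 4 * M.dens μ z) :=
      (((M.X_meas.sub measurable_const).pow_const 4).mul (M.dens_meas μ))
    have hint : Integrable (fun z => (M.X z - μ) ^ 4 * M.dens μ z) ν := by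
      refine ((hG₀.add hG₀).const_mul (CB / c1)).mono' hmeas.aestronglyMeasurable
        (ae_of_all _ fun z => ?_)
      rw [Real.norm_eq_abs,
        abs_of_nonneg (mul_nonneg (by positivity) (hdnn z))]
      exact hpt z
    refine ⟨hint, ?_⟩
    have := integral_mono hint ((hG₀.add hG₀).const_mul (CB / c1)) hpt
    rw [integral_const_mul] at this
    simpa only [hC4_def, Pi.add_apply] using this
  -- final constant
  refine ⟨3 + C4 / cv ^ 2, 1, fun n hn μ hμ => ?_⟩
  have hμΘ := hKΘ hμ
  have hcIcc : M.natParam μ ∈ Set.Icc α β := ⟨(hηK μ hμ).1, (hηK μ hμ).2⟩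
  have hn1 : (1 : ℝ) ≤ (n : ℝ) := Nat.one_le_cast.mpr hn
  have hnpos : (0 : ℝ) < (n : ℝ) := by linarith
  set a' : ℝ := 1 / (2 * (n : ℝ)) with ha'_def
  have ha'pos : 0 < a' := by simp only [ha'_def]; positivity
  have ha'le : a' ≤ 1 / 2 := by
    simp only [ha'_def]
    rw [div_le_div_iff₀ (by linarith) (by norm_num)]
    linarith
  have hvarpos : 0 < M.var μ := M.var_pos μ hμΘ
  set I : ℝ := M.fisher μ with hI_def
  have hIinv : I = (M.var μ)⁻¹ := rfl
  have hIpos : 0 < I := by rw [hIinv]; positivity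
  have hvarlb : cv ≤ M.var μ := by rw [hvar μ hμ]; exact hVlb _ hcIcc
  have hIub : I ≤ cv⁻¹ := by
    rw [hIinv]
    exact inv_anti₀ hcv hvarlb
  have hdnn : ∀ z, 0 ≤ M.dens μ z := by
    intro z
    rw [M.dens_def μ hμΘ z]
    have h1 := M.carrier_nonneg z
    have h2 := M.Znorm_pos μ hμΘ
    positivity
  obtain ⟨hE4int, hE4le⟩ := hE4 μ hμ
  have hE4nn : 0 ≤ ∫ z, (M.X z - μ) ^ 4 * M.dens μ z ∂ν :=
    integral_nonneg fun z => mul_nonneg (by positivity) (hdnn z)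
  have hC4nn : 0 ≤ C4 := le_trans hE4nn hE4le
  set bnd : Z → ℝ := fun z =>
    (a' * I) * ((M.X z - μ) ^ 2 * M.dens μ z)
    + (a' * I) ^ 2 * ((M.X z - μ) ^ 4 * M.dens μ z)
    + Real.log (1 + a') * M.dens μ z
    + (Real.log (1 + a') * (a' * I)) * ((M.X z - μ) ^ 2 * M.dens μ z) with hbnd_def
  have I1 := (M.var_integrable μ hμΘ).const_mul (a' * I)
  have I2 := hE4int.const_mul ((a' * I) ^ 2)
  have I3 := (M.dens_integrable μ hμΘ).const_mul (Real.log (1 + a'))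
  have I4 := (M.var_integrable μ hμΘ).const_mul (Real.log (1 + a') * (a' * I))
  have hbnd_int : Integrable bnd ν := by
    simp only [hbnd_def]
    exact ((I1.add I2).add I3).add I4
  have hlogA1 : Real.log (1 + a') ≤ a' := by
    have := Real.log_le_sub_one_of_pos (show (0 : ℝ) < 1 + a' by linarith)
    linarith
  have hlogA1nn : 0 ≤ Real.log (1 + a') := Real.log_nonneg (by linarith)
  -- pointwise bound on the integrand
  have hptw : ∀ z, |squashDensAt M n μ z * Real.log (squashDensAt M n μ z / M.dens μ z)|
      ≤ bnd z := by
    intro z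
    have hq : 0 ≤ (M.X z - μ) ^ 2 := sq_nonneg _
    have hs0 : 0 ≤ a' * I * (M.X z - μ) ^ 2 :=
      mul_nonneg (mul_nonneg ha'pos.le hIpos.le) hq
    have hsq : squashDensAt M n μ z
        = M.dens μ z * (1 + a' * I * (M.X z - μ) ^ 2) / (1 + a') := by
      simp only [squashDensAt, ha'_def, hI_def]
    rcases (hdnn z).lt_or_eq with hD | hD
    · -- positive density
      have hDne : M.dens μ z ≠ 0 := hD.ne'
      set q : ℝ := (M.X z - μ) ^ 2 with hq_def
      set sv : ℝ := a' * I * q with hs_def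
      have hu1 : (1 : ℝ) ≤ 1 + sv := by linarith
      have hupos : (0 : ℝ) < 1 + sv := by linarith
      have hA1 : (1 : ℝ) < 1 + a' := by linarith
      have hratio : squashDensAt M n μ z / M.dens μ z = (1 + sv) / (1 + a') := by
        rw [hsq]
        field_simp
      have hlogabs : |Real.log ((1 + sv) / (1 + a'))| ≤ sv + Real.log (1 + a') := by
        rw [Real.log_div hupos.ne' (by linarith)]
        have h1 : Real.log (1 + sv) ≤ sv := by
          have := Real.log_le_sub_one_of_pos hupos
          linarith
        have h2 : 0 ≤ Real.log (1 + sv) := Real.log_nonneg hu1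
        rw [abs_le]
        constructor <;> linarith
      have hsquash_nn : 0 ≤ squashDensAt M n μ z := by
        rw [hsq]
        exact div_nonneg (mul_nonneg hD.le (by linarith)) (by linarith)
      have hsquash_le : squashDensAt M n μ z ≤ M.dens μ z * (1 + sv) := by
        rw [hsq]
        exact div_le_self (mul_nonneg hD.le (by linarith)) (by linarith)
      have habs : |squashDensAt M n μ z * Real.log (squashDensAt M n μ z / M.dens μ z)|
          = squashDensAt M n μ z * |Real.log ((1 + sv) / (1 + a'))| := by
        rw [abs_mul, abs_of_nonneg hsquash_nn, hratio]
      rw [habs]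
      have hstep : squashDensAt M n μ z * |Real.log ((1 + sv) / (1 + a'))|
          ≤ (M.dens μ z * (1 + sv)) * (sv + Real.log (1 + a')) := by
        apply mul_le_mul hsquash_le hlogabs (abs_nonneg _)
          (mul_nonneg hD.le (by linarith))
      refine le_trans hstep (le_of_eq ?_)
      simp only [hbnd_def, hs_def, hq_def]
      ring
    · -- zero density
      rw [hsq, ← hD]
      simp only [hbnd_def, ← hD]
      simp
  -- integrate the bound
  have step1 : |∫ z, squashDensAt M n μ z
        * Real.log (squashDensAt M n μ z / M.dens μ z) ∂ν|
      ≤ ∫ z, |squashDensAt M n μ z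
        * Real.log (squashDensAt M n μ z / M.dens μ z)| ∂ν := by
    simpa only [Real.norm_eq_abs] using norm_integral_le_integral_norm (μ := ν)
      (fun z => squashDensAt M n μ z * Real.log (squashDensAt M n μ z / M.dens μ z))
  have step2 : ∫ z, |squashDensAt M n μ z
        * Real.log (squashDensAt M n μ z / M.dens μ z)| ∂ν ≤ ∫ z, bnd z ∂ν :=
    integral_mono_of_nonneg (ae_of_all _ fun z => abs_nonneg _) hbnd_int
      (ae_of_all _ hptw)
  have hEv : ∫ z, (M.X z - μ) ^ 2 * M.dens μ z ∂ν = M.var μ := rfl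
  have hIvar : I * M.var μ = 1 := by
    rw [hIinv]
    exact inv_mul_cancel₀ hvarpos.ne'
  have hbndval : ∫ z, bnd z ∂ν
      = (a' * I) * M.var μ + (a' * I) ^ 2 * (∫ z, (M.X z - μ) ^ 4 * M.dens μ z ∂ν)
        + Real.log (1 + a') + (Real.log (1 + a') * (a' * I)) * M.var μ := by
    have J12 : Integrable (fun z => (a' * I) * ((M.X z - μ) ^ 2 * M.dens μ z)
        + (a' * I) ^ 2 * ((M.X z - μ) ^ 4 * M.dens μ z)) ν := I1.add I2
    have J123 : Integrable (fun z => ((a' * I) * ((M.X z - μ) ^ 2 * M.dens μ z)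
        + (a' * I) ^ 2 * ((M.X z - μ) ^ 4 * M.dens μ z))
        + Real.log (1 + a') * M.dens μ z) ν := J12.add I3
    simp only [hbnd_def]
    rw [integral_add J123 I4, integral_add J12 I3,
      integral_add I1 I2, integral_const_mul, integral_const_mul, integral_const_mul,
      integral_const_mul, M.dens_integral_one μ hμΘ, hEv, mul_one]
  -- arithmetic estimates
  set E4v : ℝ := ∫ z, (M.X z - μ) ^ 4 * M.dens μ z ∂ν with hE4v_def
  have hIE : (a' * I) * M.var μ = a' := by
    rw [mul_assoc, hIvar, mul_one]
  have ht2 : (a' * I) ^ 2 * E4v ≤ a' * (C4 / cv ^ 2) / 2 := by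
    have hI2 : I ^ 2 ≤ (cv ^ 2)⁻¹ := by
      rw [← inv_pow]
      exact pow_le_pow_left₀ hIpos.le hIub 2
    have ha2 : a' ^ 2 ≤ a' / 2 := by
      have h := mul_le_mul_of_nonneg_left ha'le ha'pos.le
      calc a' ^ 2 = a' * a' := sq a'
        _ ≤ a' * (1 / 2) := h
        _ = a' / 2 := by ring
    have h1 : (a' * I) ^ 2 * E4v ≤ (a' * I) ^ 2 * C4 :=
      mul_le_mul_of_nonneg_left hE4le (by positivity)
    refine le_trans h1 ?_
    have h2 : (a' * I) ^ 2 ≤ (a' / 2) * (cv ^ 2)⁻¹ := by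
      have e : (a' * I) ^ 2 = a' ^ 2 * I ^ 2 := by ring
      rw [e]
      have := mul_le_mul ha2 hI2 (by positivity) (by positivity)
      linarith
    calc (a' * I) ^ 2 * C4 ≤ ((a' / 2) * (cv ^ 2)⁻¹) * C4 :=
          mul_le_mul_of_nonneg_right h2 hC4nn
      _ = a' * (C4 / cv ^ 2) / 2 := by ring
  have ht3 : Real.log (1 + a') + (Real.log (1 + a') * (a' * I)) * M.var μ
      ≤ a' * 2 := by
    have h1 : (Real.log (1 + a') * (a' * I)) * M.var μ = Real.log (1 + a') * a' := by
      rw [mul_assoc, mul_assoc, hIvar]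
      ring
    rw [h1]
    have h2 : Real.log (1 + a') * a' ≤ a' * a' :=
      mul_le_mul_of_nonneg_right hlogA1 ha'pos.le
    have h3 : a' * a' ≤ a' * (1 / 2) := mul_le_mul_of_nonneg_left ha'le ha'pos.le
    linarith
  have hfin : ∫ z, bnd z ∂ν ≤ a' * (3 + C4 / cv ^ 2) := by
    rw [hbndval, hIE]
    have hcvq : 0 ≤ C4 / cv ^ 2 := div_nonneg hC4nn (sq_nonneg cv)
    have h5 : 0 ≤ a' * (C4 / cv ^ 2) := mul_nonneg ha'pos.le hcvq
    have e : a' * (3 + C4 / cv ^ 2) = 3 * a' + a' * (C4 / cv ^ 2) := by ring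
    have e2 : a' * (C4 / cv ^ 2) / 2 + a' * (C4 / cv ^ 2) / 2 = a' * (C4 / cv ^ 2) := by
      ring
    linarith [ht2, ht3]
  have hlast : a' * (3 + C4 / cv ^ 2) ≤ (3 + C4 / cv ^ 2) / (n : ℝ) := by
    have hcvq : 0 ≤ C4 / cv ^ 2 := div_nonneg hC4nn (sq_nonneg cv)
    rw [ha'_def, div_mul_eq_mul_div, one_mul, div_le_div_iff₀ (by linarith) hnpos]
    have h6 : 0 ≤ (C4 / cv ^ 2) * (n : ℝ) := mul_nonneg hcvq hnpos.le
    have e : (3 + C4 / cv ^ 2) * (2 * (n : ℝ))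
        = 2 * ((3 : ℝ) * n + (C4 / cv ^ 2) * n) := by ring
    have e2 : (3 + C4 / cv ^ 2) * (n : ℝ) = (3 : ℝ) * n + (C4 / cv ^ 2) * n := by ring
    rw [e, e2]
    linarith
  calc |∫ z, squashDensAt M n μ z
        * Real.log (squashDensAt M n μ z / M.dens μ z) ∂ν|
      ≤ ∫ z, bnd z ∂ν := le_trans step1 step2
    _ ≤ a' * (3 + C4 / cv ^ 2) := hfin
    _ ≤ (3 + C4 / cv ^ 2) / (n : ℝ) := hlast
end

section
/- Let M = {M_μ : μ ∈ Θ_mean} be a single-parameter regular exponential family in its mean-value parameterization, and let μ*, μ̄ ∈ Θ_mean with μ̄ ≠ μ*. Then the function λ ↦ D(M_{μ*} ‖ M_{λμ* + (1−λ)μ̄}) is strictly decreasing on λ ∈ [0, 1]; in particular, if μ̄' lies between μ* and μ̄ (i.e., μ̄' = λμ* + (1−λ)μ̄ for some λ ∈ [0,1]), then D(M_{μ*} ‖ M_{μ̄}) ≥ D(M_{μ*} ‖ M_{μ̄'}). -/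
open MeasureTheory Filter Real Asymptotics ProbabilityTheory

namespace ExpFam

variable {Z : Type} [MeasurableSpace Z] {ν : Measure Z}

lemma dens_nonneg' (M : ExpFam Z ν) {μ : ℝ} (hμ : μ ∈ M.Θ) (z : Z) : 0 ≤ M.dens μ z := by
  rw [M.dens_def μ hμ z]
  have h1 := M.carrier_nonneg z
  have h2 := M.Znorm_pos μ hμ
  positivity

lemma toMeasure_isProb (M : ExpFam Z ν) {μ : ℝ} (hμ : μ ∈ M.Θ) :
    IsProbabilityMeasure (M.toMeasure μ) := by
  constructor
  rw [toMeasure, withDensity_apply _ MeasurableSet.univ, Measure.restrict_univ,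
    ← ofReal_integral_eq_lintegral_ofReal (M.dens_integrable μ hμ)
      (ae_of_all _ (M.dens_nonneg' hμ)), M.dens_integral_one μ hμ]
  simp

lemma toMeasure_integral (M : ExpFam Z ν) {μ : ℝ} (hμ : μ ∈ M.Θ) (g : Z → ℝ) :
    ∫ z, g z ∂(M.toMeasure μ) = ∫ z, M.dens μ z * g z ∂ν := by
  rw [toMeasure,
    show (fun z => ENNReal.ofReal (M.dens μ z)) = fun z => ((M.dens μ z).toNNReal : ENNReal) from rfl,
    integral_withDensity_eq_integral_smul (M.dens_meas μ).real_toNNReal g]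
  refine integral_congr_ae (ae_of_all _ fun z => ?_)
  simp [NNReal.smul_def, Real.coe_toNNReal _ (M.dens_nonneg' hμ z)]

lemma toMeasure_integrable (M : ExpFam Z ν) {μ : ℝ} (hμ : μ ∈ M.Θ) {g : Z → ℝ}
    (hint : Integrable (fun z => M.dens μ z * g z) ν) :
    Integrable g (M.toMeasure μ) := by
  rw [toMeasure,
    show (fun z => ENNReal.ofReal (M.dens μ z)) = fun z => ((M.dens μ z).toNNReal : ENNReal) from rfl,
    integrable_withDensity_iff_integrable_smul (M.dens_meas μ).real_toNNReal]
  have : (fun z => ((M.dens μ z).toNNReal : NNReal) • g z) = fun z => M.dens μ z * g z := by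
    funext z
    simp [NNReal.smul_def, Real.coe_toNNReal _ (M.dens_nonneg' hμ z)]
  rw [this]
  exact hint

/-- Strict Jensen inequality for the moment generating function of `X`. -/
lemma exp_mul_lt (M : ExpFam Z ν) {μ t : ℝ} (hμ : μ ∈ M.Θ) (ht : t ≠ 0)
    (hint : Integrable (fun z => M.dens μ z * Real.exp (t * M.X z)) ν) :
    Real.exp (t * μ) < ∫ z, M.dens μ z * Real.exp (t * M.X z) ∂ν := by
  haveI : IsProbabilityMeasure (M.toMeasure μ) := M.toMeasure_isProb hμ
  have hXint : Integrable (fun z => t * M.X z) (M.toMeasure μ) := by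
    refine M.toMeasure_integrable hμ ?_
    have : (fun z => M.dens μ z * (t * M.X z)) = fun z => t * (M.X z * M.dens μ z) := by
      funext z; ring
    rw [this]
    exact (M.mean_integrable μ hμ).const_mul t
  have hexpint : Integrable (fun z => Real.exp (t * M.X z)) (M.toMeasure μ) :=
    M.toMeasure_integrable hμ hint
  have hmean : ∫ z, t * M.X z ∂(M.toMeasure μ) = t * μ := by
    rw [M.toMeasure_integral hμ]
    have : (fun z => M.dens μ z * (t * M.X z)) = fun z => t * (M.X z * M.dens μ z) := by
      funext z; ring
    rw [this, integral_const_mul, M.mean_eq μ hμ]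
  have h := strictConvexOn_exp.ae_eq_const_or_map_average_lt
    Real.continuous_exp.continuousOn isClosed_univ
    (ae_of_all _ fun z => Set.mem_univ (t * M.X z)) hXint hexpint
  rw [average_eq_integral, average_eq_integral, hmean] at h
  rcases h with h | h
  · exfalso
    have hXconst : (fun z => (M.X z - μ) ^ 2) =ᵐ[M.toMeasure μ] 0 := by
      filter_upwards [h] with z hz
      have : M.X z = μ := by
        have : t * M.X z = t * μ := hz
        exact mul_left_cancel₀ ht this
      simp [this]
    have h0 : ∫ z, (M.X z - μ) ^ 2 ∂(M.toMeasure μ) = 0 := integral_eq_zero_of_ae hXconst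
    rw [M.toMeasure_integral hμ] at h0
    have hvar := M.var_pos μ hμ
    have : (fun z => M.dens μ z * (M.X z - μ) ^ 2) = fun z => (M.X z - μ) ^ 2 * M.dens μ z := by
      funext z; ring
    rw [this] at h0
    linarith
  · calc Real.exp (t * μ) < ∫ z, Real.exp (t * M.X z) ∂(M.toMeasure μ) := h
      _ = ∫ z, M.dens μ z * Real.exp (t * M.X z) ∂ν := M.toMeasure_integral hμ _

lemma ratio_eq (M : ExpFam Z ν) {μ₁ μ₂ : ℝ} (h₁ : μ₁ ∈ M.Θ) (h₂ : μ₂ ∈ M.Θ) :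
    (fun z => M.dens μ₁ z * Real.exp ((M.natParam μ₁ - M.natParam μ₂) * M.X z))
      = fun z => (M.Znorm (M.natParam μ₂) / M.Znorm (M.natParam μ₁)) * M.dens μ₂ z := by
  funext z
  rw [M.dens_def μ₁ h₁ z, M.dens_def μ₂ h₂ z]
  have hZ₁ := M.Znorm_pos μ₁ h₁
  have hZ₂ := M.Znorm_pos μ₂ h₂
  have hexp : Real.exp (-(M.natParam μ₁) * M.X z) *
      Real.exp ((M.natParam μ₁ - M.natParam μ₂) * M.X z)
        = Real.exp (-(M.natParam μ₂) * M.X z) := by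
    rw [← Real.exp_add]; congr 1; ring
  set E₁ := Real.exp (-(M.natParam μ₁) * M.X z) with hE₁
  set E₂ := Real.exp (-(M.natParam μ₂) * M.X z) with hE₂
  set C := Real.exp ((M.natParam μ₁ - M.natParam μ₂) * M.X z) with hC
  rw [← hexp]
  field_simp

lemma ratio_integral (M : ExpFam Z ν) {μ₁ μ₂ : ℝ} (h₁ : μ₁ ∈ M.Θ) (h₂ : μ₂ ∈ M.Θ) :
    ∫ z, M.dens μ₁ z * Real.exp ((M.natParam μ₁ - M.natParam μ₂) * M.X z) ∂ν
      = M.Znorm (M.natParam μ₂) / M.Znorm (M.natParam μ₁) := by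
  rw [M.ratio_eq h₁ h₂, integral_const_mul, M.dens_integral_one μ₂ h₂, mul_one]

lemma natParam_injOn (M : ExpFam Z ν) {μ₁ μ₂ : ℝ} (h₁ : μ₁ ∈ M.Θ) (h₂ : μ₂ ∈ M.Θ)
    (h : M.natParam μ₁ = M.natParam μ₂) : μ₁ = μ₂ := by
  have hdens : M.dens μ₁ = M.dens μ₂ := by
    funext z
    rw [M.dens_def μ₁ h₁ z, M.dens_def μ₂ h₂ z, h]
  calc μ₁ = ∫ z, M.X z * M.dens μ₁ z ∂ν := (M.mean_eq μ₁ h₁).symm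
    _ = ∫ z, M.X z * M.dens μ₂ z ∂ν := by rw [hdens]
    _ = μ₂ := M.mean_eq μ₂ h₂

/-- The KL divergence formula between two members of the family. -/
lemma kl_eq (M : ExpFam Z ν) {μ₁ μ₂ : ℝ} (h₁ : μ₁ ∈ M.Θ) (h₂ : μ₂ ∈ M.Θ) :
    M.kl μ₁ μ₂ = (M.natParam μ₂ - M.natParam μ₁) * μ₁
      + (Real.log (M.Znorm (M.natParam μ₂)) - Real.log (M.Znorm (M.natParam μ₁))) := by
  have hZ₁ := M.Znorm_pos μ₁ h₁
  have hZ₂ := M.Znorm_pos μ₂ h₂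
  have hpt : (fun z => M.dens μ₁ z * Real.log (M.dens μ₁ z / M.dens μ₂ z))
      = fun z => (M.natParam μ₂ - M.natParam μ₁) * (M.X z * M.dens μ₁ z)
        + (Real.log (M.Znorm (M.natParam μ₂)) - Real.log (M.Znorm (M.natParam μ₁)))
          * M.dens μ₁ z := by
    funext z
    rcases eq_or_lt_of_le (M.carrier_nonneg z) with hc | hc
    · have hd : M.dens μ₁ z = 0 := by rw [M.dens_def μ₁ h₁ z, ← hc]; ring
      simp [hd]
    · have hd₂ : M.dens μ₂ z ≠ 0 := by
        rw [M.dens_def μ₂ h₂ z]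
        positivity
      have hratio : M.dens μ₁ z / M.dens μ₂ z
          = Real.exp ((M.natParam μ₂ - M.natParam μ₁) * M.X z)
            * (M.Znorm (M.natParam μ₂) / M.Znorm (M.natParam μ₁)) := by
        rw [M.dens_def μ₁ h₁ z, M.dens_def μ₂ h₂ z]
        have hexp : Real.exp (-(M.natParam μ₂) * M.X z) *
            Real.exp ((M.natParam μ₂ - M.natParam μ₁) * M.X z)
              = Real.exp (-(M.natParam μ₁) * M.X z) := by
          rw [← Real.exp_add]; congr 1; ring
        have he₁ := Real.exp_pos (-(M.natParam μ₁) * M.X z)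
        have he₂ := Real.exp_pos (-(M.natParam μ₂) * M.X z)
        set E₁ := Real.exp (-(M.natParam μ₁) * M.X z) with hE₁
        set E₂ := Real.exp (-(M.natParam μ₂) * M.X z) with hE₂
        set C := Real.exp ((M.natParam μ₂ - M.natParam μ₁) * M.X z) with hC
        rw [← hexp]
        field_simp
      rw [hratio, Real.log_mul (Real.exp_ne_zero _) (by positivity), Real.log_exp,
        Real.log_div hZ₂.ne' hZ₁.ne']
      ring
  rw [kl, hpt, integral_add ((M.mean_integrable μ₁ h₁).const_mul _)
      ((M.dens_integrable μ₁ h₁).const_mul _),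
    integral_const_mul, integral_const_mul, M.mean_eq μ₁ h₁, M.dens_integral_one μ₁ h₁, mul_one]

/-- Strict positivity of KL divergence between distinct members. -/
lemma kl_pos (M : ExpFam Z ν) {μ₁ μ₂ : ℝ} (h₁ : μ₁ ∈ M.Θ) (h₂ : μ₂ ∈ M.Θ)
    (hne : μ₁ ≠ μ₂) : 0 < M.kl μ₁ μ₂ := by
  have hZ₁ := M.Znorm_pos μ₁ h₁
  have hZ₂ := M.Znorm_pos μ₂ h₂
  have ht : M.natParam μ₁ - M.natParam μ₂ ≠ 0 := by
    intro h
    exact hne (M.natParam_injOn h₁ h₂ (by linarith [sub_eq_zero.mp h]))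
  have hint : Integrable
      (fun z => M.dens μ₁ z * Real.exp ((M.natParam μ₁ - M.natParam μ₂) * M.X z)) ν := by
    rw [M.ratio_eq h₁ h₂]
    exact (M.dens_integrable μ₂ h₂).const_mul _
  have hlt := M.exp_mul_lt h₁ ht hint
  rw [M.ratio_integral h₁ h₂] at hlt
  have hlog : (M.natParam μ₁ - M.natParam μ₂) * μ₁
      < Real.log (M.Znorm (M.natParam μ₂) / M.Znorm (M.natParam μ₁)) :=
    (Real.lt_log_iff_exp_lt (by positivity)).mpr hlt
  rw [Real.log_div hZ₂.ne' hZ₁.ne'] at hlog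
  rw [M.kl_eq h₁ h₂]
  linarith

/-- The natural parameter is strictly decreasing in the mean parameter. -/
lemma natParam_strictAnti (M : ExpFam Z ν) {μ₁ μ₂ : ℝ} (h₁ : μ₁ ∈ M.Θ) (h₂ : μ₂ ∈ M.Θ)
    (h : μ₁ < μ₂) : M.natParam μ₂ < M.natParam μ₁ := by
  have k₁ := M.kl_pos h₁ h₂ h.ne
  have k₂ := M.kl_pos h₂ h₁ h.ne'
  rw [M.kl_eq h₁ h₂] at k₁
  rw [M.kl_eq h₂ h₁] at k₂
  nlinarith

end ExpFam

/-- **Monotonicity of KL divergence along the mean-value segment.**  Let `M` be a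
single-parameter regular exponential family in its mean-value parameterization and let
`μ*, μ̄ ∈ Θ_mean` with `μ̄ ≠ μ*`.  Then `λ ↦ D(M_{μ*} ‖ M_{λμ* + (1−λ)μ̄})` is strictly
decreasing on `[0, 1]`; in particular, for any `μ̄' = λμ* + (1−λ)μ̄` with `λ ∈ [0,1]`,
`D(M_{μ*} ‖ M_{μ̄}) ≥ D(M_{μ*} ‖ M_{μ̄'})`. -/
theorem kl_strictAnti_on_segment
    {Z : Type} [MeasurableSpace Z] (ν : Measure Z)
    (M : ExpFam Z ν) (μstar μbar : ℝ)
    (hμstar : μstar ∈ M.Θ) (hμbar : μbar ∈ M.Θ) (hne : μbar ≠ μstar) :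
    StrictAntiOn (fun lam : ℝ => M.kl μstar (lam * μstar + (1 - lam) * μbar))
      (Set.Icc 0 1) ∧
    ∀ lam ∈ Set.Icc (0 : ℝ) 1,
      M.kl μstar (lam * μstar + (1 - lam) * μbar) ≤ M.kl μstar μbar := by
  have hconv : Convex ℝ M.Θ := convex_iff_ordConnected.mpr M.Θ_ordConn
  have hmem : ∀ x ∈ Set.Icc (0:ℝ) 1, x * μstar + (1 - x) * μbar ∈ M.Θ := by
    intro x hx
    have := hconv hμstar hμbar (a := x) (b := 1 - x) hx.1 (by linarith [hx.2]) (by ring)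
    simpa [smul_eq_mul] using this
  have key : ∀ a ∈ Set.Icc (0:ℝ) 1, ∀ b ∈ Set.Icc (0:ℝ) 1, a < b →
      M.kl μstar (b * μstar + (1 - b) * μbar) < M.kl μstar (a * μstar + (1 - a) * μbar) := by
    intro a ha b hb hab
    set μ₁ := b * μstar + (1 - b) * μbar with hμ₁def
    set μ₂ := a * μstar + (1 - a) * μbar with hμ₂def
    have hm₁ : μ₁ ∈ M.Θ := hmem b hb
    have hm₂ : μ₂ ∈ M.Θ := hmem a ha
    have hne12 : μ₁ ≠ μ₂ := by
      intro h
      have : (b - a) * (μstar - μbar) = 0 := by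
        rw [hμ₁def, hμ₂def] at h; linarith
      rcases mul_eq_zero.mp this with h' | h'
      · linarith
      · exact hne (by linarith)
    have hkl12 := M.kl_pos hm₁ hm₂ hne12
    have hsign : 0 ≤ (M.natParam μ₂ - M.natParam μ₁) * (μstar - μ₁) := by
      rcases lt_trichotomy μbar μstar with hlt | heq | hgt
      · -- μbar < μstar : μ₂ < μ₁, η₁ < η₂, μstar - μ₁ ≥ 0
        have hlt12 : μ₂ < μ₁ := by
          rw [hμ₁def, hμ₂def]; nlinarith
        have hη := M.natParam_strictAnti hm₂ hm₁ hlt12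
        have : 0 ≤ μstar - μ₁ := by
          rw [hμ₁def]; nlinarith [hb.2]
        nlinarith
      · exact absurd heq hne
      · have hlt12 : μ₁ < μ₂ := by
          rw [hμ₁def, hμ₂def]; nlinarith
        have hη := M.natParam_strictAnti hm₁ hm₂ hlt12
        have : μstar - μ₁ ≤ 0 := by
          rw [hμ₁def]; nlinarith [hb.2]
        nlinarith
    have e1 := M.kl_eq hμstar hm₁
    have e2 := M.kl_eq hμstar hm₂
    have e3 := M.kl_eq hm₁ hm₂
    -- kl μ* μ₂ - kl μ* μ₁ = kl μ₁ μ₂ + (η₂ - η₁)(μ* - μ₁) > 0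
    have : M.kl μstar μ₂ - M.kl μstar μ₁
        = M.kl μ₁ μ₂ + (M.natParam μ₂ - M.natParam μ₁) * (μstar - μ₁) := by
      rw [e1, e2, e3]; ring
    linarith
  constructor
  · intro a ha b hb hab
    exact key a ha b hb hab
  · intro lam hlam
    rcases eq_or_lt_of_le hlam.1 with h0 | h0
    · rw [← h0]
      norm_num
    · have h := key 0 (by norm_num) lam hlam h0
      have : (0:ℝ) * μstar + (1 - 0) * μbar = μbar := by ring
      rw [this] at h
      exact h.le
end
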